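/- arXiv:1606.08216 — 12 statements merged into one kernel-verified Lean document; each statement's English description precedes it below -/
import Mathlib

section
/- Let K be a nonempty closed convex subset of a real Banach space E with a partial order ≤ induced by a closed convex cone P, and let T : K → K be a monotone α-nonexpansive mapping for some α < 1. If there exists a fixed point p of T and some x ∈ K with x ≤ p or p ≤ x, then T is monotone quasi-nonexpansive, i.e., ‖Tx − p‖ ≤ ‖x − p‖ for every fixed point p of T and every x ∈ K with x ≤ p or p ≤ x. -/
open Filter Topology

/-- A closed convex cone in a real normed space: nonempty, closed, not `{0}`,
pointed (`P ∩ (−P) = {0}`), and closed under nonnegative linear combinations. -/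
def IsClosedConvexCone {E : Type*} [NormedAddCommGroup E] [NormedSpace ℝ E]
    (P : Set E) : Prop :=
  P.Nonempty ∧ IsClosed P ∧ P ≠ {0} ∧ P ∩ (-P) = {0} ∧
    ∀ x ∈ P, ∀ y ∈ P, ∀ a b : ℝ, 0 ≤ a → 0 ≤ b → a • x + b • y ∈ P

/-- Weak convergence of a sequence: `f (x n) → f l` for every continuous
linear functional `f`. -/
def WeakConv {E : Type*} [NormedAddCommGroup E] [NormedSpace ℝ E]
    (x : ℕ → E) (l : E) : Prop :=
  ∀ f : E →L[ℝ] ℝ, Tendsto (fun n => f (x n)) atTop (𝓝 (f l))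

/-- `T` is monotone (w.r.t. the order `x ≤ y ↔ y - x ∈ P`) and α-nonexpansive
on `K`. -/
def MonotoneAlphaNonexpansive {E : Type*} [NormedAddCommGroup E] [NormedSpace ℝ E]
    (P K : Set E) (T : E → E) (α : ℝ) : Prop :=
  (∀ x ∈ K, ∀ y ∈ K, y - x ∈ P → T y - T x ∈ P) ∧
    ∀ x ∈ K, ∀ y ∈ K, y - x ∈ P →
      ‖T x - T y‖ ^ 2 ≤ α * ‖T x - y‖ ^ 2 + α * ‖T y - x‖ ^ 2
        + (1 - 2 * α) * ‖x - y‖ ^ 2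

/-- If a monotone α-nonexpansive map has a fixed point comparable with some
point of `K`, then it is monotone quasi-nonexpansive. -/
theorem monotone_alpha_nonexpansive_is_quasi_nonexpansive
    {E : Type*} [NormedAddCommGroup E] [NormedSpace ℝ E] [CompleteSpace E]
    (P : Set E) (hP : IsClosedConvexCone P)
    (K : Set E) (hKne : K.Nonempty) (hKcl : IsClosed K) (hKco : Convex ℝ K)
    (T : E → E) (hTK : ∀ x ∈ K, T x ∈ K)
    (α : ℝ) (hα : α < 1)
    (hT : MonotoneAlphaNonexpansive P K T α)
    (hfix : ∃ p ∈ K, T p = p ∧ ∃ x ∈ K, (p - x ∈ P ∨ x - p ∈ P)) :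
    ∀ p ∈ K, T p = p → ∀ x ∈ K, (p - x ∈ P ∨ x - p ∈ P) →
      ‖T x - p‖ ≤ ‖x - p‖ := by
  intro p hp hTp x hx hcmp
  rcases hcmp with h | h
  · have key := hT.2 x hx p hp h
    rw [hTp] at key
    have h1 : ‖p - x‖ = ‖x - p‖ := norm_sub_rev _ _
    rw [h1] at key
    have h3 : ‖T x - p‖ ^ 2 ≤ ‖x - p‖ ^ 2 := by
      have := mul_le_mul_of_nonneg_left (le_of_sub_nonneg (by linarith)) (le_of_lt (sub_pos.2 hα))
      nlinarith
    exact (pow_le_pow_iff_left₀ (norm_nonneg _) (norm_nonneg _) two_ne_zero).1 h3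
  · have key := hT.2 p hp x hx h
    rw [hTp] at key
    have h1 : ‖p - T x‖ = ‖T x - p‖ := norm_sub_rev _ _
    have h2 : ‖p - x‖ = ‖x - p‖ := norm_sub_rev _ _
    rw [h1, h2] at key
    have h3 : ‖T x - p‖ ^ 2 ≤ ‖x - p‖ ^ 2 := by
      have := mul_le_mul_of_nonneg_left (le_of_sub_nonneg (by linarith)) (le_of_lt (sub_pos.2 hα))
      nlinarith
    exact (pow_le_pow_iff_left₀ (norm_nonneg _) (norm_nonneg _) two_ne_zero).1 h3
end

section
/- Let K be a nonempty closed convex subset of a real Banach space E with a partial order ≤ induced by a closed convex cone P, and let T : K → K be a monotone α-nonexpansive mapping for some α < 1. Then for all x, y ∈ K with x ≤ y or y ≤ x, ‖Tx − Ty‖² ≤ ‖x − y‖² + (2α/(1 − α))‖Tx − x‖² + (2|α|/(1 − α))‖Tx − x‖(‖x − y‖ + ‖Tx − Ty‖). -/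
open Filter Topology

lemma key_real (α a b c d e : ℝ) (hα : α < 1) (ha : 0 ≤ a) (hb : 0 ≤ b) (hc : 0 ≤ c)
    (hd0 : 0 ≤ d) (he0 : 0 ≤ e)
    (hd1 : d ≤ c + b) (hd2 : b - c ≤ d) (hd3 : c - b ≤ d)
    (he1 : e ≤ a + c) (he2 : a - c ≤ e) (he3 : c - a ≤ e)
    (H : a ^ 2 ≤ α * d ^ 2 + α * e ^ 2 + (1 - 2 * α) * b ^ 2) :
    a ^ 2 ≤ b ^ 2 + (2 * α / (1 - α)) * c ^ 2 + (2 * |α| / (1 - α)) * c * (b + a) := by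
  have h1 : (0:ℝ) < 1 - α := by linarith
  have hdsq : (b - c) ^ 2 ≤ d ^ 2 := by
    nlinarith [mul_nonneg (by linarith : (0:ℝ) ≤ d - (b - c)) (by linarith : (0:ℝ) ≤ d + (b - c))]
  have hesq : (a - c) ^ 2 ≤ e ^ 2 := by
    nlinarith [mul_nonneg (by linarith : (0:ℝ) ≤ e - (a - c)) (by linarith : (0:ℝ) ≤ e + (a - c))]
  have hdsq' : d ^ 2 ≤ (c + b) ^ 2 := by nlinarith
  have hesq' : e ^ 2 ≤ (a + c) ^ 2 := by nlinarith
  have key : (1 - α) * a ^ 2 ≤ (1 - α) * b ^ 2 + 2 * α * c ^ 2 + 2 * |α| * c * (b + a) := by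
    rcases le_or_gt 0 α with h | h
    · rw [abs_of_nonneg h]
      nlinarith [mul_le_mul_of_nonneg_left hdsq' h, mul_le_mul_of_nonneg_left hesq' h]
    · rw [abs_of_neg h]
      nlinarith [mul_le_mul_of_nonpos_left hdsq h.le, mul_le_mul_of_nonpos_left hesq h.le]
  rw [← mul_le_mul_iff_right₀ h1]
  have expand : (1 - α) * (b ^ 2 + (2 * α / (1 - α)) * c ^ 2 + (2 * |α| / (1 - α)) * c * (b + a))
      = (1 - α) * b ^ 2 + 2 * α * c ^ 2 + 2 * |α| * c * (b + a) := by
    field_simp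
  rw [expand]; exact key

/-- Key inequality for monotone α-nonexpansive mappings. -/
theorem monotone_alpha_nonexpansive_key_inequality
    {E : Type*} [NormedAddCommGroup E] [NormedSpace ℝ E] [CompleteSpace E]
    (P : Set E) (hP : IsClosedConvexCone P)
    (K : Set E) (hKne : K.Nonempty) (hKcl : IsClosed K) (hKco : Convex ℝ K)
    (T : E → E) (hTK : ∀ x ∈ K, T x ∈ K)
    (α : ℝ) (hα : α < 1)
    (hT : MonotoneAlphaNonexpansive P K T α) :
    ∀ x ∈ K, ∀ y ∈ K, (y - x ∈ P ∨ x - y ∈ P) →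
      ‖T x - T y‖ ^ 2 ≤ ‖x - y‖ ^ 2 + (2 * α / (1 - α)) * ‖T x - x‖ ^ 2
        + (2 * |α| / (1 - α)) * ‖T x - x‖ * (‖x - y‖ + ‖T x - T y‖) := by
  intro x hx y hy hxy
  have hc : (0:ℝ) ≤ ‖T x - x‖ := norm_nonneg _
  have ha : (0:ℝ) ≤ ‖T x - T y‖ := norm_nonneg _
  have hb : (0:ℝ) ≤ ‖x - y‖ := norm_nonneg _
  have hd0 : (0:ℝ) ≤ ‖T x - y‖ := norm_nonneg _
  have he0 : (0:ℝ) ≤ ‖T y - x‖ := norm_nonneg _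
  have hd1 : ‖T x - y‖ ≤ ‖T x - x‖ + ‖x - y‖ := by
    simpa using norm_add_le (T x - x) (x - y)
  have hd2 : ‖x - y‖ - ‖T x - x‖ ≤ ‖T x - y‖ := by
    have h := norm_add_le (x - T x) (T x - y)
    simp only [sub_add_sub_cancel] at h
    rw [norm_sub_rev x (T x)] at h
    linarith
  have hd3 : ‖T x - x‖ - ‖x - y‖ ≤ ‖T x - y‖ := by
    have h := norm_add_le (T x - y) (y - x)
    simp only [sub_add_sub_cancel] at h
    rw [norm_sub_rev y x] at h
    linarith
  have he1 : ‖T y - x‖ ≤ ‖T x - T y‖ + ‖T x - x‖ := by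
    have h := norm_add_le (T y - T x) (T x - x)
    simp only [sub_add_sub_cancel] at h
    rw [norm_sub_rev (T y) (T x)] at h
    linarith
  have he2 : ‖T x - T y‖ - ‖T x - x‖ ≤ ‖T y - x‖ := by
    have h := norm_add_le (T x - x) (x - T y)
    simp only [sub_add_sub_cancel] at h
    rw [norm_sub_rev x (T y)] at h
    linarith
  have he3 : ‖T x - x‖ - ‖T x - T y‖ ≤ ‖T y - x‖ := by
    have h := norm_add_le (T x - T y) (T y - x)
    simp only [sub_add_sub_cancel] at h
    linarith
  have H : ‖T x - T y‖ ^ 2 ≤ α * ‖T x - y‖ ^ 2 + α * ‖T y - x‖ ^ 2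
      + (1 - 2 * α) * ‖x - y‖ ^ 2 := by
    rcases hxy with h | h
    · exact hT.2 x hx y hy h
    · have h2 := hT.2 y hy x hx h
      rw [norm_sub_rev (T y) (T x), norm_sub_rev y x] at h2
      linarith
  exact key_real α ‖T x - T y‖ ‖x - y‖ ‖T x - x‖ ‖T x - y‖ ‖T y - x‖ hα ha hb hc hd0 he0
    hd1 hd2 hd3 he1 he2 he3 H
end

section
/- Let E be a uniformly convex real Banach space with a partial order ≤ induced by a closed convex cone P, and let {x_n} be a monotone sequence in E (either x_n ≤ x_{n+1} for all n, or x_{n+1} ≤ x_n for all n) that is bounded in norm. Then {x_n} converges weakly to some point x ∈ E. -/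
open Filter Topology

/-- In a uniformly convex complete space, a nested sequence of nonempty
bounded closed convex sets has nonempty intersection. -/
lemma nested_closed_convex_inter_nonempty
    {E : Type*} [NormedAddCommGroup E] [NormedSpace ℝ E]
    [UniformConvexSpace E] [CompleteSpace E]
    (D : ℕ → Set E) (hne : ∀ n, (D n).Nonempty) (hcl : ∀ n, IsClosed (D n))
    (hcv : ∀ n, Convex ℝ (D n)) (hanti : ∀ n m, n ≤ m → D m ⊆ D n)
    (M : ℝ) (hbd : ∀ n, D n ⊆ Metric.closedBall 0 M) :
    (⋂ n, D n).Nonempty := by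
  -- the infimum of the norm on `D n`
  set d : ℕ → ℝ := fun n => sInf (norm '' D n) with hd_def
  have himg : ∀ n, (norm '' D n).Nonempty := fun n => (hne n).image _
  have hbb : ∀ n, BddBelow (norm '' D n) := by
    intro n
    exact ⟨0, fun r hr => by obtain ⟨z, _, rfl⟩ := hr; exact norm_nonneg z⟩
  have hd0 : ∀ n, 0 ≤ d n := by
    intro n
    exact le_csInf (himg n) (fun r hr => by obtain ⟨z, _, rfl⟩ := hr; exact norm_nonneg z)
  have hdle : ∀ n, ∀ z ∈ D n, d n ≤ ‖z‖ := by
    intro n z hz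
    exact csInf_le (hbb n) ⟨z, hz, rfl⟩
  have hdM : ∀ n, d n ≤ M := by
    intro n
    obtain ⟨z, hz⟩ := hne n
    exact (hdle n z hz).trans (by simpa using hbd n hz)
  have hdmono : Monotone d := by
    intro n m hnm
    exact csInf_le_csInf (hbb n) (himg m) (Set.image_mono (hanti n m hnm))
  -- approximate minimizers
  have hv : ∀ n : ℕ, ∃ z ∈ D n, ‖z‖ < d n + 1 / (n + 1) := by
    intro n
    have hpos : (0 : ℝ) < 1 / (n + 1) := by positivity
    obtain ⟨r, hr, hrlt⟩ := Real.lt_sInf_add_pos (himg n) hpos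
    obtain ⟨z, hz, rfl⟩ := hr
    exact ⟨z, hz, hrlt⟩
  choose v hvD hvlt using hv
  have hbdd_range : BddAbove (Set.range d) := ⟨M, by rintro r ⟨n, rfl⟩; exact hdM n⟩
  set c : ℝ := ⨆ n, d n with hc_def
  have hdc : ∀ n, d n ≤ c := fun n => le_ciSup hbdd_range n
  have hc0 : 0 ≤ c := (hd0 0).trans (hdc 0)
  -- midpoint bound
  have hmid : ∀ N n m, N ≤ n → N ≤ m → 2 * d N ≤ ‖v n + v m‖ := by
    intro N n m hn hm
    have h1 : v n ∈ D N := hanti N n hn (hvD n)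
    have h2 : v m ∈ D N := hanti N m hm (hvD m)
    have h3 : (1 / 2 : ℝ) • v n + (1 / 2 : ℝ) • v m ∈ D N :=
      hcv N h1 h2 (by norm_num) (by norm_num) (by norm_num)
    have h4 := hdle N _ h3
    have h5 : (1 / 2 : ℝ) • v n + (1 / 2 : ℝ) • v m = (1 / 2 : ℝ) • (v n + v m) := by
      rw [smul_add]
    rw [h5, norm_smul, Real.norm_eq_abs, abs_of_nonneg (by norm_num : (0:ℝ) ≤ 1/2)] at h4
    linarith
  -- v is Cauchy
  have hcauchy : CauchySeq v := by
    rw [Metric.cauchySeq_iff]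
    intro ε hε
    rcases eq_or_lt_of_le hc0 with hc | hcpos
    · -- c = 0 : norms go to 0
      obtain ⟨N, hN⟩ := exists_nat_one_div_lt (show (0:ℝ) < ε / 2 by linarith)
      refine ⟨N, fun m hm n hn => ?_⟩
      have hnorm : ∀ k : ℕ, N ≤ k → ‖v k‖ < ε / 2 := by
        intro k hk
        have h1 : d k ≤ 0 := by rw [hc]; exact hdc k
        have h2 : (1 : ℝ) / (k + 1) ≤ 1 / (N + 1) := by
          apply one_div_le_one_div_of_le (by positivity)
          have : (N:ℝ) ≤ k := Nat.cast_le.2 hk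
          linarith
        calc ‖v k‖ < d k + 1 / (k + 1) := hvlt k
          _ ≤ 0 + 1 / (N + 1) := by linarith
          _ < ε / 2 := by linarith
      calc dist (v m) (v n) ≤ ‖v m‖ + ‖v n‖ := by
            rw [dist_eq_norm]; exact norm_sub_le _ _
        _ < ε / 2 + ε / 2 := add_lt_add (hnorm m hm) (hnorm n hn)
        _ = ε := by ring
    · -- c > 0 : uniform convexity
      have hε₀ : (0:ℝ) < ε / (c + 1) := by positivity
      obtain ⟨δ, hδ, hucv⟩ := exists_forall_closed_ball_dist_add_le_two_sub E hε₀
      set θ : ℝ := δ * c / 8 with hθ_def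
      have hθpos : 0 < θ := by positivity
      set η : ℝ := min 1 θ with hη_def
      have hηpos : 0 < η := lt_min one_pos hθpos
      have hηθ : η ≤ θ := min_le_right _ _
      have hη1 : η ≤ 1 := min_le_left _ _
      obtain ⟨N₁, hN₁⟩ := exists_lt_of_lt_ciSup (show c - θ < ⨆ n, d n by rw [← hc_def]; linarith)
      obtain ⟨N₂, hN₂⟩ := exists_nat_one_div_lt hηpos
      refine ⟨max N₁ N₂, fun m hm n hn => ?_⟩
      by_contra hcon
      push_neg at hcon
      set R : ℝ := c + η with hR_def
      have hRpos : 0 < R := by positivity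
      have hnormle : ∀ k : ℕ, max N₁ N₂ ≤ k → ‖v k‖ ≤ R := by
        intro k hk
        have h2 : (1 : ℝ) / (k + 1) ≤ 1 / (N₂ + 1) := by
          apply one_div_le_one_div_of_le (by positivity)
          have : (N₂ : ℝ) ≤ k := by exact_mod_cast le_trans (le_max_right N₁ N₂) hk
          linarith
        have := hvlt k
        have := hdc k
        nlinarith [hN₂]
      have hxm : ‖R⁻¹ • v m‖ ≤ 1 := by
        rw [norm_smul, norm_inv, Real.norm_of_nonneg hRpos.le]
        rw [inv_mul_le_iff₀ hRpos, mul_one]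
        exact hnormle m hm
      have hxn : ‖R⁻¹ • v n‖ ≤ 1 := by
        rw [norm_smul, norm_inv, Real.norm_of_nonneg hRpos.le]
        rw [inv_mul_le_iff₀ hRpos, mul_one]
        exact hnormle n hn
      have hdist : ε / (c + 1) ≤ ‖R⁻¹ • v m - R⁻¹ • v n‖ := by
        rw [← smul_sub, norm_smul, norm_inv, Real.norm_of_nonneg hRpos.le]
        rw [← dist_eq_norm]
        have h1 : ε ≤ dist (v m) (v n) := hcon
        have h2 : R ≤ c + 1 := by simp [hR_def]; linarith
        rw [div_le_iff₀ (by positivity), mul_comm, ← mul_assoc]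
        calc ε = 
          1 * ε := (one_mul ε).symm
          _ ≤ (c + 1) * R⁻¹ * dist (v m) (v n) := by
              apply mul_le_mul
              · rw [le_mul_inv_iff₀ hRpos, one_mul]; exact h2
              · exact h1
              · linarith
              · positivity
      have hkey := hucv hxm hxn hdist
      rw [← smul_add, norm_smul, norm_inv, Real.norm_of_nonneg hRpos.le,
        inv_mul_le_iff₀ hRpos] at hkey
      -- lower bound on ‖v m + v n‖
      have hlow : 2 * d (max N₁ N₂) ≤ ‖v m + v n‖ := hmid _ _ _ hm hn
      have hdN : c - θ < d (max N₁ N₂) := lt_of_lt_of_le hN₁ (hdmono (le_max_left _ _))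
      have hδ2 : δ ≤ 2 := by
        by_contra hδ2
        push_neg at hδ2
        nlinarith [norm_nonneg (R⁻¹ • v m + R⁻¹ • v n), hkey,
          norm_smul_le R⁻¹ (v m + v n)]
      nlinarith [hkey, hlow, hdN, hηθ, hθpos, hcpos, hδ, hRpos]
  obtain ⟨l, hl⟩ := cauchySeq_tendsto_of_complete hcauchy
  refine ⟨l, Set.mem_iInter.2 fun n => ?_⟩
  apply (hcl n).mem_of_tendsto hl
  filter_upwards [eventually_ge_atTop n] with m hm
  exact hanti n m hm (hvD m)

/-- The increasing case. -/
lemma weakconv_of_increasing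
    {E : Type*} [NormedAddCommGroup E] [NormedSpace ℝ E]
    [UniformConvexSpace E] [CompleteSpace E]
    (P : Set E) (hP : IsClosedConvexCone P)
    (x : ℕ → E) (hx : ∀ n, x (n + 1) - x n ∈ P)
    (M : ℝ) (hM : ∀ n, ‖x n‖ ≤ M) :
    ∃ l : E, WeakConv x l := by
  obtain ⟨hPne, hPcl, -, hPpt, hPcone⟩ := hP
  have hPadd : ∀ a ∈ P, ∀ b ∈ P, a + b ∈ P := by
    intro a ha b hb
    have := hPcone a ha b hb 1 1 zero_le_one zero_le_one
    simpa using this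
  have hchain : ∀ n k : ℕ, n ≤ k → x k - x n ∈ P := by
    intro n k hnk
    induction k, hnk using Nat.le_induction with
    | base =>
        obtain ⟨p, hp⟩ := hPne
        have := hPcone p hp p hp 0 0 le_rfl le_rfl
        simpa using this
    | succ k hk ih =>
        have := hPadd _ (hx k) _ ih
        have h2 : x (k + 1) - x k + (x k - x n) = x (k + 1) - x n := by abel
        rwa [h2] at this
  -- upper and lower "order" sets are closed and convex
  have hUcl : ∀ c : E, IsClosed {z : E | z - c ∈ P} :=
    fun c => hPcl.preimage (continuous_id.sub continuous_const)
  have hLcl : ∀ c : E, IsClosed {z : E | c - z ∈ P} :=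
    fun c => hPcl.preimage (continuous_const.sub continuous_id)
  have hUcv : ∀ c : E, Convex ℝ {z : E | z - c ∈ P} := by
    intro c z₁ h₁ z₂ h₂ a b ha hb hab
    have he : a • z₁ + b • z₂ - c = a • (z₁ - c) + b • (z₂ - c) := by
      have h' : a • (z₁ - c) + b • (z₂ - c) = a • z₁ + b • z₂ - (a + b) • c := by
        rw [add_smul, smul_sub, smul_sub]; abel
      rw [h', hab, one_smul]
    show a • z₁ + b • z₂ - c ∈ P
    rw [he]
    exact hPcone _ h₁ _ h₂ a b ha hb
  have hLcv : ∀ c : E, Convex ℝ {z : E | c - z ∈ P} := by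
    intro c z₁ h₁ z₂ h₂ a b ha hb hab
    have he : c - (a • z₁ + b • z₂) = a • (c - z₁) + b • (c - z₂) := by
      have h' : a • (c - z₁) + b • (c - z₂) = (a + b) • c - (a • z₁ + b • z₂) := by
        rw [add_smul, smul_sub, smul_sub]; abel
      rw [h', hab, one_smul]
    show c - (a • z₁ + b • z₂) ∈ P
    rw [he]
    exact hPcone _ h₁ _ h₂ a b ha hb
  -- tail convex hulls
  set D : ℕ → Set E := fun n => closure (convexHull ℝ (x '' Set.Ici n)) with hD_def
  have hxD : ∀ n k : ℕ, n ≤ k → x k ∈ D n := fun n k hk =>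
    subset_closure (subset_convexHull ℝ _ ⟨k, hk, rfl⟩)
  have hDne : ∀ n, (D n).Nonempty := fun n => ⟨x n, hxD n n le_rfl⟩
  have hDcl : ∀ n, IsClosed (D n) := fun n => isClosed_closure
  have hDcv : ∀ n, Convex ℝ (D n) := fun n => (convex_convexHull ℝ _).closure
  have hDanti : ∀ n m, n ≤ m → D m ⊆ D n := fun n m hnm =>
    closure_mono (convexHull_mono (Set.image_mono (Set.Ici_subset_Ici.2 hnm)))
  have hDmin : ∀ (n : ℕ) (C : Set E), IsClosed C → Convex ℝ C →
      (∀ k, n ≤ k → x k ∈ C) → D n ⊆ C := by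
    intro n C hCcl hCcv hCmem
    apply closure_minimal _ hCcl
    apply convexHull_min _ hCcv
    rintro z ⟨k, hk, rfl⟩
    exact hCmem k hk
  have hDbd : ∀ n, D n ⊆ Metric.closedBall 0 M := by
    intro n
    apply hDmin n _ Metric.isClosed_closedBall (convex_closedBall 0 M)
    intro k _
    simpa [Metric.mem_closedBall, dist_eq_norm] using hM k
  -- any two points of ⋂ D n are equal
  have hsingle : ∀ v w : E, (∀ n, v ∈ D n) → (∀ n, w ∈ D n) → v = w := by
    have key : ∀ v w : E, (∀ n, v ∈ D n) → (∀ n, w ∈ D n) → v - w ∈ P := by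
      intro v w hv hw
      have hub : ∀ k, v - x k ∈ P := by
        intro k
        exact hDmin k {z : E | z - x k ∈ P} (hUcl _) (hUcv _)
          (fun j hj => hchain k j hj) (hv k)
      have : w ∈ {z : E | v - z ∈ P} :=
        hDmin 0 _ (hLcl v) (hLcv v) (fun k _ => hub k) (hw 0)
      exact this
    intro v w hv hw
    have h1 : v - w ∈ P := key v w hv hw
    have h2 : w - v ∈ P := key w v hw hv
    have h3 : v - w ∈ P ∩ (-P) := ⟨h1, by simpa using h2⟩
    rw [hPpt] at h3
    have : v - w = 0 := h3
    exact sub_eq_zero.1 this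
  -- the candidate limit
  obtain ⟨v, hv⟩ := nested_closed_convex_inter_nonempty D hDne hDcl hDcv hDanti M hDbd
  rw [Set.mem_iInter] at hv
  refine ⟨v, ?_⟩
  -- one-sided estimate
  have oneside : ∀ g : E →L[ℝ] ℝ, ∀ ε : ℝ, 0 < ε →
      ∀ᶠ n in atTop, g (x n) < g v + ε := by
    intro g ε hε
    by_contra hcon
    have hfreq : ∀ N : ℕ, ∃ k, N ≤ k ∧ g v + ε ≤ g (x k) := by
      intro N
      rw [Filter.not_eventually] at hcon
      obtain ⟨k, hk, hgk⟩ := (Filter.frequently_atTop.1 hcon) N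
      exact ⟨k, hk, not_lt.1 hgk⟩
    set A : ℕ → Set E := fun n => D n ∩ {z : E | g v + ε ≤ g z} with hA_def
    have hHcl : IsClosed {z : E | g v + ε ≤ g z} :=
      isClosed_le continuous_const g.continuous
    have hHcv : Convex ℝ {z : E | g v + ε ≤ g z} := by
      intro z₁ h₁ z₂ h₂ a b ha hb hab
      have h₁' : g v + ε ≤ g z₁ := h₁
      have h₂' : g v + ε ≤ g z₂ := h₂
      show g v + ε ≤ g (a • z₁ + b • z₂)
      rw [map_add, map_smul, map_smul, smul_eq_mul, smul_eq_mul]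
      have h3 : a * (g v + ε) + b * (g v + ε) = g v + ε := by
        rw [← add_mul, hab, one_mul]
      nlinarith [mul_le_mul_of_nonneg_left h₁' ha, mul_le_mul_of_nonneg_left h₂' hb]
    have hAne : ∀ n, (A n).Nonempty := by
      intro n
      obtain ⟨k, hk, hgk⟩ := hfreq n
      exact ⟨x k, hxD n k hk, hgk⟩
    obtain ⟨w, hw⟩ := nested_closed_convex_inter_nonempty A
      hAne (fun n => (hDcl n).inter hHcl) (fun n => (hDcv n).inter hHcv)
      (fun n m hnm => Set.inter_subset_inter_left _ (hDanti n m hnm))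
      M (fun n => (Set.inter_subset_left).trans (hDbd n))
    rw [Set.mem_iInter] at hw
    have hwD : ∀ n, w ∈ D n := fun n => (hw n).1
    have hwv : w = v := hsingle w v hwD hv
    have : g v + ε ≤ g w := (hw 0).2
    rw [hwv] at this
    linarith
  intro f
  rw [Metric.tendsto_atTop]
  intro ε hε
  have h1 := oneside f ε hε
  have h2 := oneside (-f) ε hε
  have h2' : ∀ᶠ n in atTop, f v - ε < f (x n) := by
    filter_upwards [h2] with n hn
    simp only [ContinuousLinearMap.neg_apply] at hn
    linarith
  obtain ⟨N, hN⟩ := eventually_atTop.1 (h1.and h2')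
  refine ⟨N, fun n hn => ?_⟩
  obtain ⟨ha, hb⟩ := hN n hn
  rw [Real.dist_eq, abs_lt]
  constructor <;> linarith

/-- In a uniformly convex Banach space, a norm-bounded monotone sequence
(w.r.t. the order induced by a closed convex cone) converges weakly. -/
theorem bounded_monotone_seq_weak_convergence
    {E : Type*} [NormedAddCommGroup E] [NormedSpace ℝ E]
    [UniformConvexSpace E] [CompleteSpace E]
    (P : Set E) (hP : IsClosedConvexCone P)
    (x : ℕ → E)
    (hmono : (∀ n, x (n + 1) - x n ∈ P) ∨ (∀ n, x n - x (n + 1) ∈ P))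
    (hbdd : ∃ M : ℝ, ∀ n, ‖x n‖ ≤ M) :
    ∃ l : E, WeakConv x l := by
  obtain ⟨M, hM⟩ := hbdd
  rcases hmono with h | h
  · exact weakconv_of_increasing P hP x h M hM
  · have h' : ∀ n, (fun n => -x n) (n + 1) - (fun n => -x n) n ∈ P := by
      intro n
      show -x (n + 1) - -x n ∈ P
      rw [neg_sub_neg]
      exact h n
    obtain ⟨l, hl⟩ := weakconv_of_increasing P hP (fun n => -x n) h' M
      (fun n => by simpa using hM n)
    refine ⟨-l, fun f => ?_⟩
    have h2 := (hl f).neg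
    rw [map_neg]
    exact h2.congr fun n => by simp
end

section
/- Let K be a nonempty closed convex subset of a uniformly convex real Banach space E with a partial order ≤ induced by a closed convex cone P, and let T : K → K be a monotone α-nonexpansive mapping for some α < 1. If there exists x₀ ∈ K with x₀ ≤ Tx₀ such that the orbit O(x₀) = {Tⁿx₀ : n = 0, 1, 2, ...} is bounded in norm, then T has a fixed point z ∈ K with x₀ ≤ z. -/
set_option maxHeartbeats 1000000

open Filter Topology

/-- Uniform convexity, squared-midpoint form: on a ball of radius `R`, points
at distance at least `c` have midpoint whose squared norm is uniformly smaller
than the average of the squared norms. -/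
lemma uc_sq_lemma {E : Type*} [NormedAddCommGroup E] [NormedSpace ℝ E] [UniformConvexSpace E]
    {R c : ℝ} (hR : 0 < R) (hc : 0 < c) :
    ∃ ψ : ℝ, 0 < ψ ∧ ∀ p q : E, ‖p‖ ≤ R → ‖q‖ ≤ R → c ≤ ‖p - q‖ →
      ‖p + q‖ ^ 2 / 4 ≤ (‖p‖ ^ 2 + ‖q‖ ^ 2) / 2 - ψ := by
  obtain ⟨δ₀, hδ₀, hδprop⟩ := exists_forall_closed_ball_dist_add_le_two_sub E (div_pos hc hR)
  set δ := min δ₀ 1 with hδdef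
  have hδpos : 0 < δ := lt_min hδ₀ one_pos
  have hδle1 : δ ≤ 1 := min_le_right _ _
  have hprop : ∀ x y : E, ‖x‖ ≤ 1 → ‖y‖ ≤ 1 → c / R ≤ ‖x - y‖ → ‖x + y‖ ≤ 2 - δ := by
    intro x y hx hy hxy
    have h1 := hδprop hx hy hxy
    have h2 : δ ≤ δ₀ := min_le_left _ _
    linarith
  refine ⟨δ ^ 2 * c ^ 2 / 256, by positivity, ?_⟩
  have key : ∀ p q : E, ‖q‖ ≤ ‖p‖ → ‖p‖ ≤ R → ‖q‖ ≤ R → c ≤ ‖p - q‖ →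
      ‖p + q‖ ^ 2 / 4 ≤ (‖p‖ ^ 2 + ‖q‖ ^ 2) / 2 - δ ^ 2 * c ^ 2 / 256 := by
    intro p q hqp hpR hqR hpq
    have ha0 : (0:ℝ) ≤ ‖p‖ := norm_nonneg _
    have hb0 : (0:ℝ) ≤ ‖q‖ := norm_nonneg _
    have htri : ‖p - q‖ ≤ ‖p‖ + ‖q‖ := norm_sub_le p q
    have hac : c ≤ 2 * ‖p‖ := by linarith
    have hapos : 0 < ‖p‖ := by linarith
    by_cases hcase : ‖q‖ ≤ (1 - δ / 4) * ‖p‖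
    · have h2 : ‖p + q‖ ^ 2 ≤ (‖p‖ + ‖q‖) ^ 2 :=
        pow_le_pow_left₀ (norm_nonneg _) (norm_add_le p q) 2
      have e1 : δ / 4 * ‖p‖ ≤ ‖p‖ - ‖q‖ := by nlinarith
      have e2 : δ * c / 8 ≤ ‖p‖ - ‖q‖ := by nlinarith
      have e3 : (δ * c / 8) ^ 2 ≤ (‖p‖ - ‖q‖) ^ 2 :=
        pow_le_pow_left₀ (by positivity) e2 2
      nlinarith [e3, h2]
    · push_neg at hcase
      have hb' : (1 - δ / 4) * ‖p‖ ≤ ‖q‖ := hcase.le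
      have hinv : (0:ℝ) < ‖p‖⁻¹ := inv_pos.mpr hapos
      have hxp : ‖‖p‖⁻¹ • p‖ ≤ 1 := by
        rw [norm_smul, Real.norm_eq_abs, abs_of_pos hinv, inv_mul_cancel₀ hapos.ne']
      have hyq : ‖‖p‖⁻¹ • q‖ ≤ 1 := by
        rw [norm_smul, Real.norm_eq_abs, abs_of_pos hinv]
        calc ‖p‖⁻¹ * ‖q‖ ≤ ‖p‖⁻¹ * ‖p‖ := mul_le_mul_of_nonneg_left hqp hinv.le
          _ = 1 := inv_mul_cancel₀ hapos.ne'
      have hsub : c / R ≤ ‖‖p‖⁻¹ • p - ‖p‖⁻¹ • q‖ := by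
        rw [← smul_sub, norm_smul, Real.norm_eq_abs, abs_of_pos hinv]
        calc c / R ≤ c / ‖p‖ := div_le_div_of_nonneg_left hc.le hapos hpR
          _ = ‖p‖⁻¹ * c := by rw [div_eq_inv_mul]
          _ ≤ ‖p‖⁻¹ * ‖p - q‖ := mul_le_mul_of_nonneg_left hpq hinv.le
      have hsum := hprop _ _ hxp hyq hsub
      rw [← smul_add, norm_smul, Real.norm_eq_abs, abs_of_pos hinv] at hsum
      have hppq : ‖p + q‖ ≤ (2 - δ) * ‖p‖ := by
        rw [inv_mul_le_iff₀ hapos] at hsum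
        linarith [hsum]
      have h2 : ‖p + q‖ ^ 2 ≤ ((2 - δ) * ‖p‖) ^ 2 :=
        pow_le_pow_left₀ (norm_nonneg _) hppq 2
      have hb2 : ((1 - δ / 4) * ‖p‖) ^ 2 ≤ ‖q‖ ^ 2 := by
        apply pow_le_pow_left₀ _ hb' 2
        have h3 : (0:ℝ) ≤ 1 - δ / 4 := by linarith
        positivity
      have ha2 : c ^ 2 / 4 ≤ ‖p‖ ^ 2 := by nlinarith
      have hδδ : δ ^ 2 ≤ δ := by nlinarith
      have hcoef : (0:ℝ) ≤ 3 * δ / 4 - 7 * δ ^ 2 / 32 := by nlinarith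
      have hstep := mul_le_mul_of_nonneg_left ha2 hcoef
      have hkey2 : δ ^ 2 * c ^ 2 / 256 ≤ (3 * δ / 4 - 7 * δ ^ 2 / 32) * (c ^ 2 / 4) := by
        nlinarith [mul_nonneg (by linarith : (0:ℝ) ≤ δ - δ ^ 2) (sq_nonneg c)]
      have hkey3 : δ ^ 2 * c ^ 2 / 256 ≤ (3 * δ / 4 - 7 * δ ^ 2 / 32) * ‖p‖ ^ 2 :=
        le_trans hkey2 hstep
      nlinarith [h2, hb2, hkey3]
  intro p q hp hq hpq
  rcases le_total ‖q‖ ‖p‖ with h | h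
  · exact key p q h hp hq hpq
  · have h2 := key q p h hq hp (by rwa [norm_sub_rev])
    rw [add_comm q p, add_comm (‖q‖ ^ 2)] at h2
    exact h2

/-- Pazy-type fixed point theorem: if `x₀ ≤ T x₀` and the orbit of `x₀` is
norm-bounded, then `T` has a fixed point `z` with `x₀ ≤ z`. -/
theorem pazy_fixed_point_increasing
    {E : Type*} [NormedAddCommGroup E] [NormedSpace ℝ E]
    [UniformConvexSpace E] [CompleteSpace E]
    (P : Set E) (hP : IsClosedConvexCone P)
    (K : Set E) (hKne : K.Nonempty) (hKcl : IsClosed K) (hKco : Convex ℝ K)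
    (T : E → E) (hTK : ∀ x ∈ K, T x ∈ K)
    (α : ℝ) (hα : α < 1)
    (hT : MonotoneAlphaNonexpansive P K T α)
    (x₀ : E) (hx₀ : x₀ ∈ K) (hinc : T x₀ - x₀ ∈ P)
    (hbdd : ∃ M : ℝ, ∀ n : ℕ, ‖T^[n] x₀‖ ≤ M) :
    ∃ z ∈ K, T z = z ∧ z - x₀ ∈ P := by
  classical
  obtain ⟨P_ne, P_cl, -, -, P_comb⟩ := hP
  obtain ⟨Tmono, Tineq⟩ := hT
  obtain ⟨M₀, hM₀⟩ := hbdd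
  have P_zero : (0 : E) ∈ P := by
    obtain ⟨p, hp⟩ := P_ne
    simpa using P_comb p hp p hp 0 0 le_rfl le_rfl
  have P_add : ∀ u ∈ P, ∀ v ∈ P, u + v ∈ P := by
    intro u hu v hv
    simpa using P_comb u hu v hv 1 1 zero_le_one zero_le_one
  set x : ℕ → E := fun n => T^[n] x₀ with hxdef
  have hx0 : x 0 = x₀ := rfl
  have hxs : ∀ n, x (n + 1) = T (x n) := fun n => Function.iterate_succ_apply' T n x₀
  have hxK : ∀ n, x n ∈ K := by
    intro n
    induction n with
    | zero => exact hx₀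
    | succ n ih => rw [hxs]; exact hTK _ ih
  set M : ℝ := max M₀ 0 with hMdef
  have hM : ∀ n, ‖x n‖ ≤ M := fun n => le_trans (hM₀ n) (le_max_left _ _)
  have hM0 : (0:ℝ) ≤ M := le_max_right _ _
  have hstep : ∀ n, x (n + 1) - x n ∈ P := by
    intro n
    induction n with
    | zero => rw [hxs, hx0]; exact hinc
    | succ n ih =>
      have h1 := Tmono (x n) (hxK n) (x (n+1)) (hxK (n+1)) ih
      rw [← hxs n] at h1
      rw [hxs (n+1)]
      exact h1
  have hle : ∀ n m', n ≤ m' → x m' - x n ∈ P := by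
    intro n
    refine Nat.le_induction ?_ ?_
    · simpa using P_zero
    · intro k _ ih
      have h1 := P_add _ (hstep k) _ ih
      rwa [sub_add_sub_cancel] at h1
  -- the nested order-interval sets
  set D : ℕ → Set E := fun n => {w | w ∈ K ∧ w - x n ∈ P} with hDdef
  have hDcl : ∀ n, IsClosed (D n) := by
    intro n
    have h1 : D n = K ∩ ((fun w => w - x n) ⁻¹' P) := rfl
    rw [h1]
    exact hKcl.inter (P_cl.preimage (continuous_id.sub continuous_const))
  have hDanti : ∀ {n m' : ℕ}, n ≤ m' → D m' ⊆ D n := by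
    intro n m' h w hw
    refine ⟨hw.1, ?_⟩
    have h1 := P_add _ hw.2 _ (hle n m' h)
    rwa [sub_add_sub_cancel] at h1
  have hxD : ∀ n, x n ∈ D n := fun n => ⟨hxK n, by simpa using P_zero⟩
  have hDconv : ∀ n, ∀ u ∈ D n, ∀ v ∈ D n, (1/2 : ℝ) • u + (1/2 : ℝ) • v ∈ D n := by
    intro n u hu v hv
    refine ⟨hKco hu.1 hv.1 (by norm_num) (by norm_num) (by norm_num), ?_⟩
    have h2 := P_comb _ hu.2 _ hv.2 (1/2) (1/2) (by norm_num) (by norm_num)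
    have heq : (1/2:ℝ) • (u - x n) + (1/2:ℝ) • (v - x n)
        = (1/2:ℝ) • u + (1/2:ℝ) • v - x n := by
      rw [smul_sub, smul_sub]; module
    rwa [heq] at h2
  -- Cesàro averages of squared distances to the orbit, and their limsup
  set Av : E → ℕ → ℝ := fun z N => (∑ n ∈ Finset.range (N + 1), ‖x n - z‖ ^ 2) / ((N:ℝ) + 1)
    with hAvdef
  set g : E → ℝ := fun z => limsup (Av z) atTop with hgdef
  have hg : ∀ z, g z = limsup (Av z) atTop := fun z => rfl
  have hAveq : ∀ z N, Av z N = (∑ n ∈ Finset.range (N + 1), ‖x n - z‖ ^ 2) / ((N:ℝ) + 1) :=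
    fun z N => rfl
  have hNpos : ∀ N : ℕ, (0:ℝ) < (N:ℝ) + 1 := fun N => by positivity
  have hAv0 : ∀ z N, 0 ≤ Av z N := by
    intro z N
    rw [hAveq]
    apply div_nonneg _ (hNpos N).le
    apply Finset.sum_nonneg
    intro i _
    positivity
  have hnormb : ∀ (z : E) (n : ℕ), ‖x n - z‖ ≤ M + ‖z‖ := fun z n =>
    le_trans (norm_sub_le _ _) (by linarith [hM n])
  have hAvUB : ∀ z N, Av z N ≤ (M + ‖z‖) ^ 2 := by
    intro z N
    rw [hAveq, div_le_iff₀ (hNpos N)]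
    calc ∑ n ∈ Finset.range (N+1), ‖x n - z‖ ^ 2
        ≤ ∑ _n ∈ Finset.range (N+1), (M + ‖z‖) ^ 2 :=
          Finset.sum_le_sum fun n _ => pow_le_pow_left₀ (norm_nonneg _) (hnormb z n) 2
      _ = ((N:ℝ) + 1) * (M + ‖z‖) ^ 2 := by
          rw [Finset.sum_const, Finset.card_range, nsmul_eq_mul]; push_cast; ring
      _ = (M + ‖z‖) ^ 2 * ((N:ℝ) + 1) := by ring
  have hBdd : ∀ z, IsBoundedUnder (· ≤ ·) atTop (Av z) :=
    fun z => isBoundedUnder_of ⟨(M + ‖z‖) ^ 2, hAvUB z⟩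
  have hCob : ∀ z, IsCoboundedUnder (· ≤ ·) atTop (Av z) :=
    fun z => isCoboundedUnder_le_of_eventually_le atTop (Eventually.of_forall (hAv0 z))
  have hg0 : ∀ z, 0 ≤ g z := by
    intro z
    rw [hg z]
    exact le_limsup_of_frequently_le (Frequently.of_forall (hAv0 z)) (hBdd z)
  have hgUB : ∀ z, g z ≤ (M + ‖z‖) ^ 2 := by
    intro z
    rw [hg z]
    exact limsup_le_of_le (hCob z) (Eventually.of_forall (hAvUB z))
  have hgle : ∀ (z : E) (a : ℝ), (∀ ε : ℝ, 0 < ε → ∀ᶠ N in atTop, Av z N ≤ a + ε) → g z ≤ a := by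
    intro z a h
    rw [hg z]
    exact le_of_forall_pos_le_add fun ε hε => limsup_le_of_le (hCob z) (h ε hε)
  have hAvlt : ∀ (z : E) (ε : ℝ), 0 < ε → ∀ᶠ N in atTop, Av z N < g z + ε := by
    intro z ε hε
    have h1 : limsup (Av z) atTop < g z + ε := by
      rw [← hg z]; exact lt_add_of_pos_right _ hε
    exact eventually_lt_of_limsup_lt h1 (hBdd z)
  have hcoer : ∀ z : E, ‖z‖ ≤ M + Real.sqrt (g z) := by
    intro z
    rcases le_or_gt ‖z‖ M with h | h
    · have := Real.sqrt_nonneg (g z); linarith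
    · have hterm : ∀ n : ℕ, (‖z‖ - M) ^ 2 ≤ ‖x n - z‖ ^ 2 := by
        intro n
        have h2 := norm_sub_norm_le z (x n)
        rw [norm_sub_rev z (x n)] at h2
        exact pow_le_pow_left₀ (by linarith [hM n]) (by linarith [hM n]) 2
      have hAvge : ∀ N, (‖z‖ - M) ^ 2 ≤ Av z N := by
        intro N
        rw [hAveq, le_div_iff₀ (hNpos N)]
        calc (‖z‖ - M) ^ 2 * ((N:ℝ) + 1)
            = ∑ _n ∈ Finset.range (N+1), (‖z‖ - M) ^ 2 := by
              rw [Finset.sum_const, Finset.card_range, nsmul_eq_mul]; push_cast; ring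
          _ ≤ ∑ n ∈ Finset.range (N+1), ‖x n - z‖ ^ 2 :=
              Finset.sum_le_sum fun n _ => hterm n
      have hle2 : (‖z‖ - M) ^ 2 ≤ g z := by
        rw [hg z]
        exact le_limsup_of_frequently_le (Frequently.of_forall hAvge) (hBdd z)
      have h3 := Real.sqrt_le_sqrt hle2
      rw [Real.sqrt_sq (by linarith)] at h3
      linarith
  have hsmall : ∀ C : ℝ, ∀ ε : ℝ, 0 < ε → ∀ᶠ N : ℕ in atTop, C / ((N:ℝ) + 1) ≤ ε := by
    intro C ε hε
    obtain ⟨N₀, hN₀⟩ := exists_nat_gt (C / ε)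
    filter_upwards [eventually_ge_atTop N₀] with N hN
    have h1 : (0:ℝ) < (N:ℝ) + 1 := hNpos N
    rw [div_le_iff₀ h1]
    have h2 : (N₀:ℝ) ≤ (N:ℝ) := by exact_mod_cast hN
    have h3 : C / ε ≤ (N:ℝ) + 1 := by linarith
    calc C = C / ε * ε := by field_simp
      _ ≤ ((N:ℝ) + 1) * ε := mul_le_mul_of_nonneg_right h3 hε.le
      _ = ε * ((N:ℝ) + 1) := mul_comm _ _
  -- Key inequality: g (T z) ≤ g z for any upper bound z ∈ K of the orbit
  have hkey : ∀ z : E, z ∈ K → (∀ n, z - x n ∈ P) → g (T z) ≤ g z := by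
    intro z hzK hzP
    have h1α : (0:ℝ) < 1 - α := by linarith
    have hpt : ∀ n : ℕ, ‖x (n+1) - T z‖ ^ 2 ≤
        α * ‖x (n+1) - z‖ ^ 2 + α * ‖x n - T z‖ ^ 2 + (1 - 2*α) * ‖x n - z‖ ^ 2 := by
      intro n
      have h1 := Tineq (x n) (hxK n) z hzK (hzP n)
      rw [← hxs n] at h1
      rw [norm_sub_rev (T z) (x n)] at h1
      exact h1
    set C₀ : ℝ := ‖x 0 - T z‖ ^ 2 + |α| * (M + ‖z‖) ^ 2 + |α| * ‖x 0 - z‖ ^ 2 with hC₀def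
    have hC₀0 : 0 ≤ C₀ := by rw [hC₀def]; positivity
    have hsum : ∀ N : ℕ,
        (1-α) * (∑ n ∈ Finset.range (N+1), ‖x n - T z‖ ^ 2) ≤
        (1-α) * (∑ n ∈ Finset.range (N+1), ‖x n - z‖ ^ 2) + C₀ := by
      intro N
      have h1 : ∑ n ∈ Finset.range (N+1), ‖x (n+1) - T z‖ ^ 2 ≤
          ∑ n ∈ Finset.range (N+1),
            (α * ‖x (n+1) - z‖ ^ 2 + α * ‖x n - T z‖ ^ 2 + (1 - 2*α) * ‖x n - z‖ ^ 2) :=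
        Finset.sum_le_sum fun n _ => hpt n
      have e1 : ∀ w : E, ∑ n ∈ Finset.range (N+1), ‖x (n+1) - w‖ ^ 2
          = (∑ n ∈ Finset.range (N+1), ‖x n - w‖ ^ 2) + ‖x (N+1) - w‖ ^ 2 - ‖x 0 - w‖ ^ 2 := by
        intro w
        have h2 := Finset.sum_range_succ' (fun n => ‖x n - w‖ ^ 2) (N+1)
        have h3 := Finset.sum_range_succ (fun n => ‖x n - w‖ ^ 2) (N+1)
        linarith [h2, h3]
      have e2 : ∑ n ∈ Finset.range (N+1),
            (α * ‖x (n+1) - z‖ ^ 2 + α * ‖x n - T z‖ ^ 2 + (1 - 2*α) * ‖x n - z‖ ^ 2)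
          = α * (∑ n ∈ Finset.range (N+1), ‖x (n+1) - z‖ ^ 2)
            + α * (∑ n ∈ Finset.range (N+1), ‖x n - T z‖ ^ 2)
            + (1-2*α) * (∑ n ∈ Finset.range (N+1), ‖x n - z‖ ^ 2) := by
        rw [Finset.mul_sum, Finset.mul_sum, Finset.mul_sum, ← Finset.sum_add_distrib,
          ← Finset.sum_add_distrib]
      rw [e2, e1 z, e1 (T z)] at h1
      have hb1 : α * ‖x (N+1) - z‖ ^ 2 ≤ |α| * (M + ‖z‖) ^ 2 := by
        calc α * ‖x (N+1) - z‖ ^ 2 ≤ |α| * ‖x (N+1) - z‖ ^ 2 :=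
              mul_le_mul_of_nonneg_right (le_abs_self α) (by positivity)
          _ ≤ |α| * (M + ‖z‖) ^ 2 :=
              mul_le_mul_of_nonneg_left
                (pow_le_pow_left₀ (norm_nonneg _) (hnormb z (N+1)) 2) (abs_nonneg α)
      have hb2 : -(α * ‖x 0 - z‖ ^ 2) ≤ |α| * ‖x 0 - z‖ ^ 2 := by
        have h4 : -α ≤ |α| := neg_le_abs α
        have h5 : (0:ℝ) ≤ ‖x 0 - z‖ ^ 2 := by positivity
        nlinarith
      have hb3 : (0:ℝ) ≤ ‖x (N+1) - T z‖ ^ 2 := by positivity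
      rw [hC₀def]
      nlinarith [h1, hb1, hb2, hb3]
    have hAvkey : ∀ N, Av (T z) N ≤ Av z N + (C₀ / (1-α)) / ((N:ℝ) + 1) := by
      intro N
      have h5 := hsum N
      have h6 : (∑ n ∈ Finset.range (N+1), ‖x n - T z‖ ^ 2) ≤
          (∑ n ∈ Finset.range (N+1), ‖x n - z‖ ^ 2) + C₀ / (1-α) := by
        have h8 : (1-α) * (∑ n ∈ Finset.range (N+1), ‖x n - T z‖ ^ 2) ≤
            (1-α) * ((∑ n ∈ Finset.range (N+1), ‖x n - z‖ ^ 2) + C₀ / (1-α)) := by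
          rw [mul_add, mul_div_cancel₀ _ h1α.ne']
          linarith
        exact le_of_mul_le_mul_left h8 h1α
      rw [hAveq, hAveq]
      calc (∑ n ∈ Finset.range (N+1), ‖x n - T z‖ ^ 2) / ((N:ℝ) + 1)
          ≤ ((∑ n ∈ Finset.range (N+1), ‖x n - z‖ ^ 2) + C₀ / (1-α)) / ((N:ℝ) + 1) := by
            gcongr
        _ = (∑ n ∈ Finset.range (N+1), ‖x n - z‖ ^ 2) / ((N:ℝ) + 1)
            + (C₀ / (1-α)) / ((N:ℝ) + 1) := add_div _ _ _
    refine hgle (T z) (g z) ?_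
    intro ε hε
    filter_upwards [hsmall (C₀ / (1-α)) (ε/2) (by linarith), hAvlt z (ε/2) (by linarith)]
      with N hN1 hN2
    have h7 := hAvkey N
    linarith
  -- ψ-uniform convexity of g
  have hgconv : ∀ Rad cc : ℝ, 0 < Rad → 0 < cc → ∃ ψ : ℝ, 0 < ψ ∧ ∀ u v : E,
      (∀ n : ℕ, ‖x n - u‖ ≤ Rad) → (∀ n : ℕ, ‖x n - v‖ ≤ Rad) → cc ≤ ‖u - v‖ →
      g ((1/2:ℝ) • u + (1/2:ℝ) • v) ≤ g u / 2 + g v / 2 - ψ := by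
    intro Rad cc hRad hcc
    obtain ⟨ψ, hψ, hψprop⟩ := uc_sq_lemma (E := E) hRad hcc
    refine ⟨ψ, hψ, ?_⟩
    intro u v hu hv huv
    have hpt : ∀ n : ℕ, ‖x n - ((1/2:ℝ) • u + (1/2:ℝ) • v)‖ ^ 2 ≤
        (‖x n - u‖ ^ 2 + ‖x n - v‖ ^ 2) / 2 - ψ := by
      intro n
      have h1 := hψprop (x n - u) (x n - v) (hu n) (hv n) (by
        have h0 : (x n - u) - (x n - v) = v - u := by abel
        rw [h0, norm_sub_rev]
        exact huv)
      have h2 : x n - ((1/2:ℝ) • u + (1/2:ℝ) • v) = (1/2:ℝ) • ((x n - u) + (x n - v)) := by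
        module
      rw [h2, norm_smul, Real.norm_eq_abs]
      have h3 : |(1/2:ℝ)| = 1/2 := by norm_num
      rw [h3, mul_pow]
      have h4 : (1/2:ℝ) ^ 2 * ‖(x n - u) + (x n - v)‖ ^ 2
          = ‖(x n - u) + (x n - v)‖ ^ 2 / 4 := by ring
      rw [h4]
      exact h1
    have hAvmid : ∀ N, Av ((1/2:ℝ) • u + (1/2:ℝ) • v) N ≤ Av u N / 2 + Av v N / 2 - ψ := by
      intro N
      have h4 : ∑ n ∈ Finset.range (N+1), ‖x n - ((1/2:ℝ) • u + (1/2:ℝ) • v)‖ ^ 2 ≤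
          ∑ n ∈ Finset.range (N+1), ((‖x n - u‖ ^ 2 + ‖x n - v‖ ^ 2) / 2 - ψ) :=
        Finset.sum_le_sum fun n _ => hpt n
      have h5 : ∑ n ∈ Finset.range (N+1), ((‖x n - u‖ ^ 2 + ‖x n - v‖ ^ 2) / 2 - ψ)
          = ((∑ n ∈ Finset.range (N+1), ‖x n - u‖ ^ 2)
              + (∑ n ∈ Finset.range (N+1), ‖x n - v‖ ^ 2)) / 2 - ((N:ℝ) + 1) * ψ := by
        rw [Finset.sum_sub_distrib, Finset.sum_const, Finset.card_range, nsmul_eq_mul,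
          ← Finset.sum_div, Finset.sum_add_distrib]
        push_cast
        ring
      rw [h5] at h4
      rw [hAveq, hAveq, hAveq]
      have h6 : (∑ n ∈ Finset.range (N+1), ‖x n - ((1/2:ℝ) • u + (1/2:ℝ) • v)‖ ^ 2) / ((N:ℝ)+1)
          ≤ (((∑ n ∈ Finset.range (N+1), ‖x n - u‖ ^ 2)
              + (∑ n ∈ Finset.range (N+1), ‖x n - v‖ ^ 2)) / 2 - ((N:ℝ) + 1) * ψ) / ((N:ℝ)+1) := by
        gcongr
      calc (∑ n ∈ Finset.range (N+1), ‖x n - ((1/2:ℝ) • u + (1/2:ℝ) • v)‖ ^ 2) / ((N:ℝ)+1)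
          ≤ (((∑ n ∈ Finset.range (N+1), ‖x n - u‖ ^ 2)
              + (∑ n ∈ Finset.range (N+1), ‖x n - v‖ ^ 2)) / 2 - ((N:ℝ) + 1) * ψ) / ((N:ℝ)+1) := h6
        _ = (∑ n ∈ Finset.range (N+1), ‖x n - u‖ ^ 2) / ((N:ℝ)+1) / 2
            + (∑ n ∈ Finset.range (N+1), ‖x n - v‖ ^ 2) / ((N:ℝ)+1) / 2 - ψ := by
            field_simp
    refine hgle _ (g u / 2 + g v / 2 - ψ) ?_
    intro ε hε
    filter_upwards [hAvlt u ε hε, hAvlt v ε hε] with N h1 h2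
    have h3 := hAvmid N
    linarith
  -- minimization of g over the intersection of the D n via a minimizing sequence
  have hDne : ∀ n, (g '' D n).Nonempty := fun n => ⟨g (x n), x n, hxD n, rfl⟩
  have hDbdd : ∀ n, BddBelow (g '' D n) := by
    intro n
    refine ⟨0, ?_⟩
    rintro t ⟨w, -, rfl⟩
    exact hg0 w
  set mf : ℕ → ℝ := fun n => sInf (g '' D n) with hmfdef
  have hmfeq : ∀ n, mf n = sInf (g '' D n) := fun n => rfl
  have hmf0 : ∀ n, 0 ≤ mf n := by
    intro n
    rw [hmfeq]
    refine le_csInf (hDne n) ?_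
    rintro t ⟨w, -, rfl⟩
    exact hg0 w
  have hmfub : ∀ n, mf n ≤ (M + M) ^ 2 := by
    intro n
    rw [hmfeq]
    refine le_trans (csInf_le (hDbdd n) ⟨x n, hxD n, rfl⟩) ?_
    refine le_trans (hgUB (x n)) ?_
    exact pow_le_pow_left₀ (by positivity) (by linarith [hM n]) 2
  set m : ℝ := sSup (Set.range mf) with hmdef
  have hrne : (Set.range mf).Nonempty := Set.range_nonempty _
  have hrbdd : BddAbove (Set.range mf) := by
    refine ⟨(M + M) ^ 2, ?_⟩
    rintro t ⟨n, rfl⟩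
    exact hmfub n
  have hmfm : ∀ n, mf n ≤ m := fun n => le_csSup hrbdd ⟨n, rfl⟩
  have hm0 : 0 ≤ m := le_trans (hmf0 0) (hmfm 0)
  have hsel : ∀ n : ℕ, ∃ w, w ∈ D n ∧ g w < mf n + 1 / ((n:ℝ) + 1) := by
    intro n
    have h1 : mf n < mf n + 1 / ((n:ℝ) + 1) := lt_add_of_pos_right _ (by positivity)
    rw [hmfeq] at h1
    obtain ⟨t, ⟨w, hw, rfl⟩, hlt⟩ := exists_lt_of_csInf_lt (hDne n) h1
    exact ⟨w, hw, by rw [hmfeq]; exact hlt⟩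
  choose y hyD hylt using hsel
  have hyg : ∀ n, g (y n) < m + 1 / ((n:ℝ) + 1) :=
    fun n => lt_of_lt_of_le (hylt n) (by linarith [hmfm n])
  have hone : ∀ n : ℕ, 1 / ((n:ℝ) + 1) ≤ 1 := by
    intro n
    rw [div_le_one (hNpos n)]
    linarith [(Nat.cast_nonneg n : (0:ℝ) ≤ (n:ℝ))]
  set B : ℝ := M + Real.sqrt (m + 1) with hBdef
  have hB0 : 0 ≤ B := add_nonneg hM0 (Real.sqrt_nonneg _)
  have hyB : ∀ n, ‖y n‖ ≤ B := by
    intro n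
    have h1 : g (y n) ≤ m + 1 := le_of_lt (lt_of_lt_of_le (hyg n) (by linarith [hone n]))
    have h3 : Real.sqrt (g (y n)) ≤ Real.sqrt (m + 1) := Real.sqrt_le_sqrt h1
    have h2 := hcoer (y n)
    rw [hBdef]
    linarith
  set Rad : ℝ := M + B + 1 with hRaddef
  have hRadpos : 0 < Rad := by rw [hRaddef]; linarith
  have hxyR : ∀ n k : ℕ, ‖x k - y n‖ ≤ Rad := fun n k =>
    le_trans (norm_sub_le _ _) (by rw [hRaddef]; linarith [hM k, hyB n])
  have hycauchy : CauchySeq y := by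
    rw [Metric.cauchySeq_iff]
    intro cc hcc
    obtain ⟨ψ, hψ, hψconv⟩ := hgconv Rad cc hRadpos hcc
    obtain ⟨t1, ⟨n₁, rfl⟩, hn₁⟩ := exists_lt_of_lt_csSup hrne
      (show m - ψ/2 < m by linarith)
    obtain ⟨n₂, hn₂⟩ := exists_nat_one_div_lt (show (0:ℝ) < ψ/2 by linarith)
    refine ⟨max n₁ n₂, ?_⟩
    intro j hj k hk
    by_contra hcon
    push_neg at hcon
    rw [dist_eq_norm] at hcon
    have hjn₁ : n₁ ≤ j := le_trans (le_max_left _ _) hj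
    have hkn₁ : n₁ ≤ k := le_trans (le_max_left _ _) hk
    have hmid := hDconv n₁ (y j) (hDanti hjn₁ (hyD j)) (y k) (hDanti hkn₁ (hyD k))
    have h1 : mf n₁ ≤ g ((1/2:ℝ) • y j + (1/2:ℝ) • y k) := by
      rw [hmfeq]
      exact csInf_le (hDbdd n₁) ⟨_, hmid, rfl⟩
    have h2 := hψconv (y j) (y k) (hxyR j) (hxyR k) hcon
    have h3 : 1 / ((j:ℝ) + 1) < ψ/2 := by
      have h4 : (n₂:ℝ) ≤ (j:ℝ) := by exact_mod_cast le_trans (le_max_right n₁ n₂) hj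
      have h5 : 1 / ((j:ℝ) + 1) ≤ 1 / ((n₂:ℝ) + 1) :=
        one_div_le_one_div_of_le (hNpos n₂) (by linarith)
      linarith
    have h3' : 1 / ((k:ℝ) + 1) < ψ/2 := by
      have h4 : (n₂:ℝ) ≤ (k:ℝ) := by exact_mod_cast le_trans (le_max_right n₁ n₂) hk
      have h5 : 1 / ((k:ℝ) + 1) ≤ 1 / ((n₂:ℝ) + 1) :=
        one_div_le_one_div_of_le (hNpos n₂) (by linarith)
      linarith
    have h6 := hyg j
    have h7 := hyg k
    linarith
  obtain ⟨z, hz⟩ := cauchySeq_tendsto_of_complete hycauchy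
  have hzD : ∀ n, z ∈ D n := by
    intro n
    refine (hDcl n).mem_of_tendsto hz ?_
    filter_upwards [eventually_ge_atTop n] with k hk
    exact hDanti hk (hyD k)
  have hzK2 : z ∈ K := (hzD 0).1
  have hzB : ‖z‖ ≤ B := le_of_tendsto hz.norm (Eventually.of_forall fun k => hyB k)
  -- g z ≤ m
  have hgzlek : ∀ k : ℕ, g z ≤ g (y k) + (2*M + 4*B + 1) * ‖y k - z‖ := by
    intro k
    have hd0 : (0:ℝ) ≤ ‖y k - z‖ := norm_nonneg _
    have hdB : ‖y k - z‖ ≤ 2*B := le_trans (norm_sub_le _ _) (by linarith [hyB k, hzB])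
    have hpt : ∀ n : ℕ, ‖x n - z‖ ^ 2 ≤ ‖x n - y k‖ ^ 2 + (2*M + 4*B + 1) * ‖y k - z‖ := by
      intro n
      have h1 : ‖x n - z‖ ≤ ‖x n - y k‖ + ‖y k - z‖ := by
        have h0 : x n - z = (x n - y k) + (y k - z) := by abel
        rw [h0]
        exact norm_add_le _ _
      have h2 : ‖x n - y k‖ ≤ M + B := le_trans (norm_sub_le _ _) (by linarith [hM n, hyB k])
      have h1sq : ‖x n - z‖ ^ 2 ≤ (‖x n - y k‖ + ‖y k - z‖) ^ 2 :=
        pow_le_pow_left₀ (norm_nonneg _) h1 2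
      nlinarith [mul_le_mul_of_nonneg_right h2 hd0, mul_le_mul_of_nonneg_right hdB hd0,
        norm_nonneg (x n - y k)]
    have hAvz : ∀ N, Av z N ≤ Av (y k) N + (2*M + 4*B + 1) * ‖y k - z‖ := by
      intro N
      have h4 : ∑ n ∈ Finset.range (N+1), ‖x n - z‖ ^ 2 ≤
          ∑ n ∈ Finset.range (N+1), (‖x n - y k‖ ^ 2 + (2*M + 4*B + 1) * ‖y k - z‖) :=
        Finset.sum_le_sum fun n _ => hpt n
      rw [Finset.sum_add_distrib, Finset.sum_const, Finset.card_range, nsmul_eq_mul] at h4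
      push_cast at h4
      rw [hAveq, hAveq]
      have h5 : (∑ n ∈ Finset.range (N+1), ‖x n - z‖ ^ 2) / ((N:ℝ)+1) ≤
          ((∑ n ∈ Finset.range (N+1), ‖x n - y k‖ ^ 2)
            + ((N:ℝ)+1) * ((2*M + 4*B + 1) * ‖y k - z‖)) / ((N:ℝ)+1) := by
        gcongr
      refine le_trans h5 ?_
      rw [add_div, mul_div_cancel_left₀ _ (hNpos N).ne']
    refine hgle z _ ?_
    intro ε hε
    filter_upwards [hAvlt (y k) ε hε] with N h1
    have h2 := hAvz N
    linarith
  have hnormzero : Tendsto (fun k : ℕ => ‖y k - z‖) atTop (𝓝 0) := by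
    have h1 : Tendsto (fun k => y k - z) atTop (𝓝 (z - z)) := hz.sub_const z
    rw [sub_self] at h1
    simpa using h1.norm
  have hgzm : g z ≤ m := by
    have htend : Tendsto (fun k : ℕ => m + 1 / ((k:ℝ) + 1) + (2*M + 4*B + 1) * ‖y k - z‖)
        atTop (𝓝 (m + 0 + (2*M + 4*B + 1) * 0)) :=
      (tendsto_const_nhds.add tendsto_one_div_add_atTop_nhds_zero_nat).add
        (tendsto_const_nhds.mul hnormzero)
    have h1 := ge_of_tendsto' htend (fun k => by
      have h2 := hgzlek k
      have h3 := hyg k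
      have h4 : (0:ℝ) ≤ (2*M + 4*B + 1) * ‖y k - z‖ := by positivity
      linarith)
    simpa using h1
  have hmgz : ∀ w : E, (∀ n, w ∈ D n) → m ≤ g w := by
    intro w hw
    rw [hmdef]
    refine csSup_le hrne ?_
    rintro t ⟨n, rfl⟩
    rw [hmfeq]
    exact csInf_le (hDbdd n) ⟨w, hw n, rfl⟩
  -- T z is also in every D n
  have hTzD : ∀ n, T z ∈ D n := by
    intro n
    refine ⟨hTK z hzK2, ?_⟩
    cases n with
    | zero =>
      have h1 : T z - x 1 ∈ P := by
        have h2 := Tmono (x 0) (hxK 0) z hzK2 (hzD 0).2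
        rw [← hxs 0] at h2
        exact h2
      have h3 := P_add _ h1 _ (hstep 0)
      rwa [sub_add_sub_cancel] at h3
    | succ k =>
      have h2 := Tmono (x k) (hxK k) z hzK2 (hzD k).2
      rw [← hxs k] at h2
      exact h2
  have hgTzle : g (T z) ≤ g z := hkey z hzK2 (fun n => (hzD n).2)
  -- endgame: T z = z by uniform convexity
  have hTzz : T z = z := by
    by_contra hne
    have hcc : 0 < ‖z - T z‖ := by
      rw [norm_pos_iff, sub_ne_zero]
      exact fun h => hne h.symm
    have hmaxz : ‖z‖ ≤ max ‖z‖ ‖T z‖ := le_max_left _ _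
    have hmaxTz : ‖T z‖ ≤ max ‖z‖ ‖T z‖ := le_max_right _ _
    have hmax0 : (0:ℝ) ≤ max ‖z‖ ‖T z‖ := le_trans (norm_nonneg z) hmaxz
    have hR₂pos : (0:ℝ) < M + max ‖z‖ ‖T z‖ + 1 := by linarith
    obtain ⟨ψ, hψ, hψconv⟩ := hgconv (M + max ‖z‖ ‖T z‖ + 1) ‖z - T z‖ hR₂pos hcc
    have hxz : ∀ n, ‖x n - z‖ ≤ M + max ‖z‖ ‖T z‖ + 1 := fun n =>
      le_trans (norm_sub_le _ _) (by linarith [hM n])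
    have hxTz : ∀ n, ‖x n - T z‖ ≤ M + max ‖z‖ ‖T z‖ + 1 := fun n =>
      le_trans (norm_sub_le _ _) (by linarith [hM n])
    have h2 := hψconv z (T z) hxz hxTz le_rfl
    have hmid : ∀ n, (1/2:ℝ) • z + (1/2:ℝ) • T z ∈ D n :=
      fun n => hDconv n z (hzD n) (T z) (hTzD n)
    have h3 := hmgz _ hmid
    have h4 := hmgz z hzD
    linarith
  refine ⟨z, hzK2, hTzz, ?_⟩
  have h1 := (hzD 0).2
  rwa [hx0] at h1
end

section
/- Let K be a nonempty closed convex subset of a uniformly convex real Banach space E with a partial order ≤ induced by a closed convex cone P, and let T : K → K be a monotone α-nonexpansive mapping for some α < 1. If there exist a fixed point p of T and a point x₀ ∈ K with x₀ ≤ p, then the orbit O(x₀) = {Tⁿx₀ : n = 0, 1, 2, ...} is bounded in norm. -/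
open Filter Topology

/-- If `T` has a fixed point `p` and `x₀ ≤ p`, then the orbit of `x₀` is
norm-bounded. -/
theorem orbit_bounded_of_fixed_point_above
    {E : Type*} [NormedAddCommGroup E] [NormedSpace ℝ E]
    [UniformConvexSpace E] [CompleteSpace E]
    (P : Set E) (hP : IsClosedConvexCone P)
    (K : Set E) (hKne : K.Nonempty) (hKcl : IsClosed K) (hKco : Convex ℝ K)
    (T : E → E) (hTK : ∀ x ∈ K, T x ∈ K)
    (α : ℝ) (hα : α < 1)
    (hT : MonotoneAlphaNonexpansive P K T α)
    (p : E) (hp : p ∈ K) (hfix : T p = p)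
    (x₀ : E) (hx₀ : x₀ ∈ K) (hle : p - x₀ ∈ P) :
    ∃ M : ℝ, ∀ n : ℕ, ‖T^[n] x₀‖ ≤ M := by
  have key : ∀ n : ℕ, T^[n] x₀ ∈ K ∧ p - T^[n] x₀ ∈ P ∧ ‖T^[n] x₀ - p‖ ≤ ‖x₀ - p‖ := by
    intro n
    induction n with
    | zero => exact ⟨hx₀, hle, le_refl _⟩
    | succ n ih =>
      obtain ⟨hmem, hord, hnorm⟩ := ih
      set x := T^[n] x₀ with hx
      have hstep : T^[n+1] x₀ = T x := by
        rw [Function.iterate_succ_apply']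
      have hmem' : T x ∈ K := hTK x hmem
      have hord' : p - T x ∈ P := by
        have := hT.1 x hmem p hp hord
        rwa [hfix] at this
      have hineq := hT.2 x hmem p hp hord
      rw [hfix] at hineq
      have h1 : ‖p - x‖ = ‖x - p‖ := by rw [norm_sub_rev]
      rw [h1] at hineq
      have hsq : ‖T x - p‖ ^ 2 ≤ ‖x - p‖ ^ 2 := by nlinarith
      have hTle : ‖T x - p‖ ≤ ‖x - p‖ :=
        (pow_le_pow_iff_left₀ (norm_nonneg _) (norm_nonneg _) two_ne_zero).mp hsq
      exact ⟨hstep ▸ hmem', hstep ▸ hord', hstep ▸ hTle.trans hnorm⟩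
  refine ⟨‖p‖ + ‖x₀ - p‖, fun n => ?_⟩
  have := (key n).2.2
  calc ‖T^[n] x₀‖ = ‖(T^[n] x₀ - p) + p‖ := by rw [sub_add_cancel]
    _ ≤ ‖T^[n] x₀ - p‖ + ‖p‖ := norm_add_le _ _
    _ ≤ ‖x₀ - p‖ + ‖p‖ := by linarith
    _ = ‖p‖ + ‖x₀ - p‖ := by ring
end

section
/- Let K be a nonempty closed convex subset of a uniformly convex real Banach space E with a partial order ≤ induced by a closed convex cone P, and let T : K → K be a monotone α-nonexpansive mapping for some α < 1. If there exists x₀ ∈ K with Tx₀ ≤ x₀ such that the orbit O(x₀) = {Tⁿx₀ : n = 0, 1, 2, ...} is bounded in norm, then T has a fixed point z ∈ K with z ≤ x₀. -/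
open Filter Topology

noncomputable section PazyAux

/-- Cesàro mean of a real sequence. -/
def pazyCesaro (u : ℕ → ℝ) (n : ℕ) : ℝ := (∑ k ∈ Finset.range (n + 1), u k) / (n + 1)

lemma pazyCesaro_le {u v : ℕ → ℝ} (h : ∀ n, u n ≤ v n) (n : ℕ) :
    pazyCesaro u n ≤ pazyCesaro v n := by
  unfold pazyCesaro
  have hpos : (0:ℝ) < (n:ℝ) + 1 := by positivity
  rw [div_le_div_iff_of_pos_right hpos]
  exact Finset.sum_le_sum fun i _ => h i

lemma pazyCesaro_congr {u v : ℕ → ℝ} (h : ∀ n, u n = v n) (n : ℕ) :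
    pazyCesaro u n = pazyCesaro v n := by
  unfold pazyCesaro
  rw [Finset.sum_congr rfl fun i _ => h i]

lemma pazyCesaro_abs_le {u : ℕ → ℝ} {B : ℝ} (h : ∀ n, |u n| ≤ B) (n : ℕ) :
    |pazyCesaro u n| ≤ B := by
  have hpos : (0:ℝ) < (n:ℝ) + 1 := by positivity
  rw [pazyCesaro, abs_div, abs_of_pos hpos, div_le_iff₀ hpos]
  calc |∑ k ∈ Finset.range (n + 1), u k| ≤ ∑ k ∈ Finset.range (n + 1), |u k| :=
        Finset.abs_sum_le_sum_abs _ _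
    _ ≤ ∑ _k ∈ Finset.range (n + 1), B := Finset.sum_le_sum fun i _ => h i
    _ = B * ((n:ℝ) + 1) := by
        rw [Finset.sum_const, Finset.card_range, nsmul_eq_mul]
        push_cast; ring

lemma pazyCesaro_comb (a1 a2 a3 c : ℝ) (u1 u2 u3 : ℕ → ℝ) (n : ℕ) :
    pazyCesaro (fun k => a1 * u1 k + a2 * u2 k + a3 * u3 k + c) n
      = a1 * pazyCesaro u1 n + a2 * pazyCesaro u2 n + a3 * pazyCesaro u3 n + c := by
  have hpos : ((n:ℝ) + 1) ≠ 0 := by positivity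
  unfold pazyCesaro
  rw [Finset.sum_add_distrib, Finset.sum_add_distrib, Finset.sum_add_distrib,
    ← Finset.mul_sum, ← Finset.mul_sum, ← Finset.mul_sum, Finset.sum_const]
  field_simp
  simp only [Finset.card_range]; push_cast
  ring

lemma pazyCesaro_shift (u : ℕ → ℝ) (n : ℕ) :
    pazyCesaro (fun k => u (k + 1)) n = pazyCesaro u n + (u (n + 1) - u 0) / (n + 1) := by
  have h1 := Finset.sum_range_succ' u (n + 1)
  have h2 := Finset.sum_range_succ u (n + 1)
  have h : ∑ k ∈ Finset.range (n + 1), u (k + 1)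
      = ∑ k ∈ Finset.range (n + 1), u k + u (n + 1) - u 0 := by
    rw [h2] at h1; linarith
  rw [pazyCesaro, pazyCesaro, h]
  ring

lemma pazy_exists_ulim (U : Ultrafilter ℕ) {u : ℕ → ℝ} {B : ℝ} (h : ∀ n, |u n| ≤ B) :
    ∃ L, Tendsto u (U : Filter ℕ) (𝓝 L) := by
  have hle : (U.map u : Filter ℝ) ≤ 𝓟 (Set.Icc (-B) B) := by
    rw [le_principal_iff]
    exact Filter.mem_map.2 (Filter.univ_mem' fun n => abs_le.1 (h n))
  obtain ⟨L, -, hL⟩ := isCompact_Icc.ultrafilter_le_nhds (U.map u) hle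
  exact ⟨L, hL⟩

set_option maxHeartbeats 1000000 in
private lemma pazy_uc_sq_real_aux {a b c ε δ : ℝ} (ha : 0 ≤ a) (hb : 0 ≤ b) (hc : 0 ≤ c)
    (hδ : 0 < δ) (hδ1 : δ ≤ 1) (hε : 0 < ε) (hab : ε ≤ a + b)
    (h1 : c ≤ (a + b) / 2) (h2 : 2 * c ≤ (2 - δ) * a) (hba : b ≤ a) :
    c ^ 2 ≤ (a ^ 2 + b ^ 2) / 2 - min ((ε * δ / 8) ^ 2 / 4) (ε ^ 2 * δ / 16) := by
  set θ := ε * δ / 8 with hθdef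
  have hθ : 0 < θ := by positivity
  have hr : ε / 2 ≤ a := by linarith
  rcases le_or_gt θ (a - b) with h | h
  · have e1 : c ^ 2 ≤ ((a + b) / 2) ^ 2 := pow_le_pow_left₀ hc h1 2
    have hmin : min ((ε * δ / 8) ^ 2 / 4) (ε ^ 2 * δ / 16) ≤ θ ^ 2 / 4 := by
      rw [← hθdef]; exact min_le_left _ _
    nlinarith [mul_self_le_mul_self hθ.le h]
  · have hθa : θ < a := by nlinarith [mul_le_of_le_one_right hε.le hδ1]
    have hs : (0:ℝ) ≤ a - ε / 2 := by linarith
    have e2 : (a - θ) ^ 2 ≤ b ^ 2 := pow_le_pow_left₀ (by linarith) (by linarith) 2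
    have h2' : c ≤ (1 - δ / 2) * a := by linarith
    have e1 : c ^ 2 ≤ ((1 - δ / 2) * a) ^ 2 := pow_le_pow_left₀ hc h2' 2
    have hmin : min ((ε * δ / 8) ^ 2 / 4) (ε ^ 2 * δ / 16) ≤ ε ^ 2 * δ / 16 :=
      min_le_right _ _
    nlinarith [mul_nonneg (mul_nonneg hδ.le (by linarith : (0:ℝ) ≤ 1 - δ/4)) (sq_nonneg (a - ε/2)),
      mul_nonneg (mul_nonneg (mul_nonneg hε.le hδ.le) (by linarith : (0:ℝ) ≤ 7/8 - δ/4)) hs,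
      mul_nonneg (mul_nonneg (mul_nonneg hε.le hε.le) hδ.le) (by linarith : (0:ℝ) ≤ 1/8 - 7*δ/128)]

/-- quantitative "squared midpoint" inequality over the reals -/
lemma pazy_uc_sq_real {a b c ε δ : ℝ} (ha : 0 ≤ a) (hb : 0 ≤ b) (hc : 0 ≤ c)
    (hδ : 0 < δ) (hδ1 : δ ≤ 1) (hε : 0 < ε) (hab : ε ≤ a + b)
    (h1 : c ≤ (a + b) / 2) (h2 : 2 * c ≤ (2 - δ) * max a b) :
    c ^ 2 ≤ (a ^ 2 + b ^ 2) / 2 - min ((ε * δ / 8) ^ 2 / 4) (ε ^ 2 * δ / 16) := by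
  rcases le_total b a with hba | hba
  · rw [max_eq_left hba] at h2
    exact pazy_uc_sq_real_aux ha hb hc hδ hδ1 hε hab h1 h2 hba
  · rw [max_eq_right hba] at h2
    have := pazy_uc_sq_real_aux hb ha hc hδ hδ1 hε (by linarith)
      (by linarith) h2 hba
    linarith

/-- Uniform convexity, squared-midpoint form at scale `R`. -/
lemma pazy_uc_sq {E : Type*} [NormedAddCommGroup E] [NormedSpace ℝ E] [UniformConvexSpace E]
    {ε R : ℝ} (hε : 0 < ε) (hR : 0 < R) :
    ∃ η > 0, ∀ u v : E, ‖u‖ ≤ R → ‖v‖ ≤ R → ε ≤ ‖u - v‖ →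
      ‖(1/2 : ℝ) • (u + v)‖ ^ 2 ≤ (‖u‖ ^ 2 + ‖v‖ ^ 2) / 2 - η := by
  obtain ⟨δ₀, hδ₀, hUC⟩ := exists_forall_closed_ball_dist_add_le_two_sub E (div_pos hε hR)
  set δ := min δ₀ 1 with hδdef
  have hδ : 0 < δ := lt_min hδ₀ one_pos
  have hδ1 : δ ≤ 1 := min_le_right _ _
  refine ⟨min ((ε * δ / 8) ^ 2 / 4) (ε ^ 2 * δ / 16), by positivity, fun u v hu hv huv => ?_⟩
  have hab : ε ≤ ‖u‖ + ‖v‖ := huv.trans (norm_sub_le _ _)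
  have h1 : ‖(1/2 : ℝ) • (u + v)‖ ≤ (‖u‖ + ‖v‖) / 2 := by
    rw [norm_smul]
    have := norm_add_le u v
    rw [Real.norm_eq_abs]
    rw [abs_of_pos (by norm_num : (0:ℝ) < 1/2)]
    linarith
  have hr2 : ε / 2 ≤ max ‖u‖ ‖v‖ := by
    rcases le_total ‖u‖ ‖v‖ with h | h
    · rw [max_eq_right h]; linarith
    · rw [max_eq_left h]; linarith
  set r := max ‖u‖ ‖v‖ with hrdef
  have hr0 : 0 < r := lt_of_lt_of_le (by positivity) hr2
  have hrR : r ≤ R := max_le hu hv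
  have h2 : 2 * ‖(1/2 : ℝ) • (u + v)‖ ≤ (2 - δ) * r := by
    have hx : ‖r⁻¹ • u‖ ≤ 1 := by
      rw [norm_smul, Real.norm_eq_abs, abs_of_pos (inv_pos.2 hr0)]
      rw [inv_mul_le_iff₀ hr0, mul_one]
      rw [hrdef]
      exact le_max_left _ _
    have hy : ‖r⁻¹ • v‖ ≤ 1 := by
      rw [norm_smul, Real.norm_eq_abs, abs_of_pos (inv_pos.2 hr0)]
      rw [inv_mul_le_iff₀ hr0, mul_one]
      rw [hrdef]
      exact le_max_right _ _
    have hxy : ε / R ≤ ‖r⁻¹ • u - r⁻¹ • v‖ := by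
      rw [← smul_sub, norm_smul, Real.norm_eq_abs, abs_of_pos (inv_pos.2 hr0)]
      rw [le_inv_mul_iff₀ hr0]
      calc r * (ε / R) ≤ R * (ε / R) := by
            apply mul_le_mul_of_nonneg_right hrR (by positivity)
        _ = ε := by field_simp
        _ ≤ ‖u - v‖ := huv
    have := hUC hx hy hxy
    rw [← smul_add, norm_smul, Real.norm_eq_abs, abs_of_pos (inv_pos.2 hr0)] at this
    rw [inv_mul_le_iff₀ hr0] at this
    have hnorm : ‖(1/2 : ℝ) • (u + v)‖ = ‖u + v‖ / 2 := by
      rw [norm_smul, Real.norm_eq_abs, abs_of_pos (by norm_num : (0:ℝ) < 1/2)]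
      ring
    rw [hnorm]
    have hδδ₀ : δ ≤ δ₀ := min_le_left _ _
    calc 2 * (‖u + v‖ / 2) = ‖u + v‖ := by ring
      _ ≤ r * (2 - δ₀) := this
      _ ≤ (2 - δ) * r := by nlinarith
  exact pazy_uc_sq_real (norm_nonneg u) (norm_nonneg v) (norm_nonneg _) hδ hδ1 hε hab h1 h2

/-- Nested nonempty bounded closed convex sets in a uniformly convex complete
space have nonempty intersection. -/
lemma pazy_nested_inter {E : Type*} [NormedAddCommGroup E] [NormedSpace ℝ E]
    [UniformConvexSpace E] [CompleteSpace E]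
    (C : ℕ → Set E) (hne : ∀ n, (C n).Nonempty) (hcl : ∀ n, IsClosed (C n))
    (hcv : ∀ n, Convex ℝ (C n)) (hnest : ∀ n, C (n + 1) ⊆ C n)
    {R : ℝ} (hb : ∀ n, ∀ y ∈ C n, ‖y‖ ≤ R) :
    (⋂ n, C n).Nonempty := by
  have hanti : Antitone C := antitone_nat_of_succ_le hnest
  have hR0 : 0 ≤ R := by
    obtain ⟨y, hy⟩ := hne 0
    exact (norm_nonneg y).trans (hb 0 y hy)
  set d : ℕ → ℝ := fun n => Metric.infDist 0 (C n) with hddef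
  have hd0 : ∀ n, 0 ≤ d n := fun n => Metric.infDist_nonneg
  have hdR : ∀ n, d n ≤ R := by
    intro n
    obtain ⟨y, hy⟩ := hne n
    calc d n ≤ dist 0 y := Metric.infDist_le_dist_of_mem hy
      _ = ‖y‖ := by rw [dist_zero_left]
      _ ≤ R := hb n y hy
  have hdmono : Monotone d := fun n m h =>
    Metric.infDist_le_infDist_of_subset (hanti h) (hne m)
  have hbddA : BddAbove (Set.range d) := ⟨R, by rintro _ ⟨n, rfl⟩; exact hdR n⟩
  set L := ⨆ n, d n with hLdef
  have hdle : ∀ n, d n ≤ L := fun n => le_ciSup hbddA n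
  have hdtend : Tendsto d atTop (𝓝 L) := tendsto_atTop_ciSup hdmono hbddA
  have hLR : L ≤ R := ciSup_le hdR
  have hL0 : 0 ≤ L := (hd0 0).trans (hdle 0)
  have hex : ∀ n, ∃ y ∈ C n, dist 0 y < d n + 1 / (n + 1) := by
    intro n
    refine (Metric.infDist_lt_iff (hne n)).1 ?_
    have h0 : Metric.infDist 0 (C n) = d n := rfl
    have : (0:ℝ) < 1 / ((n:ℝ) + 1) := by positivity
    rw [h0]
    linarith
  choose p hpC hpd using hex
  have hpnorm : ∀ n, ‖p n‖ < d n + 1 / (n + 1) := by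
    intro n
    rw [← dist_zero_left]
    exact hpd n
  have hcauchy : CauchySeq p := by
    rw [Metric.cauchySeq_iff]
    intro ε hε
    obtain ⟨η, hη, hkey⟩ := pazy_uc_sq (E := E) hε (show (0:ℝ) < R + 1 by linarith)
    obtain ⟨N1, hN1⟩ : ∃ N : ℕ, ∀ n ≥ N, L ^ 2 - d n ^ 2 < η / 2 := by
      have hτ : (0:ℝ) < η / (2 * (2 * R + 1)) := by positivity
      obtain ⟨N, hN⟩ := (Metric.tendsto_atTop.1 hdtend _ hτ)
      refine ⟨N, fun n hn => ?_⟩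
      have h1 := hN n hn
      rw [Real.dist_eq, abs_lt] at h1
      have h2 : L - d n < η / (2 * (2 * R + 1)) := by linarith [h1.1]
      have h4 : 0 ≤ (L - d n) * (2 * R + 1 - L - d n) :=
        mul_nonneg (by linarith [hdle n]) (by linarith [hd0 n, hLR, hdR n])
      have h5 : (L - d n) * (2 * R + 1) < (η / (2 * (2 * R + 1))) * (2 * R + 1) :=
        mul_lt_mul_of_pos_right h2 (by linarith)
      have h6 : (η / (2 * (2 * R + 1))) * (2 * R + 1) = η / 2 := by field_simp
      nlinarith [hd0 n, hdle n]
    obtain ⟨N2, hN2⟩ : ∃ N : ℕ, ∀ n ≥ N, (1:ℝ) / (n + 1) ≤ η / (4 * (2 * R + 2)) := by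
      obtain ⟨N, hN⟩ := exists_nat_one_div_lt (show (0:ℝ) < η / (4 * (2 * R + 2)) by positivity)
      refine ⟨N, fun n hn => ?_⟩
      refine le_trans ?_ hN.le
      apply one_div_le_one_div_of_le (by positivity)
      exact_mod_cast by exact_mod_cast Nat.add_le_add_right hn 1
    refine ⟨max N1 N2, fun m hm n hn => ?_⟩
    by_contra hcon
    push_neg at hcon
    rw [dist_eq_norm] at hcon
    have hpsq : ∀ j, j ≥ N2 → ‖p j‖ ^ 2 ≤ d j ^ 2 + η / 4 := by
      intro j hj
      have h1 := hpnorm j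
      have h2 : (0:ℝ) < 1 / ((j:ℝ) + 1) := by positivity
      have h3 : (1:ℝ) / ((j:ℝ) + 1) ≤ 1 := by
        rw [div_le_one (by positivity)]
        have : (0:ℝ) ≤ (j:ℝ) := Nat.cast_nonneg j
        linarith
      have h4 := hN2 j hj
      have h5 : η / (4 * (2 * R + 2)) * (2 * R + 2) = η / 4 := by field_simp
      nlinarith [hd0 j, hdR j, norm_nonneg (p j)]
    set k := min m n with hkdef
    have hpmk : p m ∈ C k := hanti (min_le_left m n) (hpC m)
    have hpnk : p n ∈ C k := hanti (min_le_right m n) (hpC n)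
    have hmidmem : (1/2 : ℝ) • p m + (1/2 : ℝ) • p n ∈ C k :=
      hcv k hpmk hpnk (by norm_num) (by norm_num) (by norm_num)
    have hdk : d k ≤ ‖(1/2 : ℝ) • (p m + p n)‖ := by
      rw [smul_add]
      calc d k ≤ dist 0 ((1/2 : ℝ) • p m + (1/2 : ℝ) • p n) :=
            Metric.infDist_le_dist_of_mem hmidmem
        _ = ‖(1/2 : ℝ) • p m + (1/2 : ℝ) • p n‖ := by rw [dist_zero_left]
    have hub : ∀ j, ‖p j‖ ≤ R + 1 := fun j => ((hb j (p j) (hpC j))).trans (by linarith)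
    have hmid := hkey (p m) (p n) (hub m) (hub n) hcon
    have hm2 := hpsq m (le_trans (le_max_right N1 N2) hm)
    have hn2 := hpsq n (le_trans (le_max_right N1 N2) hn)
    have hk1 : k ≥ N1 := le_trans (le_max_left N1 N2) (le_min hm hn)
    have hdk2 := hN1 k hk1
    have hdmL : d m ≤ L := hdle m
    have hdnL : d n ≤ L := hdle n
    have hdsq : d k ^ 2 ≤ ‖(1/2 : ℝ) • (p m + p n)‖ ^ 2 := by
      have := hd0 k
      nlinarith
    nlinarith [hd0 m, hd0 n, hL0]
  obtain ⟨q, hq⟩ := cauchySeq_tendsto_of_complete hcauchy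
  refine ⟨q, Set.mem_iInter.2 fun n => ?_⟩
  refine (hcl n).mem_of_tendsto hq ?_
  filter_upwards [eventually_ge_atTop n] with m hm
  exact hanti hm (hpC m)

end PazyAux

/-- Pazy-type fixed point theorem: if `T x₀ ≤ x₀` and the orbit of `x₀` is
norm-bounded, then `T` has a fixed point `z` with `z ≤ x₀`. -/
theorem pazy_fixed_point_decreasing
    {E : Type*} [NormedAddCommGroup E] [NormedSpace ℝ E]
    [UniformConvexSpace E] [CompleteSpace E]
    (P : Set E) (hP : IsClosedConvexCone P)
    (K : Set E) (hKne : K.Nonempty) (hKcl : IsClosed K) (hKco : Convex ℝ K)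
    (T : E → E) (hTK : ∀ x ∈ K, T x ∈ K)
    (α : ℝ) (hα : α < 1)
    (hT : MonotoneAlphaNonexpansive P K T α)
    (x₀ : E) (hx₀ : x₀ ∈ K) (hdec : x₀ - T x₀ ∈ P)
    (hbdd : ∃ M : ℝ, ∀ n : ℕ, ‖T^[n] x₀‖ ≤ M) :
    ∃ z ∈ K, T z = z ∧ x₀ - z ∈ P := by
  classical
  obtain ⟨M, hM⟩ := hbdd
  set x : ℕ → E := fun n => T^[n] x₀ with hxdef
  have hM' : ∀ n, ‖x n‖ ≤ M := hM
  have hM0 : 0 ≤ M := (norm_nonneg (x 0)).trans (hM' 0)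
  have hx0 : x 0 = x₀ := rfl
  have hxsucc : ∀ n, x (n + 1) = T (x n) := fun n => Function.iterate_succ_apply' T n x₀
  have hxK : ∀ n, x n ∈ K := by
    intro n
    induction n with
    | zero => exact hx₀
    | succ n ih => rw [hxsucc]; exact hTK _ ih
  have hPadd : ∀ {u v : E}, u ∈ P → v ∈ P → u + v ∈ P := by
    intro u v hu hv
    have := hP.2.2.2.2 u hu v hv 1 1 zero_le_one zero_le_one
    simpa using this
  have hP0 : (0 : E) ∈ P := by
    obtain ⟨w, hw⟩ := hP.1
    have := hP.2.2.2.2 w hw w hw 0 0 le_rfl le_rfl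
    simpa using this
  have hstep : ∀ n, x n - x (n + 1) ∈ P := by
    intro n
    induction n with
    | zero => rw [hxsucc 0, hx0]; exact hdec
    | succ n ih =>
        have := hT.1 (x (n + 1)) (hxK (n + 1)) (x n) (hxK n) ih
        rwa [← hxsucc n, ← hxsucc (n + 1)] at this
  have hchain : ∀ n m, n ≤ m → x n - x m ∈ P := by
    intro n m h
    induction h with
    | refl => simpa using hP0
    | @step m hm ih =>
        have := hPadd ih (hstep m)
        rwa [sub_add_sub_cancel] at this
  -- an affine splitting identity used repeatedly
  have hsplit : ∀ (c y y' : E) (a b : ℝ), a + b = 1 →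
      c - (a • y + b • y') = a • (c - y) + b • (c - y') := by
    intro c y y' a b hab1
    have h1 : a • (c - y) + b • (c - y') = (a + b) • c - (a • y + b • y') := by
      rw [smul_sub, smul_sub, add_smul]
      abel
    rw [h1, hab1, one_smul]
  -- the ultrafilter and the asymptotic-radius-type function Φ
  set U : Ultrafilter ℕ := Ultrafilter.of atTop with hUdef
  have hUle : (U : Filter ℕ) ≤ atTop := Ultrafilter.of_le _
  have hB : ∀ (y : E) (n : ℕ), |‖x n - y‖ ^ 2| ≤ (M + ‖y‖) ^ 2 := by
    intro y n
    rw [abs_of_nonneg (by positivity)]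
    have h1 : ‖x n - y‖ ≤ M + ‖y‖ := (norm_sub_le _ _).trans (by linarith [hM' n])
    exact pow_le_pow_left₀ (norm_nonneg _) h1 2
  set Φ : E → ℝ := fun y => limUnder (U : Filter ℕ) (pazyCesaro (fun n => ‖x n - y‖ ^ 2))
    with hΦdef
  have hΦt : ∀ y : E, Tendsto (pazyCesaro (fun n => ‖x n - y‖ ^ 2)) (U : Filter ℕ)
      (𝓝 (Φ y)) := by
    intro y
    obtain ⟨L, hL⟩ := pazy_exists_ulim U (pazyCesaro_abs_le (hB y))
    have : Φ y = L := hL.limUnder_eq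
    rw [this]
    exact hL
  have hshiftt : ∀ (u : ℕ → ℝ) (B : ℝ), (∀ n, |u n| ≤ B) → ∀ {L : ℝ},
      Tendsto (pazyCesaro u) (U : Filter ℕ) (𝓝 L) →
      Tendsto (pazyCesaro (fun n => u (n + 1))) (U : Filter ℕ) (𝓝 L) := by
    intro u B hBu L hL
    have h0 : Tendsto (fun n : ℕ => (u (n + 1) - u 0) / (n + 1)) atTop (𝓝 0) := by
      apply squeeze_zero_norm (a := fun n : ℕ => 2 * B / (n + 1))
      · intro n
        rw [Real.norm_eq_abs, abs_div, abs_of_pos (by positivity : (0:ℝ) < (n:ℝ) + 1)]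
        have h1 : |u (n + 1) - u 0| ≤ 2 * B := by
          have := hBu (n + 1); have := hBu 0
          rw [abs_sub_le_iff]
          constructor <;> [skip; skip] <;>
            · have h1 := abs_le.1 (hBu (n+1)); have h2 := abs_le.1 (hBu 0); linarith [h1.1, h1.2, h2.1, h2.2]
        have hpos : (0:ℝ) < (n:ℝ) + 1 := by positivity
        exact (div_le_div_iff_of_pos_right hpos).2 h1
      · have h2 : Tendsto (fun n : ℕ => 2 * B / ((n : ℝ) + 1)) atTop (𝓝 0) := by
          have := (tendsto_const_div_atTop_nhds_zero_nat (2 * B)).comp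
            (tendsto_add_atTop_nat 1)
          have heq : ∀ n : ℕ, ((fun n : ℕ => 2 * B / (n : ℝ)) ∘ fun a => a + 1) n
              = 2 * B / ((n : ℝ) + 1) := by
            intro n
            simp only [Function.comp]
            push_cast
            ring
          exact this.congr heq
        exact h2
    have := hL.add (h0.mono_left hUle)
    rw [add_zero] at this
    exact this.congr fun n => (pazyCesaro_shift u n).symm
  -- the order interval set C'
  set C' : Set E := {y | y ∈ K ∧ ∀ n, x n - y ∈ P} with hC'def
  have hPconv : Convex ℝ P := fun u hu v hv a b ha hb _ => hP.2.2.2.2 u hu v hv a b ha hb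
  have hC'cv : Convex ℝ C' := by
    intro y hy y' hy' a b ha hb hab
    refine ⟨hKco hy.1 hy'.1 ha hb hab, fun n => ?_⟩
    rw [hsplit (x n) y y' a b hab]
    exact hP.2.2.2.2 _ (hy.2 n) _ (hy'.2 n) a b ha hb
  have hC'cl : IsClosed C' := by
    have : C' = K ∩ ⋂ n, (fun y => x n - y) ⁻¹' P := by
      ext y; simp [hC'def, Set.mem_iInter]
    rw [this]
    exact hKcl.inter (isClosed_iInter fun n =>
      (hP.2.1).preimage (continuous_const.sub continuous_id))
  have hC'ne : C'.Nonempty := by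
    set F : ℕ → Set E := fun n => (K ∩ (fun y => x n - y) ⁻¹' P) ∩ Metric.closedBall 0 M
      with hFdef
    have hFne : ∀ n, (F n).Nonempty := by
      intro n
      refine ⟨x n, ⟨hxK n, ?_⟩, ?_⟩
      · simpa using hP0
      · rw [Metric.mem_closedBall, dist_zero_right]; exact hM' n
    have hFcl : ∀ n, IsClosed (F n) := fun n =>
      (hKcl.inter ((hP.2.1).preimage (continuous_const.sub continuous_id))).inter
        Metric.isClosed_closedBall
    have hFcv : ∀ n, Convex ℝ (F n) := by
      intro n
      refine (hKco.inter ?_).inter (convex_closedBall 0 M)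
      intro y hy y' hy' a b ha hb hab
      have : x n - (a • y + b • y') = a • (x n - y) + b • (x n - y') := hsplit _ _ _ _ _ hab
      simp only [Set.mem_preimage] at *
      rw [this]
      exact hP.2.2.2.2 _ hy _ hy' a b ha hb
    have hFnest : ∀ n, F (n + 1) ⊆ F n := by
      rintro n y ⟨⟨hyK, hyP⟩, hyB⟩
      refine ⟨⟨hyK, ?_⟩, hyB⟩
      simp only [Set.mem_preimage] at *
      have := hPadd (hstep n) hyP
      rwa [sub_add_sub_cancel] at this
    have hFb : ∀ n, ∀ y ∈ F n, ‖y‖ ≤ M := by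
      rintro n y ⟨-, hyB⟩
      rwa [Metric.mem_closedBall, dist_zero_right] at hyB
    obtain ⟨w, hw⟩ := pazy_nested_inter F hFne hFcl hFcv hFnest hFb
    have hw' := Set.mem_iInter.1 hw
    exact ⟨w, (hw' 0).1.1, fun n => (hw' n).1.2⟩
  -- infimum of Φ over C'
  have hconstc : ∀ (c : ℝ) (n : ℕ), pazyCesaro (fun _ : ℕ => c) n = c := by
    intro c n
    rw [pazyCesaro, Finset.sum_const, Finset.card_range, nsmul_eq_mul]
    have : ((n:ℝ) + 1) ≠ 0 := by positivity
    push_cast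
    field_simp
  have hΦ0 : ∀ y, 0 ≤ Φ y := by
    intro y
    have hzero : Tendsto (pazyCesaro (fun _ : ℕ => (0:ℝ))) (U : Filter ℕ) (𝓝 0) :=
      tendsto_const_nhds.congr fun n => (hconstc 0 n).symm
    exact le_of_tendsto_of_tendsto' hzero (hΦt y) (pazyCesaro_le fun n => by positivity)
  set m := sInf (Φ '' C') with hmdef
  have himne : (Φ '' C').Nonempty := hC'ne.image Φ
  have hbel : BddBelow (Φ '' C') := ⟨0, by rintro _ ⟨y, -, rfl⟩; exact hΦ0 y⟩
  have hmle : ∀ y ∈ C', m ≤ Φ y := fun y hy => csInf_le hbel ⟨y, hy, rfl⟩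
  have hm0 : 0 ≤ m := le_csInf himne (by rintro _ ⟨y, -, rfl⟩; exact hΦ0 y)
  -- Φ is convex
  have hΦconv : ∀ (y y' : E) (a b : ℝ), 0 ≤ a → 0 ≤ b → a + b = 1 →
      Φ (a • y + b • y') ≤ a * Φ y + b * Φ y' := by
    intro y y' a b ha hb hab
    have hpt : ∀ n, ‖x n - (a • y + b • y')‖ ^ 2
        ≤ a * ‖x n - y‖ ^ 2 + b * ‖x n - y'‖ ^ 2 := by
      intro n
      have h1 : ‖x n - (a • y + b • y')‖ ≤ a * ‖x n - y‖ + b * ‖x n - y'‖ := by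
        rw [hsplit (x n) y y' a b hab]
        refine (norm_add_le _ _).trans ?_
        rw [norm_smul, norm_smul, Real.norm_eq_abs, Real.norm_eq_abs,
          abs_of_nonneg ha, abs_of_nonneg hb]
      have h2 : (a * ‖x n - y‖ + b * ‖x n - y'‖) ^ 2
          ≤ a * ‖x n - y‖ ^ 2 + b * ‖x n - y'‖ ^ 2 := by
        nlinarith [mul_nonneg ha hb, sq_nonneg (‖x n - y‖ - ‖x n - y'‖),
          norm_nonneg (x n - y), norm_nonneg (x n - y')]
      calc ‖x n - (a • y + b • y')‖ ^ 2 ≤ (a * ‖x n - y‖ + b * ‖x n - y'‖) ^ 2 :=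
            pow_le_pow_left₀ (norm_nonneg _) h1 2
        _ ≤ _ := h2
    have hRHS : Tendsto (pazyCesaro (fun n => a * ‖x n - y‖ ^ 2 + b * ‖x n - y'‖ ^ 2 +
        0 * ‖x n - y‖ ^ 2 + 0)) (U : Filter ℕ) (𝓝 (a * Φ y + b * Φ y')) := by
      have h := (((hΦt y).const_mul a).add ((hΦt y').const_mul b)).add
        (((hΦt y).const_mul 0).add
          (tendsto_const_nhds : Tendsto (fun _ : ℕ => (0:ℝ)) (U : Filter ℕ) (𝓝 0)))
      have heq : a * Φ y + b * Φ y' + (0 * Φ y + 0) = a * Φ y + b * Φ y' := by ring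
      rw [heq] at h
      refine h.congr fun n => ?_
      rw [pazyCesaro_comb a b 0 0]
      ring
    have hle := le_of_tendsto_of_tendsto' (hΦt (a • y + b • y')) hRHS
      (pazyCesaro_le fun n => by have := hpt n; linarith)
    exact hle
  -- Φ is continuous
  have hΦlip : ∀ y y' : E, Φ y ≤ Φ y' + (2 * M + ‖y‖ + ‖y'‖) * ‖y - y'‖ := by
    intro y y'
    set c := (2 * M + ‖y‖ + ‖y'‖) * ‖y - y'‖ with hcdef
    have hpt : ∀ n, ‖x n - y‖ ^ 2 ≤ ‖x n - y'‖ ^ 2 + c := by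
      intro n
      have h1 : ‖x n - y‖ ≤ ‖x n - y'‖ + ‖y - y'‖ := by
        have he : x n - y = (x n - y') + (y' - y) := by abel
        rw [he]
        refine (norm_add_le _ _).trans ?_
        rw [norm_sub_rev y' y]
      have h2 : ‖x n - y‖ + ‖x n - y'‖ ≤ 2 * M + ‖y‖ + ‖y'‖ := by
        have := norm_sub_le (x n) y
        have := norm_sub_le (x n) y'
        have := hM' n
        linarith
      rcases le_total ‖x n - y‖ ‖x n - y'‖ with h | h
      · have : ‖x n - y‖ ^ 2 ≤ ‖x n - y'‖ ^ 2 := pow_le_pow_left₀ (norm_nonneg _) h 2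
        have hc0 : 0 ≤ c := by
          rw [hcdef]
          have := hM' 0
          positivity
        linarith
      · nlinarith [norm_nonneg (y - y'), norm_nonneg (x n - y'), norm_nonneg (x n - y)]
    have hRHS : Tendsto (pazyCesaro (fun n => ‖x n - y'‖ ^ 2 + c)) (U : Filter ℕ)
        (𝓝 (Φ y' + c)) := by
      have h := (hΦt y').add
        (tendsto_const_nhds : Tendsto (fun _ : ℕ => c) (U : Filter ℕ) (𝓝 c))
      refine h.congr fun n => ?_
      have hcomb := pazyCesaro_comb 1 0 0 c (fun k => ‖x k - y'‖ ^ 2)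
        (fun _ => (0:ℝ)) (fun _ => (0:ℝ)) n
      have he := pazyCesaro_congr
        (u := fun k => 1 * ‖x k - y'‖ ^ 2 + 0 * 0 + 0 * 0 + c)
        (v := fun k => ‖x k - y'‖ ^ 2 + c) (fun k => by ring) n
      rw [← he, hcomb]
      ring
    exact le_of_tendsto_of_tendsto' (hΦt y) hRHS (pazyCesaro_le hpt)
  have hΦcont : Continuous Φ := by
    rw [continuous_iff_continuousAt]
    intro y₀
    rw [ContinuousAt, tendsto_iff_dist_tendsto_zero]
    have hbnd : ∀ y : E, dist (Φ y) (Φ y₀) ≤ (2 * M + ‖y‖ + ‖y₀‖) * ‖y - y₀‖ := by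
      intro y
      rw [Real.dist_eq, abs_sub_le_iff]
      constructor
      · have := hΦlip y y₀; linarith
      · have := hΦlip y₀ y
        rw [norm_sub_rev] at this
        have he : 2 * M + ‖y₀‖ + ‖y‖ = 2 * M + ‖y‖ + ‖y₀‖ := by ring
        rw [he] at this
        linarith
    have hg : Tendsto (fun y : E => (2 * M + ‖y‖ + ‖y₀‖) * ‖y - y₀‖) (𝓝 y₀) (𝓝 0) := by
      have hcont : Continuous (fun y : E => (2 * M + ‖y‖ + ‖y₀‖) * ‖y - y₀‖) := by
        fun_prop
      have := hcont.tendsto y₀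
      simpa using this
    exact squeeze_zero (fun y => dist_nonneg) hbnd hg
  -- the minimizing sets D k
  set D : ℕ → Set E := fun k => C' ∩ {y | Φ y ≤ m + 1 / (k + 1)} with hDdef
  have hDne : ∀ k, (D k).Nonempty := by
    intro k
    have hlt : m < m + 1 / ((k:ℝ) + 1) := by
      have : (0:ℝ) < 1 / ((k:ℝ) + 1) := by positivity
      linarith
    obtain ⟨_, ⟨y, hyC, rfl⟩, hy⟩ := exists_lt_of_csInf_lt himne hlt
    exact ⟨y, hyC, hy.le⟩
  have hDcl : ∀ k, IsClosed (D k) :=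
    fun k => hC'cl.inter (isClosed_le hΦcont continuous_const)
  have hDcv : ∀ k, Convex ℝ (D k) := by
    intro k
    intro y hy y' hy' a b ha hb hab
    refine ⟨hC'cv hy.1 hy'.1 ha hb hab, ?_⟩
    have h1 := hΦconv y y' a b ha hb hab
    have h2 : a * Φ y + b * Φ y' ≤ m + 1 / ((k:ℝ) + 1) := by
      have hy2 := hy.2
      have hy'2 := hy'.2
      simp only [Set.mem_setOf_eq] at hy2 hy'2
      calc a * Φ y + b * Φ y' ≤ a * (m + 1 / ((k:ℝ) + 1)) + b * (m + 1 / ((k:ℝ) + 1)) := by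
            have := mul_le_mul_of_nonneg_left hy2 ha
            have := mul_le_mul_of_nonneg_left hy'2 hb
            linarith
        _ = m + 1 / ((k:ℝ) + 1) := by rw [← add_mul, hab, one_mul]
    exact Set.mem_setOf_eq ▸ h1.trans h2
  have hDnest : ∀ k, D (k + 1) ⊆ D k := by
    rintro k y ⟨hyC, hyΦ⟩
    refine ⟨hyC, ?_⟩
    simp only [Set.mem_setOf_eq] at hyΦ ⊢
    have : (1:ℝ) / ((k:ℝ) + 1 + 1) ≤ 1 / ((k:ℝ) + 1) := by
      apply one_div_le_one_div_of_le (by positivity)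
      linarith
    push_cast at hyΦ ⊢
    linarith
  have hDb : ∀ k, ∀ y ∈ D k, ‖y‖ ≤ M + Real.sqrt (m + 2) := by
    rintro k y ⟨hyC, hyΦ⟩
    simp only [Set.mem_setOf_eq] at hyΦ
    by_contra hcon
    push_neg at hcon
    have hs0 : 0 ≤ Real.sqrt (m + 2) := Real.sqrt_nonneg _
    have h1 : ∀ n, Real.sqrt (m + 2) < ‖x n - y‖ := by
      intro n
      have h2 : ‖y‖ - ‖x n‖ ≤ ‖x n - y‖ := by
        have := norm_sub_norm_le y (x n)
        rwa [norm_sub_rev y (x n)] at this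
      have := hM' n
      linarith
    have hpt : ∀ n, m + 2 ≤ ‖x n - y‖ ^ 2 := by
      intro n
      have h3 : Real.sqrt (m + 2) ^ 2 ≤ ‖x n - y‖ ^ 2 :=
        pow_le_pow_left₀ hs0 (h1 n).le 2
      rwa [Real.sq_sqrt (by linarith : (0:ℝ) ≤ m + 2)] at h3
    have hconstt : Tendsto (pazyCesaro (fun _ : ℕ => m + 2)) (U : Filter ℕ) (𝓝 (m + 2)) :=
      tendsto_const_nhds.congr fun n => (hconstc (m + 2) n).symm
    have h4 : m + 2 ≤ Φ y := le_of_tendsto_of_tendsto' hconstt (hΦt y) (pazyCesaro_le hpt)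
    have h5 : (1:ℝ) / ((k:ℝ) + 1) ≤ 1 := by
      rw [div_le_one (by positivity)]
      have : (0:ℝ) ≤ (k:ℝ) := Nat.cast_nonneg k
      linarith
    linarith
  -- get the minimizer z
  obtain ⟨z, hz⟩ := pazy_nested_inter D hDne hDcl hDcv hDnest hDb
  have hz' := Set.mem_iInter.1 hz
  have hzC' : z ∈ C' := (hz' 0).1
  have hzΦ : Φ z = m := by
    refine le_antisymm ?_ (hmle z hzC')
    refine le_of_forall_pos_le_add fun ε hε => ?_
    obtain ⟨k, hk⟩ := exists_nat_one_div_lt hε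
    have := (hz' k).2
    simp only [Set.mem_setOf_eq] at this
    linarith
  -- T z also lies in C' and minimizes Φ
  have hzK : z ∈ K := hzC'.1
  have hTzK : T z ∈ K := hTK z hzK
  have hTzP : ∀ n, x n - T z ∈ P := by
    have hsucc' : ∀ n, x (n + 1) - T z ∈ P := by
      intro n
      have := hT.1 z hzK (x n) (hxK n) (hzC'.2 n)
      rwa [← hxsucc n] at this
    intro n
    cases n with
    | zero =>
        have := hPadd (hstep 0) (hsucc' 0)
        rwa [sub_add_sub_cancel] at this
    | succ n => exact hsucc' n
  have hTzC' : T z ∈ C' := ⟨hTzK, hTzP⟩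
  have hkey : ∀ n, ‖x (n + 1) - T z‖ ^ 2 ≤ α * ‖x n - T z‖ ^ 2 +
      α * ‖x (n + 1) - z‖ ^ 2 + (1 - 2 * α) * ‖x n - z‖ ^ 2 := by
    intro n
    have h := hT.2 z hzK (x n) (hxK n) (hzC'.2 n)
    rw [← hxsucc n] at h
    rwa [norm_sub_rev (T z) (x (n + 1)), norm_sub_rev (T z) (x n),
      norm_sub_rev z (x n)] at h
  have hΦTz : Φ (T z) ≤ Φ z := by
    have hb := hΦt (T z)
    have hd := hΦt z
    have hbs := hshiftt _ _ (hB (T z)) hb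
    have hds := hshiftt _ _ (hB z) hd
    have hRHS : Tendsto (pazyCesaro (fun n => α * ‖x n - T z‖ ^ 2 +
        α * ‖x (n + 1) - z‖ ^ 2 + (1 - 2 * α) * ‖x n - z‖ ^ 2 + 0)) (U : Filter ℕ)
        (𝓝 (α * Φ (T z) + α * Φ z + (1 - 2 * α) * Φ z)) := by
      have h := ((hb.const_mul α).add (hds.const_mul α)).add (hd.const_mul (1 - 2 * α))
      have h' := h.add
        (tendsto_const_nhds : Tendsto (fun _ : ℕ => (0:ℝ)) (U : Filter ℕ) (𝓝 0))
      rw [add_zero] at h'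
      refine h'.congr fun n => ?_
      rw [pazyCesaro_comb α α (1 - 2 * α) 0]
    have h1 := le_of_tendsto_of_tendsto' hbs hRHS
      (pazyCesaro_le fun n => by have := hkey n; linarith)
    have h2 : (1 - α) * Φ (T z) ≤ (1 - α) * Φ z := by linarith
    exact le_of_mul_le_mul_left h2 (by linarith)
  have hΦTzm : Φ (T z) = m := le_antisymm (hΦTz.trans_eq hzΦ) (hmle _ hTzC')
  -- conclude T z = z by uniform convexity
  have hTz : T z = z := by
    by_contra hne
    have hεpos : 0 < ‖T z - z‖ := by
      rw [norm_pos_iff, sub_ne_zero]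
      exact hne
    have hR2 : (0:ℝ) < M + ‖z‖ + ‖T z‖ + 1 := by
      have := norm_nonneg z; have := norm_nonneg (T z); linarith
    obtain ⟨η, hη, hkey2⟩ := pazy_uc_sq (E := E) hεpos hR2
    set mid := (1/2 : ℝ) • z + (1/2 : ℝ) • T z with hmiddef
    have hmidC' : mid ∈ C' := hC'cv hzC' hTzC' (by norm_num) (by norm_num) (by norm_num)
    have hpt : ∀ n, ‖x n - mid‖ ^ 2 ≤
        (1/2) * ‖x n - z‖ ^ 2 + (1/2) * ‖x n - T z‖ ^ 2 + 0 * ‖x n - z‖ ^ 2 + (-η) := by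
      intro n
      have h1 := hkey2 (x n - z) (x n - T z)
        (by have := norm_sub_le (x n) z; have := hM' n; have := norm_nonneg (T z); linarith)
        (by have := norm_sub_le (x n) (T z); have := hM' n; have := norm_nonneg z; linarith)
        (by rw [show x n - z - (x n - T z) = T z - z by abel])
      have h2 : (1/2 : ℝ) • (x n - z + (x n - T z)) = x n - mid := by
        rw [hmiddef, hsplit (x n) z (T z) (1/2) (1/2) (by norm_num)]
        rw [smul_add]
      rw [h2] at h1
      linarith
    have hRHS : Tendsto (pazyCesaro (fun n => (1/2) * ‖x n - z‖ ^ 2 +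
        (1/2) * ‖x n - T z‖ ^ 2 + 0 * ‖x n - z‖ ^ 2 + (-η))) (U : Filter ℕ)
        (𝓝 ((1/2) * Φ z + (1/2) * Φ (T z) + 0 * Φ z + (-η))) := by
      have h := (((hΦt z).const_mul (1/2)).add ((hΦt (T z)).const_mul (1/2))).add
        (((hΦt z).const_mul 0).add
          (tendsto_const_nhds : Tendsto (fun _ : ℕ => (-η : ℝ)) (U : Filter ℕ) (𝓝 (-η))))
      have heq : (1/2) * Φ z + (1/2) * Φ (T z) + (0 * Φ z + -η)
          = (1/2) * Φ z + (1/2) * Φ (T z) + 0 * Φ z + (-η) := by ring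
      rw [heq] at h
      refine h.congr fun n => ?_
      rw [pazyCesaro_comb (1/2) (1/2) 0 (-η)]
      ring
    have h3 := le_of_tendsto_of_tendsto' (hΦt mid) hRHS (pazyCesaro_le hpt)
    rw [hzΦ, hΦTzm] at h3
    have h4 := hmle mid hmidC'
    have h5 : (1:ℝ)/2 * m + 1/2 * m + 0 * m + (-η) = m - η := by ring
    rw [h5] at h3
    linarith
  exact ⟨z, hzK, hTz, by have := hzC'.2 0; rwa [hx0] at this⟩
end

section
/- Let K be a nonempty closed convex subset of a uniformly convex real Banach space E with a partial order ≤ induced by a closed convex cone P, and let T : K → K be a monotone α-nonexpansive mapping for some α < 1. If there exist a fixed point p of T and a point x₀ ∈ K with p ≤ x₀, then the orbit O(x₀) = {Tⁿx₀ : n = 0, 1, 2, ...} is bounded in norm. -/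
open Filter Topology

/-- If `T` has a fixed point `p` and `p ≤ x₀`, then the orbit of `x₀` is
norm-bounded. -/
theorem orbit_bounded_of_fixed_point_below
    {E : Type*} [NormedAddCommGroup E] [NormedSpace ℝ E]
    [UniformConvexSpace E] [CompleteSpace E]
    (P : Set E) (hP : IsClosedConvexCone P)
    (K : Set E) (hKne : K.Nonempty) (hKcl : IsClosed K) (hKco : Convex ℝ K)
    (T : E → E) (hTK : ∀ x ∈ K, T x ∈ K)
    (α : ℝ) (hα : α < 1)
    (hT : MonotoneAlphaNonexpansive P K T α)
    (p : E) (hp : p ∈ K) (hfix : T p = p)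
    (x₀ : E) (hx₀ : x₀ ∈ K) (hle : x₀ - p ∈ P) :
    ∃ M : ℝ, ∀ n : ℕ, ‖T^[n] x₀‖ ≤ M := by
  have key : ∀ n : ℕ, T^[n] x₀ ∈ K ∧ T^[n] x₀ - p ∈ P ∧
      ‖T^[n] x₀ - p‖ ≤ ‖x₀ - p‖ := by
    intro n
    induction n with
    | zero => exact ⟨hx₀, hle, le_refl _⟩
    | succ n ih =>
      obtain ⟨hK, hPm, hnorm⟩ := ih
      set y := T^[n] x₀ with hy
      have hiter : T^[n+1] x₀ = T y := by
        rw [Function.iterate_succ_apply']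
      have hK' : T y ∈ K := hTK y hK
      have hPm' : T y - p ∈ P := by
        have := hT.1 p hp y hK hPm
        rwa [hfix] at this
      have hineq := hT.2 p hp y hK hPm
      rw [hfix] at hineq
      have h1 : ‖p - T y‖ = ‖T y - p‖ := norm_sub_rev _ _
      have h2 : ‖p - y‖ = ‖y - p‖ := norm_sub_rev _ _
      rw [h1, h2] at hineq
      -- (1-α) ‖Ty - p‖² ≤ (1-α) ‖y - p‖²
      have h3 : (1 - α) * ‖T y - p‖ ^ 2 ≤ (1 - α) * ‖y - p‖ ^ 2 := by nlinarith
      have hα' : (0:ℝ) < 1 - α := by linarith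
      have h4 : ‖T y - p‖ ^ 2 ≤ ‖y - p‖ ^ 2 := le_of_mul_le_mul_left h3 hα'
      have h5 : ‖T y - p‖ ≤ ‖y - p‖ := by
        nlinarith [norm_nonneg (T y - p), norm_nonneg (y - p)]
      exact ⟨hiter ▸ hK', hiter ▸ hPm', hiter ▸ (h5.trans hnorm)⟩
  refine ⟨‖p‖ + ‖x₀ - p‖, fun n => ?_⟩
  have := (key n).2.2
  calc ‖T^[n] x₀‖ = ‖p + (T^[n] x₀ - p)‖ := by rw [add_sub_cancel]
    _ ≤ ‖p‖ + ‖T^[n] x₀ - p‖ := norm_add_le _ _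
    _ ≤ ‖p‖ + ‖x₀ - p‖ := by linarith
end

section
/- Let E be a uniformly convex real Banach space with a partial order ≤ induced by a closed convex cone P, and let T : P → P be a monotone α-nonexpansive mapping for some α < 1. Then T has a fixed point if and only if the orbit O(0) = {Tⁿ0 : n = 0, 1, 2, ...} is bounded in norm. -/
open Filter Topology

set_option maxHeartbeats 1000000


theorem exists_banach_limit :
    ∃ Λ : BoundedContinuousFunction ℕ ℝ →ₗ[ℝ] ℝ,
      (∀ a : BoundedContinuousFunction ℕ ℝ, (∀ n, 0 ≤ a n) → 0 ≤ Λ a) ∧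
      Λ (BoundedContinuousFunction.const ℕ (1:ℝ)) = 1 ∧
      ∀ a b : BoundedContinuousFunction ℕ ℝ, (∀ n, b n = a (n + 1)) → Λ b = Λ a := by
  classical
  set avg : BoundedContinuousFunction ℕ ℝ → ℕ → ℝ :=
    fun a n => (∑ k ∈ Finset.range n, a k) / n with havgdef
  set N : BoundedContinuousFunction ℕ ℝ → ℝ := fun a => limsup (avg a) atTop with hNdef
  have havg : ∀ (a : BoundedContinuousFunction ℕ ℝ) (n : ℕ), |avg a n| ≤ ‖a‖ := by
    intro a n
    rcases Nat.eq_zero_or_pos n with h | h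
    · simp [havgdef, h, norm_nonneg]
    · have hn : (0:ℝ) < n := by exact_mod_cast h
      simp only [havgdef]
      simp only [abs_div, abs_of_pos hn, div_le_iff₀ hn]
      calc |∑ k ∈ Finset.range n, a k| ≤ ∑ k ∈ Finset.range n, |a k| :=
            Finset.abs_sum_le_sum_abs _ _
        _ ≤ ∑ _k ∈ Finset.range n, ‖a‖ := by
            refine Finset.sum_le_sum fun k _ => ?_
            simpa [Real.norm_eq_abs] using a.norm_coe_le_norm k
        _ = ‖a‖ * n := by simp [mul_comm]
  have hbdd : ∀ a, IsBoundedUnder (· ≤ ·) atTop (avg a) :=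
    fun a => isBoundedUnder_of ⟨‖a‖, fun n => (abs_le.mp (havg a n)).2⟩
  have hbddge : ∀ a, IsBoundedUnder (· ≥ ·) atTop (avg a) :=
    fun a => isBoundedUnder_of ⟨-‖a‖, fun n => (abs_le.mp (havg a n)).1⟩
  have hNadd : ∀ x y, N (x + y) ≤ N x + N y := by
    intro a b
    have h1 : avg (a + b) = avg a + avg b := by
      funext n
      simp [havgdef, Finset.sum_add_distrib, add_div]
    rw [hNdef]
    simp only [h1]
    exact limsup_add_le (hbddge a) (hbdd a) ((hbddge b).isCoboundedUnder_le) (hbdd b)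
  have hNhom : ∀ c : ℝ, 0 < c → ∀ a, N (c • a) = c * N a := by
    intro c hc a
    have h1 : avg (c • a) = fun n => c * avg a n := by
      funext n
      simp only [havgdef, BoundedContinuousFunction.coe_smul, Pi.smul_apply, smul_eq_mul]
      rw [← Finset.mul_sum, mul_div_assoc]
    have h2 := (OrderIso.mulLeft₀ c hc).limsup_apply (u := avg a) (f := atTop)
      (hbdd a) ((hbddge a).isCoboundedUnder_le)
      (isBoundedUnder_of ⟨c * ‖a‖, fun n => by
        simpa using mul_le_mul_of_nonneg_left (abs_le.mp (havg a n)).2 hc.le⟩)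
      ((isBoundedUnder_of ⟨c * (-‖a‖), fun n => by
        simpa using mul_le_mul_of_nonneg_left (abs_le.mp (havg a n)).1 hc.le⟩ :
          IsBoundedUnder (· ≥ ·) atTop _).isCoboundedUnder_le)
    simp only [OrderIso.mulLeft₀_apply] at h2
    rw [hNdef]
    simp only [h1]
    exact h2.symm
  have h1ne : (BoundedContinuousFunction.const ℕ (1:ℝ)) ≠ 0 := by
    intro h
    have := congrArg (fun g : BoundedContinuousFunction ℕ ℝ => g 0) h
    simpa using this
  have hNconst : ∀ c : ℝ, N (c • BoundedContinuousFunction.const ℕ (1:ℝ)) = c := by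
    intro c
    have h1 : avg (c • BoundedContinuousFunction.const ℕ (1:ℝ)) =ᶠ[atTop] fun _ => c := by
      filter_upwards [eventually_ge_atTop 1] with n hn
      have hn' : (n:ℝ) ≠ 0 := by positivity
      simp [havgdef, Finset.sum_const, Finset.card_range, mul_comm,
        mul_div_assoc, div_self hn']
    rw [hNdef]
    simp only [limsup_congr h1, limsup_const]
  set f : BoundedContinuousFunction ℕ ℝ →ₗ.[ℝ] ℝ :=
    LinearPMap.mkSpanSingleton (BoundedContinuousFunction.const ℕ (1:ℝ)) 1 h1ne with hfdef
  have hf : ∀ x : f.domain, f x ≤ N x := by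
    rintro ⟨v, hv⟩
    have hv' : v ∈ Submodule.span ℝ {BoundedContinuousFunction.const ℕ (1:ℝ)} := hv
    rw [Submodule.mem_span_singleton] at hv'
    obtain ⟨c, hc⟩ := hv'
    subst hc
    have : f ⟨_, hv⟩ = c • (1:ℝ) := LinearPMap.mkSpanSingleton'_apply _ _ _ c _
    rw [this, hNconst, smul_eq_mul, mul_one]
  obtain ⟨g, hg1, hg2⟩ := exists_extension_of_le_sublinear f N hNhom hNadd hf
  have hNnonpos : ∀ a : BoundedContinuousFunction ℕ ℝ, (∀ n, a n ≤ 0) → N a ≤ 0 := by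
    intro a ha
    rw [hNdef]
    refine limsup_le_of_le ((hbddge a).isCoboundedUnder_le) ?_
    refine Eventually.of_forall fun n => ?_
    simp only [havgdef]
    exact div_nonpos_of_nonpos_of_nonneg (Finset.sum_nonpos fun k _ => ha k) (Nat.cast_nonneg n)
  refine ⟨g, ?_, ?_, ?_⟩
  · intro a ha
    have h2 : g (-a) ≤ N (-a) := hg2 _
    have h3 : N (-a) ≤ 0 := hNnonpos _ fun n => by simpa using ha n
    have h4 : g (-a) = -g a := map_neg g a
    linarith
  · have hmem : BoundedContinuousFunction.const ℕ (1:ℝ) ∈ f.domain :=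
      Submodule.mem_span_singleton_self _
    have h5 := hg1 ⟨_, hmem⟩
    have h6 : f ⟨_, hmem⟩ = (1:ℝ) :=
      LinearPMap.mkSpanSingleton'_apply_self _ _ _ _
    exact h5.trans h6
  · intro a b hab
    have htel : ∀ n : ℕ, avg (a - b) n = (a 0 - a n) / n := by
      intro n
      simp only [havgdef]
      have h8 : ∀ k ∈ Finset.range n, (a - b) k = a k - a (k + 1) := by
        intro k _; simp [hab k]
      rw [Finset.sum_congr rfl h8, Finset.sum_range_sub' (fun k => a k) n]
    have htend : Tendsto (avg (a - b)) atTop (𝓝 0) := by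
      have hb : ∀ n : ℕ, ‖avg (a - b) n‖ ≤ 2 * ‖a‖ / n := by
        intro n
        rw [htel n]
        rcases Nat.eq_zero_or_pos n with h | h
        · simp [h]
        · have hn : (0:ℝ) < n := by exact_mod_cast h
          rw [Real.norm_eq_abs, abs_div, abs_of_pos hn]
          have e0 : |a 0| ≤ ‖a‖ := by
            simpa [Real.norm_eq_abs] using a.norm_coe_le_norm 0
          have en : |a n| ≤ ‖a‖ := by
            simpa [Real.norm_eq_abs] using a.norm_coe_le_norm n
          have h9 : |a 0 - a n| ≤ 2 * ‖a‖ := by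
            rw [abs_le] at e0 en ⊢
            constructor <;> [linarith [e0.1, en.2]; linarith [e0.2, en.1]]
          gcongr
      refine squeeze_zero_norm hb ?_
      simpa using tendsto_const_div_atTop_nhds_zero_nat (2 * ‖a‖)
    have hN1 : N (a - b) = 0 := htend.limsup_eq
    have hN2 : N (b - a) = 0 := by
      have : avg (b - a) = fun n => -avg (a - b) n := by
        funext n
        simp only [havgdef]
        simp [Finset.sum_sub_distrib, neg_div, neg_sub]
        ring
      rw [hNdef]
      simp only [this]
      have : Tendsto (fun n => -avg (a - b) n) atTop (𝓝 0) := by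
        simpa using htend.neg
      exact this.limsup_eq
    have ha1 : g (a - b) ≤ 0 := (hg2 _).trans hN1.le
    have ha2 : g (b - a) ≤ 0 := (hg2 _).trans hN2.le
    rw [map_sub] at ha1 ha2
    linarith

theorem uc_sq {E : Type*} [NormedAddCommGroup E] [NormedSpace ℝ E] [UniformConvexSpace E]
    {R ε : ℝ} (hR : 0 < R) (hε : 0 < ε) :
    ∃ δ > 0, ∀ a b : E, ‖a‖ ≤ R → ‖b‖ ≤ R → ε ≤ ‖a - b‖ →
      ‖(1/2 : ℝ) • (a + b)‖ ^ 2 ≤ (‖a‖ ^ 2 + ‖b‖ ^ 2) / 2 - δ := by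
  obtain ⟨δ₀, hδ₀, huc⟩ := exists_forall_closed_ball_dist_add_le_two_sub E
    (div_pos hε hR)
  set δ₁ : ℝ := min δ₀ 1 with hδ₁def
  have hδ₁ : 0 < δ₁ := lt_min hδ₀ one_pos
  have hδ₁le : δ₁ ≤ 1 := min_le_right _ _
  set η : ℝ := ε ^ 2 * δ₁ / (16 * R) with hηdef
  have hη : 0 < η := by positivity
  refine ⟨min (η ^ 2 / 4) (ε ^ 2 * δ₁ / 16), lt_min (by positivity) (by positivity),
    fun a b ha hb hab => ?_⟩
  have hm0 : 0 ≤ max ‖a‖ ‖b‖ := le_max_of_le_left (norm_nonneg _)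
  have hεm : ε ≤ 2 * max ‖a‖ ‖b‖ := by
    calc ε ≤ ‖a - b‖ := hab
      _ ≤ ‖a‖ + ‖b‖ := norm_sub_le _ _
      _ ≤ 2 * max ‖a‖ ‖b‖ := by
        have := le_max_left ‖a‖ ‖b‖; have := le_max_right ‖a‖ ‖b‖; linarith
  have hm : 0 < max ‖a‖ ‖b‖ := by nlinarith
  have hmR : max ‖a‖ ‖b‖ ≤ R := max_le ha hb
  have hεR : ε ≤ 2 * R := hεm.trans (by linarith)
  rcases le_or_gt η |‖a‖ - ‖b‖| with hcase | hcase
  · -- norms far apart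
    have h1 : ‖(1/2 : ℝ) • (a + b)‖ ≤ (‖a‖ + ‖b‖) / 2 := by
      rw [norm_smul, Real.norm_eq_abs, abs_of_pos (by norm_num : (0:ℝ) < 1/2)]
      nlinarith [norm_add_le a b]
    have h2 : ‖(1/2 : ℝ) • (a + b)‖ ^ 2 ≤ ((‖a‖ + ‖b‖) / 2) ^ 2 := by
      have := norm_nonneg ((1/2 : ℝ) • (a + b))
      nlinarith
    have h3 : min (η ^ 2 / 4) (ε ^ 2 * δ₁ / 16) ≤ η ^ 2 / 4 := min_le_left _ _
    have h4 : η ^ 2 ≤ (‖a‖ - ‖b‖) ^ 2 := by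
      have := abs_nonneg (‖a‖ - ‖b‖)
      nlinarith [sq_abs (‖a‖ - ‖b‖)]
    nlinarith
  · -- norms close together: use uniform convexity at radius m := max
    set m : ℝ := max ‖a‖ ‖b‖ with hmdef
    have hu : ‖m⁻¹ • a‖ ≤ 1 := by
      rw [norm_smul, norm_inv, Real.norm_eq_abs, abs_of_pos hm]
      rw [inv_mul_le_iff₀ hm, mul_one]
      exact le_max_left _ _
    have hv : ‖m⁻¹ • b‖ ≤ 1 := by
      rw [norm_smul, norm_inv, Real.norm_eq_abs, abs_of_pos hm]
      rw [inv_mul_le_iff₀ hm, mul_one]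
      exact le_max_right _ _
    have hdist : ε / R ≤ ‖m⁻¹ • a - m⁻¹ • b‖ := by
      rw [← smul_sub, norm_smul, norm_inv, Real.norm_eq_abs, abs_of_pos hm]
      rw [le_inv_mul_iff₀ hm]
      calc m * (ε / R) ≤ R * (ε / R) := by
            apply mul_le_mul_of_nonneg_right hmR (by positivity)
        _ = ε := by field_simp
        _ ≤ ‖a - b‖ := hab
    have huc2 := huc hu hv hdist
    have hsum : ‖a + b‖ ≤ m * (2 - δ₁) := by
      have : ‖m⁻¹ • a + m⁻¹ • b‖ ≤ 2 - δ₁ := by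
        refine huc2.trans ?_
        have : δ₁ ≤ δ₀ := min_le_left _ _
        linarith
      have h5 : ‖m⁻¹ • (a + b)‖ ≤ 2 - δ₁ := by rwa [smul_add]
      rw [norm_smul, norm_inv, Real.norm_eq_abs, abs_of_pos hm, inv_mul_le_iff₀ hm] at h5
      linarith [h5]
    have hmid : ‖(1/2 : ℝ) • (a + b)‖ ≤ m * (1 - δ₁ / 2) := by
      rw [norm_smul, Real.norm_eq_abs, abs_of_pos (by norm_num : (0:ℝ) < 1/2)]
      nlinarith
    -- min norm is at least m - η
    have hminn : m - η ≤ min ‖a‖ ‖b‖ := by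
      rcases abs_lt.mp hcase with ⟨h6, h7⟩
      rcases le_total ‖a‖ ‖b‖ with h | h
      · rw [min_eq_left h, hmdef, max_eq_right h]; linarith
      · rw [min_eq_right h, hmdef, max_eq_left h]; linarith
    have hηsmall : η ≤ ε / 8 := by
      have he : η * (16 * R) = ε ^ 2 * δ₁ := by
        rw [hηdef]; field_simp
      nlinarith [hη.le]
    have hm2 : ε / 2 ≤ m := by linarith
    have havg : m ^ 2 - R * η ≤ (‖a‖ ^ 2 + ‖b‖ ^ 2) / 2 := by
      have h8 : 0 ≤ m - η := by linarith
      have h9 : (m - η) ^ 2 ≤ (min ‖a‖ ‖b‖) ^ 2 := by nlinarith [norm_nonneg a, norm_nonneg b]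
      have h10 : m ^ 2 ≤ (max ‖a‖ ‖b‖) ^ 2 := by rw [hmdef]
      have h11 : (min ‖a‖ ‖b‖) ^ 2 + (max ‖a‖ ‖b‖) ^ 2 = ‖a‖ ^ 2 + ‖b‖ ^ 2 := by
        rcases le_total ‖a‖ ‖b‖ with h | h
        · rw [min_eq_left h, max_eq_right h]
        · rw [min_eq_right h, max_eq_left h]; ring
      nlinarith [hη.le, hmR]
    have hfinal : ‖(1/2 : ℝ) • (a + b)‖ ^ 2 ≤ m ^ 2 - ε ^ 2 * δ₁ / 8 := by
      have h12 : ‖(1/2 : ℝ) • (a + b)‖ ^ 2 ≤ (m * (1 - δ₁ / 2)) ^ 2 := by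
        have := norm_nonneg ((1/2 : ℝ) • (a + b))
        have hpos : 0 ≤ m * (1 - δ₁ / 2) := by nlinarith
        nlinarith
      have h13 : (m * (1 - δ₁ / 2)) ^ 2 ≤ m ^ 2 * (1 - δ₁ / 2) := by
        nlinarith [mul_nonneg (mul_nonneg (sq_nonneg m)
          (by linarith : (0:ℝ) ≤ 1 - δ₁ / 2)) (by linarith : (0:ℝ) ≤ δ₁ / 2)]
      have h14 : m ^ 2 * (1 - δ₁ / 2) ≤ m ^ 2 - (ε / 2) ^ 2 * (δ₁ / 2) := by
        nlinarith [mul_nonneg (mul_nonneg (sub_nonneg.2 hm2)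
          (by linarith : (0:ℝ) ≤ m + ε / 2)) (by linarith : (0:ℝ) ≤ δ₁ / 2)]
      nlinarith
    have h15 : R * η = ε ^ 2 * δ₁ / 16 := by
      rw [hηdef]; field_simp
    have h16 : min (η ^ 2 / 4) (ε ^ 2 * δ₁ / 16) ≤ ε ^ 2 * δ₁ / 16 := min_le_right _ _
    nlinarith

section Helpers
variable {E : Type*} [NormedAddCommGroup E] [NormedSpace ℝ E]

theorem main_thm [UniformConvexSpace E] [CompleteSpace E]
    (P : Set E) (hP : (P.Nonempty ∧ IsClosed P ∧ P ≠ {0} ∧ P ∩ (-P) = {0} ∧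
      ∀ x ∈ P, ∀ y ∈ P, ∀ a b : ℝ, 0 ≤ a → 0 ≤ b → a • x + b • y ∈ P))
    (T : E → E) (hTP : ∀ x ∈ P, T x ∈ P)
    (α : ℝ) (hα : α < 1)
    (hT : (∀ x ∈ P, ∀ y ∈ P, y - x ∈ P → T y - T x ∈ P) ∧
      ∀ x ∈ P, ∀ y ∈ P, y - x ∈ P →
        ‖T x - T y‖ ^ 2 ≤ α * ‖T x - y‖ ^ 2 + α * ‖T y - x‖ ^ 2
          + (1 - 2 * α) * ‖x - y‖ ^ 2) :
    (∃ z ∈ P, T z = z) ↔ (∃ M : ℝ, ∀ n : ℕ, ‖T^[n] (0 : E)‖ ≤ M) := by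
  obtain ⟨hPne, hPclosed, -, -, hPcone⟩ := hP
  have h0P : (0:E) ∈ P := by
    obtain ⟨w, hw⟩ := hPne
    simpa using hPcone w hw w hw 0 0 le_rfl le_rfl
  have hPadd : ∀ u ∈ P, ∀ v ∈ P, u + v ∈ P := by
    intro u hu v hv
    simpa using hPcone u hu v hv 1 1 zero_le_one zero_le_one
  have hPhalf : ∀ u ∈ P, ∀ v ∈ P, (1/2:ℝ) • (u + v) ∈ P := by
    intro u hu v hv
    have := hPcone u hu v hv (1/2) (1/2) (by norm_num) (by norm_num)
    simpa [smul_add] using this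
  set x : ℕ → E := fun n => T^[n] 0 with hxdef
  have hx0 : x 0 = 0 := rfl
  have hxsucc : ∀ n, x (n+1) = T (x n) := fun n => Function.iterate_succ_apply' T n 0
  have hxP : ∀ n, x n ∈ P := by
    intro n; induction n with
    | zero => simpa [hx0] using h0P
    | succ n ih => rw [hxsucc]; exact hTP _ ih
  have hstep : ∀ n, x (n+1) - x n ∈ P := by
    intro n; induction n with
    | zero =>
      have : x 1 - x 0 = T 0 := by rw [hxsucc, hx0, sub_zero]
      rw [this]; exact hTP 0 h0P
    | succ n ih =>
      have h := hT.1 (x n) (hxP n) (x (n+1)) (hxP (n+1)) ih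
      rwa [← hxsucc (n+1), ← hxsucc n] at h
  have hle : ∀ m n, m ≤ n → x n - x m ∈ P := by
    intro m n h
    induction n, h using Nat.le_induction with
    | base => simpa using h0P
    | succ n hmn ih =>
      have := hPadd _ (hstep n) _ ih
      rwa [sub_add_sub_cancel] at this
  constructor
  · -- fixed point → bounded orbit
    rintro ⟨z, hzP, hzfix⟩
    have key : ∀ n, z - x n ∈ P ∧ ‖x n - z‖ ≤ ‖z‖ := by
      intro n; induction n with
      | zero =>
        refine ⟨by simpa [hx0] using hzP, by simp [hx0]⟩
      | succ n ih =>
        obtain ⟨h1, h2⟩ := ih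
        have h3 : z - x (n+1) ∈ P := by
          have := hT.1 (x n) (hxP n) z hzP h1
          rw [hzfix] at this
          rwa [hxsucc]
        refine ⟨h3, ?_⟩
        have h4 := hT.2 (x n) (hxP n) z hzP h1
        rw [hzfix] at h4
        rw [hxsucc]
        have h5 : ‖z - x n‖ = ‖x n - z‖ := norm_sub_rev _ _
        rw [h5] at h4
        have h6 : ‖T (x n) - z‖^2 ≤ ‖x n - z‖^2 := by nlinarith [h4, hα]
        nlinarith [norm_nonneg (T (x n) - z), norm_nonneg (x n - z), norm_nonneg z, h2, h6]
    refine ⟨2 * ‖z‖, fun n => ?_⟩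
    have h7 : ‖x n‖ ≤ ‖x n - z‖ + ‖z‖ := by
      calc ‖x n‖ = ‖(x n - z) + z‖ := by rw [sub_add_cancel]
        _ ≤ ‖x n - z‖ + ‖z‖ := norm_add_le _ _
    have := (key n).2
    calc ‖T^[n] (0:E)‖ = ‖x n‖ := rfl
      _ ≤ 2 * ‖z‖ := by linarith
  · -- bounded orbit → fixed point
    rintro ⟨M, hM⟩
    have hxM : ∀ n, ‖x n‖ ≤ M := hM
    have hM0 : 0 ≤ M := le_trans (norm_nonneg _) (hxM 0)
    obtain ⟨Λ, hΛpos, hΛone, hΛshift⟩ := exists_banach_limit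
    have hΛmono : ∀ a b : BoundedContinuousFunction ℕ ℝ, (∀ n, a n ≤ b n) → Λ a ≤ Λ b := by
      intro a b h
      have h1 := hΛpos (b - a) (fun n => by simpa using sub_nonneg.2 (h n))
      have h2 : Λ (b - a) = Λ b - Λ a := map_sub Λ b a
      linarith
    have hΛconst : ∀ c : ℝ, Λ (BoundedContinuousFunction.const ℕ c) = c := by
      intro c
      have h1 : BoundedContinuousFunction.const ℕ c
          = c • BoundedContinuousFunction.const ℕ (1:ℝ) := by
        ext n; simp
      rw [h1, map_smul, hΛone, smul_eq_mul, mul_one]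
    have hbnd : ∀ (y : E) (n : ℕ), ‖‖x n - y‖ ^ 2‖ ≤ (M + ‖y‖) ^ 2 := by
      intro y n
      rw [Real.norm_eq_abs, abs_of_nonneg (by positivity)]
      have h1 : ‖x n - y‖ ≤ M + ‖y‖ := (norm_sub_le _ _).trans (by linarith [hxM n])
      nlinarith [norm_nonneg (x n - y)]
    set A : E → BoundedContinuousFunction ℕ ℝ := fun y =>
      BoundedContinuousFunction.ofNormedAddCommGroupDiscrete (fun n => ‖x n - y‖ ^ 2)
        ((M + ‖y‖) ^ 2) (hbnd y) with hAdef
    have hAapp : ∀ y n, A y n = ‖x n - y‖ ^ 2 := fun y n => rfl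
    set SA : E → BoundedContinuousFunction ℕ ℝ := fun y =>
      BoundedContinuousFunction.ofNormedAddCommGroupDiscrete (fun n => ‖x (n+1) - y‖ ^ 2)
        ((M + ‖y‖) ^ 2) (fun n => hbnd y (n+1)) with hSAdef
    have hSAapp : ∀ y n, SA y n = ‖x (n+1) - y‖ ^ 2 := fun y n => rfl
    have hΛSA : ∀ y, Λ (SA y) = Λ (A y) := fun y => hΛshift (A y) (SA y) (fun n => rfl)
    set Φ : E → ℝ := fun y => Λ (A y) with hΦdef
    have hΦnonneg : ∀ y, 0 ≤ Φ y := fun y => hΛpos (A y) (fun n => by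
      rw [hAapp]; positivity)
    have hΦle : ∀ y, Φ y ≤ (M + ‖y‖) ^ 2 := by
      intro y
      have h1 := hΛmono (A y) (BoundedContinuousFunction.const ℕ ((M + ‖y‖) ^ 2))
        (fun n => by
          have h0 : (BoundedContinuousFunction.const ℕ ((M + ‖y‖) ^ 2)) n
              = (M + ‖y‖) ^ 2 := rfl
          rw [hAapp, h0]
          have h2 : ‖x n - y‖ ≤ M + ‖y‖ := (norm_sub_le _ _).trans (by linarith [hxM n])
          nlinarith [norm_nonneg (x n - y)])
      rwa [hΛconst] at h1
    have hΦlower : ∀ y : E, M ≤ ‖y‖ → (‖y‖ - M) ^ 2 ≤ Φ y := by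
      intro y hy
      have h1 := hΛmono (BoundedContinuousFunction.const ℕ ((‖y‖ - M) ^ 2)) (A y)
        (fun n => by
          have h0 : (BoundedContinuousFunction.const ℕ ((‖y‖ - M) ^ 2)) n
              = (‖y‖ - M) ^ 2 := rfl
          rw [hAapp, h0]
          have h2 : ‖y‖ - M ≤ ‖x n - y‖ := by
            have h3 := norm_sub_norm_le y (x n)
            have h4 : ‖y - x n‖ = ‖x n - y‖ := norm_sub_rev _ _
            have h5 := hxM n
            linarith
          have h6 : (0:ℝ) ≤ ‖y‖ - M := by linarith
          nlinarith)
      rwa [hΛconst] at h1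
    have hΦlipkey : ∀ u v : E, Φ u - Φ v ≤ (2*M + ‖u‖ + ‖v‖) * ‖u - v‖ := by
      intro u v
      have h1 := hΛmono (A u) (A v + BoundedContinuousFunction.const ℕ
          ((2*M + ‖u‖ + ‖v‖) * ‖u - v‖))
        (fun n => by
          simp only [BoundedContinuousFunction.coe_add, Pi.add_apply,
            BoundedContinuousFunction.const_apply, hAapp]
          have h2 : ‖x n - u‖ ≤ ‖x n - v‖ + ‖v - u‖ := by
            calc ‖x n - u‖ = ‖(x n - v) + (v - u)‖ := by rw [sub_add_sub_cancel]
              _ ≤ ‖x n - v‖ + ‖v - u‖ := norm_add_le _ _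
          have h3 : ‖v - u‖ = ‖u - v‖ := norm_sub_rev _ _
          have h4 : ‖x n - u‖ ≤ M + ‖u‖ := (norm_sub_le _ _).trans (by linarith [hxM n])
          have h5 : ‖x n - v‖ ≤ M + ‖v‖ := (norm_sub_le _ _).trans (by linarith [hxM n])
          nlinarith [norm_nonneg (x n - u), norm_nonneg (x n - v), norm_nonneg (u - v)])
      rw [map_add, hΛconst] at h1
      linarith
    -- order intervals
    set U : ℕ → Set E := fun m => {y | y ∈ P ∧ y - x m ∈ P} with hUdef
    have hxU : ∀ m, x m ∈ U m := fun m => ⟨hxP m, by simpa using h0P⟩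
    have hUsub : ∀ {m n : ℕ}, m ≤ n → U n ⊆ U m := by
      intro m n h y hy
      refine ⟨hy.1, ?_⟩
      have := hPadd _ hy.2 _ (hle m n h)
      rwa [sub_add_sub_cancel] at this
    have hUclosed : ∀ m, IsClosed (U m) := by
      intro m
      exact hPclosed.inter (hPclosed.preimage (continuous_id.sub continuous_const))
    have hUconv : ∀ m, ∀ u ∈ U m, ∀ v ∈ U m, (1/2:ℝ) • (u + v) ∈ U m := by
      intro m u hu v hv
      refine ⟨hPhalf _ hu.1 _ hv.1, ?_⟩
      have h4 := hPcone _ hu.2 _ hv.2 (1/2) (1/2) (by norm_num) (by norm_num)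
      have h5 : (1/2:ℝ) • (u - x m) + (1/2:ℝ) • (v - x m) = (1/2:ℝ) • (u + v) - x m := by
        module
      rwa [h5] at h4
    set I : ℕ → ℝ := fun m => sInf (Φ '' U m) with hIdef
    have hInon : ∀ m, (Φ '' U m).Nonempty := fun m => ⟨Φ (x m), ⟨x m, hxU m, rfl⟩⟩
    have hIbdd : ∀ m, BddBelow (Φ '' U m) := fun m =>
      ⟨0, by rintro t ⟨y, -, rfl⟩; exact hΦnonneg y⟩
    have hIle : ∀ m, ∀ y ∈ U m, I m ≤ Φ y := fun m y hy => csInf_le (hIbdd m) ⟨y, hy, rfl⟩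
    have hI0 : ∀ m, 0 ≤ I m := fun m =>
      le_csInf (hInon m) (by rintro t ⟨y, -, rfl⟩; exact hΦnonneg y)
    have hImono : Monotone I := fun m n h =>
      csInf_le_csInf (hIbdd m) ((hInon n)) (Set.image_mono (hUsub h))
    have hIub : ∀ m, I m ≤ (2*M)^2 := by
      intro m
      have h1 := hIle m (x m) (hxU m)
      have h2 := hΦle (x m)
      nlinarith [hxM m, norm_nonneg (x m)]
    set r : ℝ := ⨆ m, I m with hrdef
    have hbddI : BddAbove (Set.range I) := ⟨(2*M)^2, by rintro t ⟨m, rfl⟩; exact hIub m⟩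
    have hIler : ∀ m, I m ≤ r := fun m => le_ciSup hbddI m
    have hrtend : Tendsto I atTop (𝓝 r) := tendsto_atTop_ciSup hImono hbddI
    have hr0 : 0 ≤ r := le_trans (hI0 0) (hIler 0)
    -- approximate minimizers
    have hchoice : ∀ m : ℕ, ∃ y, y ∈ U m ∧ Φ y < I m + 1/((m:ℝ)+1) := by
      intro m
      have h1 : I m < I m + 1/((m:ℝ)+1) := lt_add_of_pos_right _ (by positivity)
      obtain ⟨t, ⟨y, hyU, rfl⟩, hlt⟩ := exists_lt_of_csInf_lt (hInon m) h1
      exact ⟨y, hyU, hlt⟩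
    choose y hyU hyΦ using hchoice
    set K : ℝ := M + Real.sqrt (r + 1) with hKdef
    have hsq : 0 ≤ Real.sqrt (r+1) := Real.sqrt_nonneg _
    have hK0 : 0 ≤ K := by rw [hKdef]; linarith
    have hyΦ' : ∀ m, Φ (y m) ≤ r + 1 := by
      intro m
      have h2 : 1/((m:ℝ)+1) ≤ 1 := by
        rw [div_le_one (by positivity)]
        have : (0:ℝ) ≤ (m:ℝ) := Nat.cast_nonneg m
        linarith
      have := hyΦ m
      have := hIler m
      linarith
    have hyK : ∀ m, ‖y m‖ ≤ K := by
      intro m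
      rcases le_or_gt ‖y m‖ M with h | h
      · rw [hKdef]; linarith
      · have h1 := hΦlower (y m) h.le
        have h2 : (‖y m‖ - M)^2 ≤ r + 1 := le_trans h1 (hyΦ' m)
        have h3 : ‖y m‖ - M ≤ Real.sqrt (r+1) := by
          rw [← Real.sqrt_sq (by linarith : (0:ℝ) ≤ ‖y m‖ - M)]
          exact Real.sqrt_le_sqrt h2
        rw [hKdef]; linarith
    -- Cauchy
    have hcauchy : CauchySeq y := by
      rw [Metric.cauchySeq_iff]
      intro ε hε
      obtain ⟨δ, hδ, hucsq⟩ := uc_sq (E := E) (R := 2*M + K + 1) (ε := ε)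
        (by linarith) hε
      have h1 : ∀ᶠ m in atTop, r - δ/4 < I m :=
        hrtend.eventually (eventually_gt_nhds (by linarith))
      rw [eventually_atTop] at h1
      obtain ⟨N₁, hN₁⟩ := h1
      obtain ⟨N₂, hN₂⟩ := exists_nat_gt (4/δ)
      refine ⟨max N₁ N₂, fun m hm k hk => ?_⟩
      by_contra hcon
      rw [dist_eq_norm] at hcon
      have hab : ε ≤ ‖y m - y k‖ := not_lt.mp hcon
      set N := max N₁ N₂ with hNdef
      set z := (1/2:ℝ) • (y m + y k) with hzdef
      have hzU : z ∈ U N :=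
        hUconv N (y m) (hUsub hm (hyU m)) (y k) (hUsub hk (hyU k))
      have hIN : I N ≤ Φ z := hIle N z hzU
      have hpt : ∀ n, A z n ≤ (1/2) * A (y m) n + (1/2) * A (y k) n - δ := by
        intro n
        have hnm : ‖x n - y m‖ ≤ 2*M + K + 1 := by
          have := (norm_sub_le (x n) (y m)).trans (add_le_add (hxM n) (hyK m))
          linarith
        have hnk : ‖x n - y k‖ ≤ 2*M + K + 1 := by
          have := (norm_sub_le (x n) (y k)).trans (add_le_add (hxM n) (hyK k))
          linarith
        have hdiff : ε ≤ ‖(x n - y m) - (x n - y k)‖ := by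
          have h6 : (x n - y m) - (x n - y k) = y k - y m := by abel
          rw [h6, norm_sub_rev]
          exact hab
        have h7 := hucsq (x n - y m) (x n - y k) hnm hnk hdiff
        have heq : (1/2:ℝ) • ((x n - y m) + (x n - y k)) = x n - z := by
          rw [hzdef]; module
        rw [heq] at h7
        rw [hAapp, hAapp, hAapp]
        linarith
      have h6 := hΛmono (A z) ((1/2:ℝ) • A (y m) + (1/2:ℝ) • A (y k)
          - BoundedContinuousFunction.const ℕ δ)
        (fun n => by
          simp only [BoundedContinuousFunction.coe_sub, BoundedContinuousFunction.coe_add,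
            BoundedContinuousFunction.coe_smul, Pi.sub_apply, Pi.add_apply, Pi.smul_apply,
            BoundedContinuousFunction.const_apply, smul_eq_mul]
          exact hpt n)
      rw [map_sub, map_add, map_smul, map_smul, hΛconst] at h6
      have h7 : Φ z ≤ (1/2) * Φ (y m) + (1/2) * Φ (y k) - δ := by
        simpa [smul_eq_mul] using h6
      have hm' : (4:ℝ)/δ < (m:ℝ) + 1 := by
        have h8 : (N₂:ℝ) ≤ (m:ℝ) := Nat.cast_le.2 (le_trans (le_max_right N₁ N₂) hm)
        linarith [hN₂]
      have hk' : (4:ℝ)/δ < (k:ℝ) + 1 := by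
        have h8 : (N₂:ℝ) ≤ (k:ℝ) := Nat.cast_le.2 (le_trans (le_max_right N₁ N₂) hk)
        linarith [hN₂]
      have hm'' : 1/((m:ℝ)+1) < δ/4 := by
        have := one_div_lt_one_div_of_lt (by positivity : (0:ℝ) < 4/δ) hm'
        rwa [one_div_div] at this
      have hk'' : 1/((k:ℝ)+1) < δ/4 := by
        have := one_div_lt_one_div_of_lt (by positivity : (0:ℝ) < 4/δ) hk'
        rwa [one_div_div] at this
      have hINlow : r - δ/4 < I N := hN₁ N (le_max_left _ _)
      have h9 := hyΦ m
      have h10 := hyΦ k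
      have h11 := hIler m
      have h12 := hIler k
      linarith
    obtain ⟨c, hc⟩ := cauchySeq_tendsto_of_complete hcauchy
    have hcU : ∀ m, c ∈ U m := by
      intro m
      refine (hUclosed m).mem_of_tendsto hc ?_
      filter_upwards [eventually_ge_atTop m] with k hk
      exact hUsub hk (hyU k)
    have hcP : c ∈ P := (hcU 0).1
    have hcub : ∀ n, c - x n ∈ P := fun n => (hcU n).2
    have hcK : ‖c‖ ≤ K := by
      have h1 : Tendsto (fun m => ‖y m‖) atTop (𝓝 ‖c‖) := hc.norm
      exact le_of_tendsto h1 (Eventually.of_forall hyK)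
    -- Φ c = r
    have hΦtend : Tendsto (fun m => Φ (y m)) atTop (𝓝 (Φ c)) := by
      rw [← tendsto_sub_nhds_zero_iff]
      have h2 : Tendsto (fun m => ‖y m - c‖) atTop (𝓝 0) := by
        rw [← tendsto_iff_norm_sub_tendsto_zero]
        exact hc
      refine squeeze_zero_norm (fun m => ?_) (by simpa using h2.const_mul (2*M + K + K))
      rw [Real.norm_eq_abs, abs_le]
      constructor
      · have h3 := hΦlipkey c (y m)
        have h4 : ‖c - y m‖ = ‖y m - c‖ := norm_sub_rev _ _
        have h5 : (2*M + ‖c‖ + ‖y m‖) * ‖c - y m‖ ≤ (2*M + K + K) * ‖y m - c‖ := by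
          rw [h4]
          have := norm_nonneg (y m - c)
          nlinarith [hcK, hyK m]
        linarith
      · have h3 := hΦlipkey (y m) c
        have h5 : (2*M + ‖y m‖ + ‖c‖) * ‖y m - c‖ ≤ (2*M + K + K) * ‖y m - c‖ := by
          have := norm_nonneg (y m - c)
          nlinarith [hcK, hyK m]
        linarith
    have hΦyr : Tendsto (fun m => Φ (y m)) atTop (𝓝 r) := by
      have hup : Tendsto (fun m : ℕ => I m + 1/((m:ℝ)+1)) atTop (𝓝 r) := by
        have h1 : Tendsto (fun m : ℕ => 1/((m:ℝ)+1)) atTop (𝓝 0) :=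
          tendsto_one_div_add_atTop_nhds_zero_nat
        simpa using hrtend.add h1
      exact tendsto_of_tendsto_of_tendsto_of_le_of_le hrtend hup
        (fun m => hIle m (y m) (hyU m)) (fun m => (hyΦ m).le)
    have hΦc : Φ c = r := tendsto_nhds_unique hΦtend hΦyr
    have hmin : ∀ w, w ∈ P → (∀ n, w - x n ∈ P) → r ≤ Φ w := by
      intro w h1 h2
      exact ciSup_le fun m => hIle m w ⟨h1, h2 m⟩
    -- T c
    have hTcP : T c ∈ P := hTP c hcP
    have hTcub : ∀ n, T c - x n ∈ P := by
      intro n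
      cases n with
      | zero => simpa [hx0] using hTcP
      | succ n =>
        rw [hxsucc]
        exact hT.1 (x n) (hxP n) c hcP (hcub n)
    have hkey : ∀ n, SA (T c) n ≤ α * SA c n + α * A (T c) n + (1 - 2*α) * A c n := by
      intro n
      have h1 := hT.2 (x n) (hxP n) c hcP (hcub n)
      rw [← hxsucc n] at h1
      rw [hSAapp, hSAapp, hAapp, hAapp]
      have h2 : ‖T c - x n‖ = ‖x n - T c‖ := norm_sub_rev _ _
      rw [h2] at h1
      exact h1
    have h6 := hΛmono (SA (T c)) (α • SA c + α • A (T c) + (1-2*α) • A c)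
      (fun n => by
        simp only [BoundedContinuousFunction.coe_add, BoundedContinuousFunction.coe_smul,
          Pi.add_apply, Pi.smul_apply, smul_eq_mul]
        exact hkey n)
    rw [map_add, map_add, map_smul, map_smul, map_smul, hΛSA (T c), hΛSA c] at h6
    have hΦTc_le : Φ (T c) ≤ Φ c := by
      have h7 : Λ (A (T c)) ≤ α * Λ (A c) + α * Λ (A (T c)) + (1-2*α) * Λ (A c) := by
        simpa [smul_eq_mul] using h6
      have h8 : Φ (T c) = Λ (A (T c)) := rfl
      have h9 : Φ c = Λ (A c) := rfl
      rw [h8, h9]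
      nlinarith [h7, hα]
    have hΦTc : Φ (T c) = r :=
      le_antisymm (hΦTc_le.trans_eq hΦc) (hmin _ hTcP hTcub)
    refine ⟨c, hcP, ?_⟩
    by_contra hne
    have hεpos : 0 < ‖T c - c‖ := norm_pos_iff.2 (sub_ne_zero.2 hne)
    obtain ⟨δ, hδ, hucsq⟩ := uc_sq (E := E) (R := M + ‖c‖ + ‖T c‖ + 1) (ε := ‖T c - c‖)
      (by positivity) hεpos
    set w := (1/2:ℝ) • (c + T c) with hwdef
    have hwP : w ∈ P := hPhalf _ hcP _ hTcP
    have hwub : ∀ n, w - x n ∈ P := by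
      intro n
      have h4 := hPcone _ (hcub n) _ (hTcub n) (1/2) (1/2) (by norm_num) (by norm_num)
      have h5 : (1/2:ℝ) • (c - x n) + (1/2:ℝ) • (T c - x n) = w - x n := by
        rw [hwdef]; module
      rwa [h5] at h4
    have hpt : ∀ n, A w n ≤ (1/2) * A c n + (1/2) * A (T c) n - δ := by
      intro n
      have hn1 : ‖x n - c‖ ≤ M + ‖c‖ + ‖T c‖ + 1 := by
        have := (norm_sub_le (x n) c).trans (add_le_add (hxM n) le_rfl)
        have := norm_nonneg (T c)
        linarith [(norm_sub_le (x n) c), hxM n]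
      have hn2 : ‖x n - T c‖ ≤ M + ‖c‖ + ‖T c‖ + 1 := by
        have := norm_nonneg c
        linarith [(norm_sub_le (x n) (T c)), hxM n]
      have hd : ‖T c - c‖ ≤ ‖(x n - c) - (x n - T c)‖ := by
        have h6 : (x n - c) - (x n - T c) = T c - c := by abel
        rw [h6]
      have h5 := hucsq (x n - c) (x n - T c) hn1 hn2 hd
      have heq : (1/2:ℝ) • ((x n - c) + (x n - T c)) = x n - w := by
        rw [hwdef]; module
      rw [heq] at h5
      rw [hAapp, hAapp, hAapp]
      linarith
    have h7 := hΛmono (A w) ((1/2:ℝ) • A c + (1/2:ℝ) • A (T c)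
        - BoundedContinuousFunction.const ℕ δ)
      (fun n => by
        simp only [BoundedContinuousFunction.coe_sub, BoundedContinuousFunction.coe_add,
          BoundedContinuousFunction.coe_smul, Pi.sub_apply, Pi.add_apply, Pi.smul_apply,
          BoundedContinuousFunction.const_apply, smul_eq_mul]
        exact hpt n)
    rw [map_sub, map_add, map_smul, map_smul, hΛconst] at h7
    have h8 : Φ w ≤ (1/2) * Φ c + (1/2) * Φ (T c) - δ := by
      simpa [smul_eq_mul] using h7
    have h9 := hmin w hwP hwub
    rw [hΦc] at h8
    rw [hΦTc] at h8
    linarith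
end Helpers


/-- Pazy-type characterization on a cone: a monotone α-nonexpansive self-map
of `P` has a fixed point iff the orbit of `0` is norm-bounded. -/
theorem pazy_fixed_point_iff_orbit_of_zero_bounded
    {E : Type*} [NormedAddCommGroup E] [NormedSpace ℝ E]
    [UniformConvexSpace E] [CompleteSpace E]
    (P : Set E) (hP : IsClosedConvexCone P)
    (T : E → E) (hTP : ∀ x ∈ P, T x ∈ P)
    (α : ℝ) (hα : α < 1)
    (hT : MonotoneAlphaNonexpansive P P T α) :
    (∃ z ∈ P, T z = z) ↔ (∃ M : ℝ, ∀ n : ℕ, ‖T^[n] (0 : E)‖ ≤ M) :=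
  main_thm P hP T hTP α hα hT
end

section
/- Let K be a nonempty closed convex subset of a uniformly convex real Banach space E with a partial order ≤ induced by a closed convex cone P, and let T : K → K be a monotone α-nonexpansive mapping for some α < 1. Assume x₀ ∈ K satisfies x₀ ≤ Tx₀ and the orbit O(x₀) = {Tⁿx₀ : n = 0, 1, 2, ...} is bounded in norm. If the norm is monotonic (‖x‖ ≤ ‖y‖ whenever 0 ≤ x ≤ y), then the sequence Tⁿx₀ converges weakly to a fixed point z of T with x₀ ≤ z. -/
open Filter Topology

/-- If `x₀ ≤ T x₀`, the orbit of `x₀` is norm-bounded and the norm is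
monotonic, then the Picard iterates converge weakly to a fixed point `z ≥ x₀`. -/
theorem picard_weak_convergence_increasing
    {E : Type*} [NormedAddCommGroup E] [NormedSpace ℝ E]
    [UniformConvexSpace E] [CompleteSpace E]
    (P : Set E) (hP : IsClosedConvexCone P)
    (K : Set E) (hKne : K.Nonempty) (hKcl : IsClosed K) (hKco : Convex ℝ K)
    (T : E → E) (hTK : ∀ x ∈ K, T x ∈ K)
    (α : ℝ) (hα : α < 1)
    (hT : MonotoneAlphaNonexpansive P K T α)
    (x₀ : E) (hx₀ : x₀ ∈ K) (hinc : T x₀ - x₀ ∈ P)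
    (hbdd : ∃ M : ℝ, ∀ n : ℕ, ‖T^[n] x₀‖ ≤ M)
    (hnorm : ∀ x y : E, x ∈ P → y - x ∈ P → ‖x‖ ≤ ‖y‖) :
    ∃ z ∈ K, T z = z ∧ z - x₀ ∈ P ∧ WeakConv (fun n => T^[n] x₀) z := by
  obtain ⟨hPne, hPcl, hPne0, hPpt, hPco⟩ := hP
  obtain ⟨M, hM⟩ := hbdd
  have hadd : ∀ x ∈ P, ∀ y ∈ P, x + y ∈ P := fun x hx y hy => by
    simpa using hPco x hx y hy 1 1 zero_le_one zero_le_one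
  have hscale : ∀ x ∈ P, ∀ c : ℝ, 0 ≤ c → c • x ∈ P := fun x hx c hc => by
    simpa using hPco x hx x hx c 0 hc le_rfl
  have h0P : (0 : E) ∈ P := by
    have h : (0 : E) ∈ P ∩ (-P) := by rw [hPpt]; exact Set.mem_singleton 0
    exact h.1
  set x : ℕ → E := fun n => T^[n] x₀ with hxdef
  have hx0 : x 0 = x₀ := rfl
  have hsucc : ∀ n, x (n + 1) = T (x n) := fun n => Function.iterate_succ_apply' T n x₀
  have hxK : ∀ n, x n ∈ K := by
    intro n; induction n with
    | zero => exact hx₀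
    | succ n ih => rw [hsucc]; exact hTK _ ih
  have hstep : ∀ n, x (n + 1) - x n ∈ P := by
    intro n; induction n with
    | zero => exact hinc
    | succ n ih =>
        have h2 := hT.1 _ (hxK n) _ (hxK (n + 1)) ih
        rwa [← hsucc n, ← hsucc (n + 1)] at h2
  have hmono : ∀ m n, m ≤ n → x n - x m ∈ P := by
    intro m n h
    induction n, h using Nat.le_induction with
    | base => simpa using h0P
    | succ n hmn ih =>
        have h2 := hadd _ (hstep n) _ ih
        simpa [sub_add_sub_cancel] using h2
  set a : ℕ → ℝ := fun n => ‖x n - x₀‖ with hadef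
  have hamono : Monotone a := by
    intro m n h
    refine hnorm _ _ (by simpa [hx0] using hmono 0 m (Nat.zero_le m)) ?_
    have h2 := hmono m n h
    simpa [sub_sub_sub_cancel_right] using h2
  have habdd : BddAbove (Set.range a) := by
    refine ⟨M + ‖x₀‖, ?_⟩
    rintro _ ⟨n, rfl⟩
    exact (norm_sub_le _ _).trans (add_le_add_left (hM n) _)
  set r : ℝ := ⨆ n, a n with hrdef
  have haler : ∀ n, a n ≤ r := fun n => le_ciSup habdd n
  -- the sequence is Cauchy, by uniform convexity
  have key : ∀ ε > (0 : ℝ), ∃ N, ∀ m n, N ≤ n → n ≤ m → ‖x m - x n‖ < ε := by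
    intro ε hε
    obtain ⟨δ, hδ, hball⟩ := exists_forall_closed_ball_dist_add_le_two_mul_sub E hε r
    have hlt : r - δ / 2 < ⨆ n, a n := by rw [← hrdef]; linarith
    obtain ⟨N, hN⟩ := exists_lt_of_lt_ciSup hlt
    refine ⟨N, fun m n hNn hnm => ?_⟩
    by_contra hcon
    push_neg at hcon
    have hum : ‖x m - x₀‖ ≤ r := haler m
    have hun : ‖x n - x₀‖ ≤ r := haler n
    have hdist : ε ≤ ‖(x m - x₀) - (x n - x₀)‖ := by
      rwa [sub_sub_sub_cancel_right]
    have hsum := hball hum hun hdist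
    -- midpoint dominates x n - x₀ in the order
    have hmid : ((1 : ℝ) / 2) • ((x m - x₀) + (x n - x₀)) - (x n - x₀) ∈ P := by
      have h2 : ((1 : ℝ) / 2) • (x m - x n) ∈ P :=
        hscale _ (hmono n m hnm) _ (by norm_num)
      have heq : ((1 : ℝ) / 2) • ((x m - x₀) + (x n - x₀)) - (x n - x₀)
          = ((1 : ℝ) / 2) • (x m - x n) := by
        rw [smul_sub, smul_add]
        module
      rwa [heq]
    have hle : a n ≤ ‖((1 : ℝ) / 2) • ((x m - x₀) + (x n - x₀))‖ :=
      hnorm _ _ (by simpa [hx0] using hmono 0 n (Nat.zero_le n)) hmid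
    have hnorm2 : ‖((1 : ℝ) / 2) • ((x m - x₀) + (x n - x₀))‖ ≤ r - δ / 2 := by
      rw [norm_smul]
      have h12 : ‖(1 : ℝ) / 2‖ = 1 / 2 := by norm_num
      rw [h12]
      linarith
    have : r - δ / 2 < a n := hN.trans_le (hamono hNn)
    linarith
  have hcauchy : CauchySeq x := by
    rw [Metric.cauchySeq_iff]
    intro ε hε
    obtain ⟨N, hN⟩ := key ε hε
    refine ⟨N, fun m hm n hn => ?_⟩
    rcases le_total n m with h | h
    · rw [dist_eq_norm]; exact hN m n hn h
    · rw [dist_eq_norm, norm_sub_rev]; exact hN n m hm h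
  obtain ⟨z, hz⟩ := cauchySeq_tendsto_of_complete hcauchy
  have hzK : z ∈ K := hKcl.mem_of_tendsto hz (Eventually.of_forall hxK)
  have hzgen : ∀ n, z - x n ∈ P := by
    intro n
    have htend : Tendsto (fun m => x m - x n) atTop (𝓝 (z - x n)) :=
      hz.sub_const (x n)
    refine hPcl.mem_of_tendsto htend ?_
    filter_upwards [eventually_ge_atTop n] with m hm using hmono n m hm
  -- z is a fixed point
  have hfix : T z = z := by
    have hineq : ∀ n, ‖x (n + 1) - T z‖ ^ 2 ≤ α * ‖x (n + 1) - z‖ ^ 2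
        + α * ‖T z - x n‖ ^ 2 + (1 - 2 * α) * ‖x n - z‖ ^ 2 := by
      intro n
      have h2 := hT.2 (x n) (hxK n) z hzK (hzgen n)
      rwa [← hsucc n] at h2
    have hL1 : Tendsto (fun n => ‖x (n + 1) - T z‖ ^ 2) atTop (𝓝 (‖z - T z‖ ^ 2)) := by
      have : Tendsto (fun n => x (n + 1)) atTop (𝓝 z) := hz.comp (tendsto_add_atTop_nat 1)
      exact ((this.sub_const (T z)).norm.pow 2)
    have hL2 : Tendsto (fun n => α * ‖x (n + 1) - z‖ ^ 2 + α * ‖T z - x n‖ ^ 2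
        + (1 - 2 * α) * ‖x n - z‖ ^ 2) atTop
        (𝓝 (α * 0 + α * ‖T z - z‖ ^ 2 + (1 - 2 * α) * 0)) := by
      have h1 : Tendsto (fun n => x (n + 1)) atTop (𝓝 z) := hz.comp (tendsto_add_atTop_nat 1)
      have t1 : Tendsto (fun n => ‖x (n + 1) - z‖ ^ 2) atTop (𝓝 0) := by
        have := ((h1.sub_const z).norm.pow 2)
        simpa using this
      have t2 : Tendsto (fun n => ‖T z - x n‖ ^ 2) atTop (𝓝 (‖T z - z‖ ^ 2)) :=
        ((tendsto_const_nhds.sub hz).norm.pow 2)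
      have t3 : Tendsto (fun n => ‖x n - z‖ ^ 2) atTop (𝓝 0) := by
        have := ((hz.sub_const z).norm.pow 2)
        simpa using this
      exact ((t1.const_mul α).add (t2.const_mul α)).add (t3.const_mul (1 - 2 * α))
    have hlim : ‖z - T z‖ ^ 2 ≤ α * 0 + α * ‖T z - z‖ ^ 2 + (1 - 2 * α) * 0 :=
      le_of_tendsto_of_tendsto' hL1 hL2 hineq
    rw [norm_sub_rev] at hlim
    have : (1 - α) * ‖T z - z‖ ^ 2 ≤ 0 := by linarith
    have h0 : ‖T z - z‖ ^ 2 ≤ 0 := by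
      nlinarith [sq_nonneg ‖T z - z‖]
    have : ‖T z - z‖ = 0 := by
      nlinarith [norm_nonneg (T z - z)]
    rwa [norm_sub_eq_zero_iff] at this
  refine ⟨z, hzK, hfix, by simpa [hx0] using hzgen 0, ?_⟩
  intro f
  exact (f.continuous.tendsto z).comp hz
end

section
/- Let K be a nonempty closed convex subset of a uniformly convex real Banach space E with a partial order ≤ induced by a closed convex cone P, and let T : K → K be a monotone α-nonexpansive mapping for some α < 1. Assume x₀ ∈ K satisfies Tx₀ ≤ x₀ and the orbit O(x₀) = {Tⁿx₀ : n = 0, 1, 2, ...} is bounded in norm. If the norm is monotonic (‖x‖ ≤ ‖y‖ whenever 0 ≤ x ≤ y), then the sequence Tⁿx₀ converges weakly to a fixed point z of T with z ≤ x₀. -/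
open Filter Topology

lemma cone_add {E : Type*} [NormedAddCommGroup E] [NormedSpace ℝ E]
    {P : Set E} (hP : IsClosedConvexCone P) {p q : E} (hp : p ∈ P) (hq : q ∈ P) :
    p + q ∈ P := by
  have := hP.2.2.2.2 p hp q hq 1 1 zero_le_one zero_le_one
  simpa using this

lemma mono_cauchy {E : Type*} [NormedAddCommGroup E] [NormedSpace ℝ E]
    [UniformConvexSpace E]
    {P : Set E} (hP : IsClosedConvexCone P)
    (hnorm : ∀ x y : E, x ∈ P → y - x ∈ P → ‖x‖ ≤ ‖y‖)
    (y : ℕ → E) (hyP : ∀ n, y n ∈ P) (hmono : ∀ n m, n ≤ m → y m - y n ∈ P)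
    (M : ℝ) (hbd : ∀ n, ‖y n‖ ≤ M) : CauchySeq y := by
  set a : ℕ → ℝ := fun n => ‖y n‖ with ha
  have ha_mono : Monotone a := fun n m h => hnorm _ _ (hyP n) (hmono n m h)
  have hbdd : BddAbove (Set.range a) := ⟨M, by rintro _ ⟨n, rfl⟩; exact hbd n⟩
  set L : ℝ := ⨆ n, a n with hL
  have h_tend : Tendsto a atTop (𝓝 L) := tendsto_atTop_ciSup ha_mono hbdd
  have a_le : ∀ n, a n ≤ L := fun n => le_ciSup hbdd n
  rcases le_or_gt L 0 with hL0 | hL0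
  · -- all y n = 0
    have hy0 : ∀ n, y n = 0 := fun n =>
      norm_le_zero_iff.mp ((a_le n).trans hL0)
    rw [Metric.cauchySeq_iff]
    intro ε hε
    exact ⟨0, fun m _ n _ => by simp [hy0, dist_eq_norm, hε]⟩
  · rw [Metric.cauchySeq_iff]
    intro ε hε
    obtain ⟨δ, hδ, hconv⟩ :=
      exists_forall_closed_ball_dist_add_le_two_sub E (div_pos hε hL0)
    have hNlt : L - δ * L / 2 < L := by nlinarith
    obtain ⟨N, hN⟩ := (h_tend.eventually (eventually_gt_nhds hNlt)).exists
    refine ⟨N, fun m hm n hn => ?_⟩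
    by_contra hc
    push_neg at hc
    rw [dist_eq_norm] at hc
    have hLinv : (0:ℝ) < L⁻¹ := inv_pos.mpr hL0
    have hu : ‖L⁻¹ • y m‖ ≤ 1 := by
      rw [norm_smul, Real.norm_eq_abs, abs_of_pos hLinv]
      calc L⁻¹ * a m ≤ L⁻¹ * L := by
            exact mul_le_mul_of_nonneg_left (a_le m) hLinv.le
        _ = 1 := inv_mul_cancel₀ hL0.ne'
    have hv : ‖L⁻¹ • y n‖ ≤ 1 := by
      rw [norm_smul, Real.norm_eq_abs, abs_of_pos hLinv]
      calc L⁻¹ * a n ≤ L⁻¹ * L := by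
            exact mul_le_mul_of_nonneg_left (a_le n) hLinv.le
        _ = 1 := inv_mul_cancel₀ hL0.ne'
    have hsub : ε / L ≤ ‖L⁻¹ • y m - L⁻¹ • y n‖ := by
      rw [← smul_sub, norm_smul, Real.norm_eq_abs, abs_of_pos hLinv,
        div_eq_inv_mul]
      exact mul_le_mul_of_nonneg_left hc hLinv.le
    have hsum := hconv hu hv hsub
    rw [← smul_add, norm_smul, Real.norm_eq_abs, abs_of_pos hLinv] at hsum
    have hsum' : ‖y m + y n‖ ≤ (2 - δ) * L := by
      have := mul_le_mul_of_nonneg_left hsum hL0.le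
      rwa [← mul_assoc, mul_inv_cancel₀ hL0.ne', one_mul, mul_comm] at this
    -- lower bound
    set k := min m n with hk
    have h2yk : (2:ℝ) • y k ∈ P := by
      have := hP.2.2.2.2 (y k) (hyP k) (y k) (hyP k) 2 0 (by norm_num) le_rfl
      simpa using this
    have hdiff : (y m + y n) - (2:ℝ) • y k ∈ P := by
      have h1 : y m - y k ∈ P := hmono k m (min_le_left _ _)
      have h2 : y n - y k ∈ P := hmono k n (min_le_right _ _)
      have := cone_add hP h1 h2
      convert this using 1
      rw [two_smul]
      abel
    have hlow : ‖(2:ℝ) • y k‖ ≤ ‖y m + y n‖ := hnorm _ _ h2yk hdiff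
    rw [norm_smul] at hlow
    have hak : a N ≤ a k := ha_mono (le_min hm hn)
    have : ‖(2:ℝ)‖ = 2 := by norm_num
    rw [this] at hlow
    have : 2 * a k ≤ (2 - δ) * L := hlow.trans hsum'
    nlinarith [hN, hak]


/-- If `T x₀ ≤ x₀`, the orbit of `x₀` is norm-bounded and the norm is
monotonic, then the Picard iterates converge weakly to a fixed point `z ≤ x₀`. -/
theorem picard_weak_convergence_decreasing
    {E : Type*} [NormedAddCommGroup E] [NormedSpace ℝ E]
    [UniformConvexSpace E] [CompleteSpace E]
    (P : Set E) (hP : IsClosedConvexCone P)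
    (K : Set E) (hKne : K.Nonempty) (hKcl : IsClosed K) (hKco : Convex ℝ K)
    (T : E → E) (hTK : ∀ x ∈ K, T x ∈ K)
    (α : ℝ) (hα : α < 1)
    (hT : MonotoneAlphaNonexpansive P K T α)
    (x₀ : E) (hx₀ : x₀ ∈ K) (hdec : x₀ - T x₀ ∈ P)
    (hbdd : ∃ M : ℝ, ∀ n : ℕ, ‖T^[n] x₀‖ ≤ M)
    (hnorm : ∀ x y : E, x ∈ P → y - x ∈ P → ‖x‖ ≤ ‖y‖) :
    ∃ z ∈ K, T z = z ∧ x₀ - z ∈ P ∧ WeakConv (fun n => T^[n] x₀) z := by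
  obtain ⟨M, hM⟩ := hbdd
  set x : ℕ → E := fun n => T^[n] x₀ with hx
  have hxK : ∀ n, x n ∈ K := by
    intro n
    induction n with
    | zero => simpa [x] using hx₀
    | succ n ih =>
      have : x (n+1) = T (x n) := Function.iterate_succ_apply' T n x₀
      rw [this]; exact hTK _ ih
  have hstep : ∀ n, x n - x (n+1) ∈ P := by
    intro n
    induction n with
    | zero => simpa [x] using hdec
    | succ n ih =>
      have h1 : x (n+1) = T (x n) := Function.iterate_succ_apply' T n x₀
      have h2 : x (n+2) = T (x (n+1)) := Function.iterate_succ_apply' T (n+1) x₀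
      rw [h1, h2]
      exact hT.1 (x (n+1)) (hxK (n+1)) (x n) (hxK n) ih
  have hchain : ∀ n m, n ≤ m → x n - x m ∈ P := by
    intro n m h
    obtain ⟨k, rfl⟩ := Nat.exists_eq_add_of_le h
    clear h
    induction k with
    | zero =>
      have := hP.2.2.2.2 (x₀ - T x₀) hdec (x₀ - T x₀) hdec 0 0 le_rfl le_rfl
      simpa using this
    | succ k ih =>
      have := cone_add hP ih (hstep (n + k))
      convert this using 1
      abel_nf
  set y : ℕ → E := fun n => x₀ - x n with hy
  have hyP : ∀ n, y n ∈ P := fun n => hchain 0 n (Nat.zero_le n)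
  have hymono : ∀ n m, n ≤ m → y m - y n ∈ P := by
    intro n m h
    have he : y m - y n = x n - x m := by simp only [hy]; abel
    rw [he]; exact hchain n m h
  have hybd : ∀ n, ‖y n‖ ≤ ‖x₀‖ + M := by
    intro n
    have he : y n = x₀ - x n := by rw [hy]
    rw [he]
    exact (norm_sub_le _ _).trans (by linarith [hM n])
  have hycauchy := mono_cauchy hP hnorm y hyP hymono _ hybd
  obtain ⟨w, hw⟩ := cauchySeq_tendsto_of_complete hycauchy
  set z := x₀ - w with hzdef
  have hz : Tendsto x atTop (𝓝 z) := by
    have hxe : x = fun n => x₀ - y n := by funext n; show x n = x₀ - (x₀ - x n); abel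
    rw [hxe]
    exact tendsto_const_nhds.sub hw
  have hzK : z ∈ K := hKcl.mem_of_tendsto hz (Eventually.of_forall hxK)
  have hxnz : ∀ n, x n - z ∈ P := by
    intro n
    have htend : Tendsto (fun m => x n - x m) atTop (𝓝 (x n - z)) :=
      tendsto_const_nhds.sub hz
    exact hP.2.1.mem_of_tendsto htend
      (eventually_atTop.mpr ⟨n, fun m hm => hchain n m hm⟩)
  have hx₀z : x₀ - z ∈ P := hxnz 0
  -- fixed point
  have hTz : T z = z := by
    have hineq : ∀ n, ‖T z - x (n+1)‖ ^ 2 ≤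
        α * ‖T z - x n‖ ^ 2 + α * ‖x (n+1) - z‖ ^ 2 + (1 - 2*α) * ‖z - x n‖ ^ 2 := by
      intro n
      have := hT.2 z hzK (x n) (hxK n) (hxnz n)
      rwa [show T (x n) = x (n+1) from (Function.iterate_succ_apply' T n x₀).symm] at this
    have hz1 : Tendsto (fun n => x (n+1)) atTop (𝓝 z) :=
      hz.comp (tendsto_add_atTop_nat 1)
    have hlhs : Tendsto (fun n => ‖T z - x (n+1)‖ ^ 2) atTop (𝓝 (‖T z - z‖ ^ 2)) :=
      ((tendsto_const_nhds.sub hz1).norm.pow 2)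
    have hrhs : Tendsto (fun n =>
        α * ‖T z - x n‖ ^ 2 + α * ‖x (n+1) - z‖ ^ 2 + (1 - 2*α) * ‖z - x n‖ ^ 2)
        atTop (𝓝 (α * ‖T z - z‖ ^ 2 + α * ‖z - z‖ ^ 2 + (1 - 2*α) * ‖z - z‖ ^ 2)) := by
      exact ((((tendsto_const_nhds.sub hz).norm.pow 2).const_mul α).add
        (((hz1.sub tendsto_const_nhds).norm.pow 2).const_mul α)).add
        (((tendsto_const_nhds.sub hz).norm.pow 2).const_mul (1 - 2*α))
    have hle : ‖T z - z‖ ^ 2 ≤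
        α * ‖T z - z‖ ^ 2 + α * ‖z - z‖ ^ 2 + (1 - 2*α) * ‖z - z‖ ^ 2 :=
      le_of_tendsto_of_tendsto' hlhs hrhs hineq
    simp only [sub_self, norm_zero] at hle
    have h0 : ‖T z - z‖ ^ 2 ≤ 0 := by nlinarith [sq_nonneg (‖T z - z‖)]
    have : ‖T z - z‖ = 0 := by nlinarith [sq_nonneg (‖T z - z‖), norm_nonneg (T z - z)]
    have := norm_eq_zero.mp this
    exact sub_eq_zero.mp this
  exact ⟨z, hzK, hTz, hx₀z, fun f => (f.continuous.tendsto z).comp hz⟩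
end

section
/- Let K be a nonempty closed convex subset of a uniformly convex real Banach space E with a partial order ≤ induced by a closed convex cone P, and let T : K → K be a monotone α-nonexpansive mapping for some α < 1. Assume x₀ ∈ K satisfies 0 ≤ x₀ ≤ Tx₀ and the orbit O(x₀) = {Tⁿx₀ : n = 0, 1, 2, ...} is bounded in norm. If the norm is monotonic (‖x‖ ≤ ‖y‖ whenever 0 ≤ x ≤ y), then the sequence Tⁿx₀ converges strongly (in norm) to a fixed point z of T with x₀ ≤ z. -/
open Filter Topology

/-- If `0 ≤ x₀ ≤ T x₀`, the orbit of `x₀` is norm-bounded and the norm is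
monotonic, then the Picard iterates converge strongly to a fixed point
`z ≥ x₀`. -/
theorem picard_strong_convergence_increasing
    {E : Type*} [NormedAddCommGroup E] [NormedSpace ℝ E]
    [UniformConvexSpace E] [CompleteSpace E]
    (P : Set E) (hP : IsClosedConvexCone P)
    (K : Set E) (hKne : K.Nonempty) (hKcl : IsClosed K) (hKco : Convex ℝ K)
    (T : E → E) (hTK : ∀ x ∈ K, T x ∈ K)
    (α : ℝ) (hα : α < 1)
    (hT : MonotoneAlphaNonexpansive P K T α)
    (x₀ : E) (hx₀ : x₀ ∈ K) (hpos : x₀ ∈ P) (hinc : T x₀ - x₀ ∈ P)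
    (hbdd : ∃ M : ℝ, ∀ n : ℕ, ‖T^[n] x₀‖ ≤ M)
    (hnorm : ∀ x y : E, x ∈ P → y - x ∈ P → ‖x‖ ≤ ‖y‖) :
    ∃ z ∈ K, T z = z ∧ z - x₀ ∈ P ∧
      Tendsto (fun n => T^[n] x₀) atTop (𝓝 z) := by
  obtain ⟨Pne, Pcl, -, -, Pcone⟩ := hP
  obtain ⟨w, hw⟩ := Pne
  have Pzero : (0 : E) ∈ P := by
    simpa using Pcone w hw w hw 0 0 le_rfl le_rfl
  have Padd : ∀ x ∈ P, ∀ y ∈ P, x + y ∈ P := by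
    intro x hx y hy
    simpa using Pcone x hx y hy 1 1 zero_le_one zero_le_one
  set s : ℕ → E := fun n => T^[n] x₀ with hs
  have hsK : ∀ n, s n ∈ K := by
    intro n; induction n with
    | zero => exact hx₀
    | succ n ih =>
      show T^[n + 1] x₀ ∈ K
      rw [Function.iterate_succ_apply']; exact hTK _ ih
  have hsucc : ∀ n, s (n + 1) = T (s n) := by
    intro n; exact Function.iterate_succ_apply' T n x₀
  have hstep : ∀ n, s (n + 1) - s n ∈ P := by
    intro n; induction n with
    | zero => simpa [hsucc, hs] using hinc
    | succ n ih =>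
      have := hT.1 (s n) (hsK n) (s (n + 1)) (hsK (n + 1)) ih
      simpa [hsucc] using this
  have hchain : ∀ n m, n ≤ m → s m - s n ∈ P := by
    intro n m h
    induction m with
    | zero =>
      have : n = 0 := Nat.le_zero.mp h
      subst this; simpa using Pzero
    | succ m ih =>
      rcases Nat.lt_or_ge n (m + 1) with h' | h'
      · have h1 := ih (Nat.lt_succ_iff.mp h')
        have := Padd _ (hstep m) _ h1
        simpa [sub_add_sub_cancel] using this
      · have : n = m + 1 := le_antisymm h h'
        subst this; simpa using Pzero
  have hsP : ∀ n, s n ∈ P := by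
    intro n
    have := Padd _ hpos _ (hchain 0 n (Nat.zero_le n))
    simpa [hs] using this
  have hmono : Monotone fun n => ‖s n‖ := by
    intro n m h
    exact hnorm (s n) (s m) (hsP n) (hchain n m h)
  obtain ⟨M, hM⟩ := hbdd
  have hbdd' : BddAbove (Set.range fun n => ‖s n‖) := by
    refine ⟨M, ?_⟩; rintro x ⟨n, rfl⟩; exact hM n
  set L : ℝ := ⨆ n, ‖s n‖ with hL
  have hLlim : Tendsto (fun n => ‖s n‖) atTop (𝓝 L) :=
    tendsto_atTop_ciSup hmono hbdd'
  have hle : ∀ n, ‖s n‖ ≤ L := fun n => le_ciSup hbdd' n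
  -- Cauchy via uniform convexity
  have hcauchy : CauchySeq s := by
    rw [Metric.cauchySeq_iff]
    intro ε hε
    obtain ⟨δ, hδ, hconv⟩ :=
      exists_forall_closed_ball_dist_add_le_two_mul_sub (E := E) hε L
    obtain ⟨N, hN⟩ := (hLlim.eventually (eventually_gt_nhds (by linarith : L - δ / 2 < L))).exists
    refine ⟨N, fun m hm n hn => ?_⟩
    have key : ∀ a b : ℕ, N ≤ a → a ≤ b → ‖s b - s a‖ < ε := by
      intro a b ha hab
      by_contra hcon
      push_neg at hcon
      have hε' : ε ≤ ‖s a - s b‖ := by rwa [norm_sub_rev]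
      have h2 : ‖s a + s b‖ ≤ 2 * L - δ := hconv (hle a) (hle b) hε'
      have h3 : ‖s a‖ ≤ ‖(2⁻¹ : ℝ) • (s a + s b)‖ := by
        refine hnorm _ _ (hsP a) ?_
        have heq : (2⁻¹ : ℝ) • (s a + s b) - s a
            = (2⁻¹ : ℝ) • (s b - s a) + (0 : ℝ) • (s b - s a) := by
          module
        rw [heq]
        exact Pcone _ (hchain a b hab) _ (hchain a b hab) _ _ (by norm_num) le_rfl
      have h4 : ‖(2⁻¹ : ℝ) • (s a + s b)‖ = 2⁻¹ * ‖s a + s b‖ := by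
        rw [norm_smul]; norm_num
      have h5 : L - δ / 2 < ‖s a‖ := lt_of_lt_of_le hN (hmono ha)
      rw [h4] at h3
      linarith
    rcases le_total n m with h | h
    · rw [dist_eq_norm]
      exact key n m hn h
    · rw [dist_eq_norm, norm_sub_rev]
      exact key m n hm h
  obtain ⟨z, hz⟩ := cauchySeq_tendsto_of_complete hcauchy
  have hzK : z ∈ K := hKcl.mem_of_tendsto hz (Eventually.of_forall hsK)
  have hzP : ∀ n, z - s n ∈ P := by
    intro n
    have : Tendsto (fun m => s m - s n) atTop (𝓝 (z - s n)) := hz.sub tendsto_const_nhds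
    refine Pcl.mem_of_tendsto this ?_
    filter_upwards [eventually_ge_atTop n] with m hm using hchain n m hm
  have hTz : Tendsto (fun n => T (s n)) atTop (𝓝 z) := by
    have : Tendsto (fun n => s (n + 1)) atTop (𝓝 z) := hz.comp (tendsto_add_atTop_nat 1)
    simpa [hsucc] using this
  have hfix : T z = z := by
    have hineq : ∀ n, ‖T (s n) - T z‖ ^ 2 ≤ α * ‖T (s n) - z‖ ^ 2
        + α * ‖T z - s n‖ ^ 2 + (1 - 2 * α) * ‖s n - z‖ ^ 2 :=
      fun n => hT.2 (s n) (hsK n) z hzK (hzP n)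
    have hl : Tendsto (fun n => ‖T (s n) - T z‖ ^ 2) atTop (𝓝 (‖z - T z‖ ^ 2)) :=
      ((hTz.sub tendsto_const_nhds).norm.pow 2)
    have hr : Tendsto (fun n => α * ‖T (s n) - z‖ ^ 2 + α * ‖T z - s n‖ ^ 2
        + (1 - 2 * α) * ‖s n - z‖ ^ 2) atTop
        (𝓝 (α * ‖z - z‖ ^ 2 + α * ‖T z - z‖ ^ 2 + (1 - 2 * α) * ‖z - z‖ ^ 2)) := by
      refine Tendsto.add (Tendsto.add ?_ ?_) ?_
      · exact (((hTz.sub tendsto_const_nhds).norm.pow 2).const_mul α)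
      · exact (((tendsto_const_nhds.sub hz).norm.pow 2).const_mul α)
      · exact (((hz.sub tendsto_const_nhds).norm.pow 2).const_mul _)
    have hlim_le : ‖z - T z‖ ^ 2 ≤ α * ‖z - z‖ ^ 2 + α * ‖T z - z‖ ^ 2
        + (1 - 2 * α) * ‖z - z‖ ^ 2 :=
      le_of_tendsto_of_tendsto' hl hr hineq
    have : ‖z - T z‖ ^ 2 ≤ α * ‖z - T z‖ ^ 2 := by
      rw [norm_sub_rev (T z)] at hlim_le
      simpa using hlim_le
    have h0 : ‖z - T z‖ ^ 2 ≤ 0 := by nlinarith [sq_nonneg ‖z - T z‖]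
    have : ‖z - T z‖ = 0 := by
      nlinarith [norm_nonneg (z - T z)]
    rw [norm_eq_zero, sub_eq_zero] at this
    exact this.symm
  exact ⟨z, hzK, hfix, by simpa [hs] using hzP 0, hz⟩
end

section
/- Let K be a nonempty closed convex subset of a uniformly convex real Banach space E with a partial order ≤ induced by a closed convex cone P, and let T : K → K be a monotone α-nonexpansive mapping for some α < 1. Assume x₀ ∈ K satisfies Tx₀ ≤ x₀ ≤ 0 and the orbit O(x₀) = {Tⁿx₀ : n = 0, 1, 2, ...} is bounded in norm. If the norm is monotonic (‖x‖ ≤ ‖y‖ whenever 0 ≤ x ≤ y), then the sequence Tⁿx₀ converges strongly (in norm) to a fixed point z of T with z ≤ x₀. -/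
open Filter Topology

/-- If `T x₀ ≤ x₀ ≤ 0`, the orbit of `x₀` is norm-bounded and the norm is
monotonic, then the Picard iterates converge strongly to a fixed point
`z ≤ x₀`. -/
theorem picard_strong_convergence_decreasing
    {E : Type*} [NormedAddCommGroup E] [NormedSpace ℝ E]
    [UniformConvexSpace E] [CompleteSpace E]
    (P : Set E) (hP : IsClosedConvexCone P)
    (K : Set E) (hKne : K.Nonempty) (hKcl : IsClosed K) (hKco : Convex ℝ K)
    (T : E → E) (hTK : ∀ x ∈ K, T x ∈ K)
    (α : ℝ) (hα : α < 1)
    (hT : MonotoneAlphaNonexpansive P K T α)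
    (x₀ : E) (hx₀ : x₀ ∈ K) (hneg : -x₀ ∈ P) (hdec : x₀ - T x₀ ∈ P)
    (hbdd : ∃ M : ℝ, ∀ n : ℕ, ‖T^[n] x₀‖ ≤ M)
    (hnorm : ∀ x y : E, x ∈ P → y - x ∈ P → ‖x‖ ≤ ‖y‖) :
    ∃ z ∈ K, T z = z ∧ x₀ - z ∈ P ∧
      Tendsto (fun n => T^[n] x₀) atTop (𝓝 z) := by
  obtain ⟨-, hPcl, -, -, hPcone⟩ := hP
  obtain ⟨hTmono, hTne⟩ := hT
  set x : ℕ → E := fun n => T^[n] x₀ with hx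
  have hadd : ∀ u ∈ P, ∀ v ∈ P, u + v ∈ P := by
    intro u hu v hv
    simpa using hPcone u hu v hv 1 1 zero_le_one zero_le_one
  have hhalf : ∀ u ∈ P, (1/2 : ℝ) • u ∈ P := by
    intro u hu
    simpa using hPcone u hu u hu (1/2) 0 (by norm_num) le_rfl
  have hxK : ∀ n, x n ∈ K := by
    intro n; induction n with
    | zero => exact hx₀
    | succ n ih =>
      show T^[n+1] x₀ ∈ K
      rw [Function.iterate_succ_apply']
      exact hTK _ ih
  have hxdec : ∀ n, x n - x (n + 1) ∈ P := by
    intro n; induction n with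
    | zero => simpa [hx] using hdec
    | succ n ih =>
      have := hTmono (x (n+1)) (hxK _) (x n) (hxK _) ih
      simpa [hx, Function.iterate_succ_apply'] using this
  have hchain : ∀ n m, n ≤ m → x n - x m ∈ P := by
    intro n m hnm
    induction m with
    | zero => simp at hnm; subst hnm; simpa using hPcone _ hneg _ hneg 0 0 le_rfl le_rfl
    | succ m ih =>
      rcases Nat.lt_or_ge n (m+1) with h | h
      · have h' : n ≤ m := Nat.lt_succ_iff.mp h
        have := hadd _ (ih h') _ (hxdec m)
        simpa [sub_add_sub_cancel] using this
      · have : n = m + 1 := le_antisymm hnm h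
        subst this
        simpa using hPcone _ hneg _ hneg 0 0 le_rfl le_rfl
  have hxneg : ∀ n, -x n ∈ P := by
    intro n
    have h := hadd _ (hchain 0 n (Nat.zero_le n)) _ hneg
    have e : x 0 - x n + -x₀ = -x n := by simp [hx]; abel
    rwa [e] at h
  -- norms are nondecreasing
  have hmono : Monotone (fun n => ‖x n‖) := by
    apply monotone_nat_of_le_succ
    intro n
    have h1 : -x (n+1) - -x n ∈ P := by
      have := hxdec n; simpa [sub_eq_add_neg, add_comm] using this
    have := hnorm _ _ (hxneg n) h1
    simpa using this
  obtain ⟨M, hM⟩ := hbdd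
  have hbdd' : BddAbove (Set.range fun n => ‖x n‖) := by
    refine ⟨M, ?_⟩; rintro r ⟨n, rfl⟩; exact hM n
  set r : ℝ := ⨆ n, ‖x n‖ with hr
  have hrt : Tendsto (fun n => ‖x n‖) atTop (𝓝 r) := tendsto_atTop_ciSup hmono hbdd'
  have hler : ∀ n, ‖x n‖ ≤ r := fun n => le_ciSup hbdd' n
  have hr0 : 0 ≤ r := le_trans (norm_nonneg _) (hler 0)
  -- Cauchy
  have hcauchy : CauchySeq x := by
    rcases eq_or_lt_of_le hr0 with h0 | hrpos
    · have hz : ∀ n, x n = 0 := by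
        intro n
        have : ‖x n‖ ≤ 0 := by rw [h0]; exact hler n
        simpa using le_antisymm this (norm_nonneg _)
      apply cauchySeq_of_le_tendsto_0 (fun _ => (0:ℝ))
      · intro n m N _ _; simp [hz]
      · exact tendsto_const_nhds
    · rw [Metric.cauchySeq_iff']
      intro ε hε
      obtain ⟨δ, hδ, hUC⟩ := exists_forall_closed_ball_dist_add_le_two_sub E
        (div_pos hε hrpos)
      have hlt : r - r * δ / 2 < r := by nlinarith
      obtain ⟨N, hN⟩ := (hrt.eventually (eventually_gt_nhds hlt)).exists
      refine ⟨N, fun n hn => ?_⟩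
      by_contra hcon
      push_neg at hcon
      rw [dist_eq_norm] at hcon
      -- scale into the unit ball
      have hxr : ‖(r⁻¹ : ℝ) • x n‖ ≤ 1 := by
        rw [norm_smul, norm_inv, Real.norm_of_nonneg hr0]
        · rw [inv_mul_le_iff₀ hrpos]; simpa using hler n
      have hyr : ‖(r⁻¹ : ℝ) • x N‖ ≤ 1 := by
        rw [norm_smul, norm_inv, Real.norm_of_nonneg hr0]
        rw [inv_mul_le_iff₀ hrpos]; simpa using hler N
      have hdiff : ε / r ≤ ‖(r⁻¹ : ℝ) • x n - (r⁻¹ : ℝ) • x N‖ := by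
        rw [← smul_sub, norm_smul, norm_inv, Real.norm_of_nonneg hr0]
        rw [div_le_iff₀ hrpos, mul_comm, ← mul_assoc, mul_inv_cancel₀ hrpos.ne', one_mul]
        exact hcon
      have hsum := hUC hxr hyr hdiff
      rw [← smul_add, norm_smul, norm_inv, Real.norm_of_nonneg hr0] at hsum
      have hsum' : ‖x n + x N‖ ≤ r * (2 - δ) := by
        rw [inv_mul_le_iff₀ hrpos] at hsum
        linarith [hsum]
      -- the midpoint
      have hmidlow : ‖x N‖ ≤ ‖(1/2 : ℝ) • (x n + x N)‖ := by
        have h2 : -((1/2 : ℝ) • (x n + x N)) - -x N ∈ P := by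
          have h3 : -((1/2 : ℝ) • (x n + x N)) - -x N = (1/2:ℝ) • (x N - x n) := by module
          rw [h3]; exact hhalf _ (hchain N n hn)
        have h4 := hnorm _ _ (hxneg N) h2
        rwa [norm_neg, norm_neg] at h4
      have hmidhigh : ‖(1/2 : ℝ) • (x n + x N)‖ ≤ r - r * δ / 2 := by
        rw [norm_smul]
        have : ‖(1/2 : ℝ)‖ = 1/2 := by norm_num
        rw [this]
        nlinarith [hsum']
      have := hN
      have hNn : r - r * δ / 2 < ‖x N‖ := hN
      linarith
  obtain ⟨z, hz⟩ := cauchySeq_tendsto_of_complete hcauchy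
  have hzK : z ∈ K := hKcl.mem_of_tendsto hz (Eventually.of_forall hxK)
  have hzP : ∀ n, x n - z ∈ P := by
    intro n
    have ht : Tendsto (fun m => x n - x m) atTop (𝓝 (x n - z)) :=
      tendsto_const_nhds.sub hz
    refine hPcl.mem_of_tendsto ht ?_
    filter_upwards [eventually_ge_atTop n] with m hm
    exact hchain n m hm
  -- fixed point
  have hTz : T z = z := by
    have hineq : ∀ n, ‖T z - x (n+1)‖^2 ≤
        α * ‖T z - x n‖ ^ 2 + α * ‖x (n+1) - z‖ ^ 2 + (1 - 2 * α) * ‖z - x n‖ ^ 2 := by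
      intro n
      have := hTne z hzK (x n) (hxK n) (hzP n)
      simpa [hx, Function.iterate_succ_apply'] using this
    set L := ‖T z - z‖ with hL
    have hz' : Tendsto (fun n => x (n+1)) atTop (𝓝 z) :=
      hz.comp (tendsto_add_atTop_nat 1)
    have h1 : Tendsto (fun n => ‖T z - x (n+1)‖^2) atTop (𝓝 (L^2)) :=
      ((tendsto_const_nhds.sub hz').norm).pow 2
    have h2 : Tendsto (fun n => α * ‖T z - x n‖ ^ 2 + α * ‖x (n+1) - z‖ ^ 2
        + (1 - 2 * α) * ‖z - x n‖ ^ 2) atTop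
        (𝓝 (α * L^2 + α * ‖(0:E)‖^2 + (1 - 2*α) * ‖(0:E)‖^2)) := by
      refine Tendsto.add (Tendsto.add ?_ ?_) ?_
      · exact (((tendsto_const_nhds.sub hz).norm).pow 2).const_mul α
      · have : Tendsto (fun n => x (n+1) - z) atTop (𝓝 (z - z)) := hz'.sub tendsto_const_nhds
        rw [sub_self] at this
        exact ((this.norm).pow 2).const_mul α
      · have : Tendsto (fun n => z - x n) atTop (𝓝 (z - z)) := tendsto_const_nhds.sub hz
        rw [sub_self] at this
        exact ((this.norm).pow 2).const_mul _
    have hle : L^2 ≤ α * L^2 + α * ‖(0:E)‖^2 + (1 - 2*α) * ‖(0:E)‖^2 :=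
      le_of_tendsto_of_tendsto' h1 h2 hineq
    simp only [norm_zero] at hle
    have hL2 : L ^ 2 ≤ α * L ^ 2 := by nlinarith [hle]
    have hL0 : L = 0 := by
      by_contra h
      have hLnn : 0 ≤ L := norm_nonneg _
      have hLpos : 0 < L := lt_of_le_of_ne hLnn (Ne.symm h)
      nlinarith [mul_pos hLpos hLpos]
    have h5 : T z - z = 0 := by rwa [hL, norm_eq_zero] at hL0
    exact sub_eq_zero.mp h5
  exact ⟨z, hzK, hTz, hzP 0, hz⟩
end
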